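/- arXiv:2003.03900 — 6 statements merged into one kernel-verified Lean document; each statement's English description precedes it below -/
import Mathlib

section
/- Consider d arms, N_w ≥ 1 samples per round, and loss vectors L(t) ∈ [0,1]^d for t = 1,…,T. Initialize w(1) = (1/d,…,1/d) ∈ Δ_d. At each round t, sample J₁,…,J_{N_w} i.i.d. from Categorical(w(t)), set γ_i(t) = (1/N_w)(L_i(t)/w_i(t)) ∑_{k=1}^{N_w} 1{J_k = i}, and update w_i(t+1) = w_i(t) exp(−η γ_i(t)) / ∑_{j=1}^d w_j(t) exp(−η γ_j(t)). Let z = (d−1)/N_w + 1 and η = √(2 log(d)/(z T)). Then for any fixed w* ∈ Δ_d, the expected regret satisfies ∑_{t=1}^T E[γ(t)ᵀ(w(t) − w*)] ≤ √(2 z T log(d)). -/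
open Finset


/-- The weight vectors maintained by EXP3 with `Nw` arm-pulls per round, as a function
of the full sample path `ω` (where `ω t k` is the `k`-th arm sampled in round `t`).
`expWeights d T Nw η L ω t` is the weight vector `w(t+1)` of the algorithm (with
`expWeights … 0` the initial uniform vector `w(1)`); it only depends on the samples of
rounds `< t`. -/
noncomputable def expWeights (d T Nw : ℕ) (η : ℝ) (L : Fin T → Fin d → ℝ)
    (ω : Fin T → Fin Nw → Fin d) : ℕ → Fin d → ℝ
  | 0 => fun _ => 1 / (d : ℝ)
  | t + 1 =>
    if h : t < T then
      fun i =>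
        expWeights d T Nw η L ω t i *
            Real.exp (-η * ((1 / (Nw : ℝ)) * (L ⟨t, h⟩ i / expWeights d T Nw η L ω t i) *
              ∑ k : Fin Nw, if ω ⟨t, h⟩ k = i then (1 : ℝ) else 0)) /
          ∑ j, expWeights d T Nw η L ω t j *
            Real.exp (-η * ((1 / (Nw : ℝ)) * (L ⟨t, h⟩ j / expWeights d T Nw η L ω t j) *
              ∑ k : Fin Nw, if ω ⟨t, h⟩ k = j then (1 : ℝ) else 0))
    else expWeights d T Nw η L ω t

/-- The importance-weighted loss estimate `γ_i(t)` of EXP3 with `Nw` arm-pulls per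
round, computed from the sample path `ω`. -/
noncomputable def exp3Grad (d T Nw : ℕ) (η : ℝ) (L : Fin T → Fin d → ℝ)
    (ω : Fin T → Fin Nw → Fin d) (t : Fin T) (i : Fin d) : ℝ :=
  (1 / (Nw : ℝ)) * (L t i / expWeights d T Nw η L ω (t : ℕ) i) *
    ∑ k : Fin Nw, if ω t k = i then (1 : ℝ) else 0

variable {d T Nw : ℕ} {η : ℝ} {L : Fin T → Fin d → ℝ}


lemma ew_pos (hd : 1 ≤ d) (ω : Fin T → Fin Nw → Fin d) :
    ∀ n i, 0 < expWeights d T Nw η L ω n i := by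
  intro n
  induction n with
  | zero =>
    intro i
    simp only [expWeights]
    positivity
  | succ t ih =>
    intro i
    by_cases h : t < T
    · simp only [expWeights, dif_pos h]
      have hden : 0 < ∑ j, expWeights d T Nw η L ω t j *
          Real.exp (-η * ((1 / (Nw : ℝ)) * (L ⟨t, h⟩ j / expWeights d T Nw η L ω t j) *
            ∑ k : Fin Nw, if ω ⟨t, h⟩ k = j then (1 : ℝ) else 0)) := by
        apply Finset.sum_pos
        · intro j _
          exact mul_pos (ih j) (Real.exp_pos _)
        · exact univ_nonempty_iff.mpr ⟨⟨0, hd⟩⟩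
      exact div_pos (mul_pos (ih i) (Real.exp_pos _)) hden
    · simp only [expWeights, dif_neg h]
      exact ih i

lemma ew_sum (hd : 1 ≤ d) (ω : Fin T → Fin Nw → Fin d) :
    ∀ n, ∑ i, expWeights d T Nw η L ω n i = 1 := by
  intro n
  induction n with
  | zero =>
    simp only [expWeights]
    rw [Finset.sum_const, card_univ, Fintype.card_fin, nsmul_eq_mul]
    field_simp
  | succ t ih =>
    by_cases h : t < T
    · simp only [expWeights, dif_pos h]
      rw [← Finset.sum_div]
      apply div_self
      apply ne_of_gt
      apply Finset.sum_pos
      · intro j _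
        exact mul_pos (ew_pos hd ω t j) (Real.exp_pos _)
      · exact univ_nonempty_iff.mpr ⟨⟨0, hd⟩⟩
    · simp only [expWeights, dif_neg h]; exact ih

lemma ew_le_one (hd : 1 ≤ d) (ω : Fin T → Fin Nw → Fin d) (n : ℕ) (i : Fin d) :
    expWeights d T Nw η L ω n i ≤ 1 := by
  have := ew_sum (η := η) (L := L) hd ω n
  calc expWeights d T Nw η L ω n i
      ≤ ∑ j, expWeights d T Nw η L ω n j :=
        Finset.single_le_sum (f := fun j => expWeights d T Nw η L ω n j)
          (fun j _ => (ew_pos hd ω n j).le) (mem_univ i)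
    _ = 1 := this

lemma ew_congr (ω ω' : Fin T → Fin Nw → Fin d) :
    ∀ n, (∀ s : Fin T, (s : ℕ) < n → ω s = ω' s) →
      expWeights d T Nw η L ω n = expWeights d T Nw η L ω' n := by
  intro n
  induction n with
  | zero => intro _; rfl
  | succ t ih =>
    intro hag
    have h1 : expWeights d T Nw η L ω t = expWeights d T Nw η L ω' t :=
      ih (fun s hs => hag s (Nat.lt_succ_of_lt hs))
    by_cases h : t < T
    · have h2 : ω ⟨t, h⟩ = ω' ⟨t, h⟩ := hag ⟨t, h⟩ (Nat.lt_succ_self t)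
      funext i
      simp only [expWeights, dif_pos h, h1, h2]
    · simp only [expWeights, dif_neg h, h1]

lemma grad_nonneg (hd : 1 ≤ d) (hL : ∀ t i, L t i ∈ Set.Icc (0 : ℝ) 1)
    (ω : Fin T → Fin Nw → Fin d) (t : Fin T) (i : Fin d) :
    0 ≤ exp3Grad d T Nw η L ω t i := by
  unfold exp3Grad
  have h1 : 0 ≤ L t i := (hL t i).1
  have h2 : 0 < expWeights d T Nw η L ω (t : ℕ) i := ew_pos hd ω _ i
  have h3 : (0:ℝ) ≤ ∑ k : Fin Nw, if ω t k = i then (1 : ℝ) else 0 :=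
    Finset.sum_nonneg (fun k _ => by positivity)
  positivity


lemma exp_quad {x : ℝ} (hx : 0 ≤ x) : Real.exp (-x) ≤ 1 - x + x ^ 2 / 2 := by
  have hder : ∀ y : ℝ, HasDerivAt (fun y : ℝ => (1 - y + y ^ 2 / 2) * Real.exp y)
      ((-1 + y) * Real.exp y + (1 - y + y ^ 2 / 2) * Real.exp y) y := by
    intro y
    have h1 : HasDerivAt (fun y : ℝ => 1 - y + y ^ 2 / 2) (-1 + y) y := by
      have := ((hasDerivAt_id y).const_sub 1).add
        (((hasDerivAt_id y).pow 2).div_const 2)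
      simp [mul_comm] at this; exact this
    exact h1.mul (Real.hasDerivAt_exp y)
  have hmono : MonotoneOn (fun y : ℝ => (1 - y + y ^ 2 / 2) * Real.exp y) (Set.Ici 0) := by
    apply monotoneOn_of_deriv_nonneg (convex_Ici 0)
    · exact (Continuous.mul (by continuity) Real.continuous_exp).continuousOn
    · intro y _
      exact (hder y).differentiableAt.differentiableWithinAt
    · intro y hy
      rw [(hder y).deriv]
      have hy0 : 0 < y := by simpa using hy
      nlinarith [Real.exp_pos y, sq_nonneg y]
  have h : 1 ≤ (1 - x + x ^ 2 / 2) * Real.exp x := by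
    have := hmono (Set.self_mem_Ici (a := (0:ℝ))) hx hx
    simpa using this
  have hexp : 0 < Real.exp x := Real.exp_pos x
  rw [Real.exp_neg, inv_le_iff_one_le_mul₀ hexp]
  linarith


lemma ew_step (ω : Fin T → Fin Nw → Fin d) {t : ℕ} (h : t < T) (i : Fin d) :
    expWeights d T Nw η L ω (t + 1) i =
      expWeights d T Nw η L ω t i * Real.exp (-η * exp3Grad d T Nw η L ω ⟨t, h⟩ i) /
        ∑ j, expWeights d T Nw η L ω t j * Real.exp (-η * exp3Grad d T Nw η L ω ⟨t, h⟩ j) := by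
  simp only [expWeights, dif_pos h, exp3Grad]

lemma pathwise (hd : 1 ≤ d) (hL : ∀ t i, L t i ∈ Set.Icc (0 : ℝ) 1) (hη : 0 < η)
    (wstar : Fin d → ℝ) (hws0 : ∀ i, 0 ≤ wstar i) (hws1 : ∑ i, wstar i = 1)
    (ω : Fin T → Fin Nw → Fin d) :
    ∑ t : Fin T, ∑ i : Fin d,
        exp3Grad d T Nw η L ω t i * (expWeights d T Nw η L ω (t : ℕ) i - wstar i) ≤
      Real.log d / η +
        η / 2 * ∑ t : Fin T, ∑ i : Fin d,
          expWeights d T Nw η L ω (t : ℕ) i * (exp3Grad d T Nw η L ω t i) ^ 2 := by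
  classical
  set w := expWeights d T Nw η L ω with hw
  set G : ℕ → Fin d → ℝ :=
    fun t i => if h : t < T then exp3Grad d T Nw η L ω ⟨t, h⟩ i else 0 with hG
  set Z : ℕ → ℝ := fun t => ∑ j, w t j * Real.exp (-η * G t j) with hZdef
  have hwpos : ∀ n i, 0 < w n i := ew_pos hd ω
  have hwsum : ∀ n, ∑ i, w n i = 1 := ew_sum hd ω
  have hGnn : ∀ t i, 0 ≤ G t i := by
    intro t i
    simp only [hG]
    split
    · exact grad_nonneg hd hL ω _ i
    · exact le_refl 0
  have hZpos : ∀ t, 0 < Z t := by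
    intro t
    apply Finset.sum_pos (fun j _ => mul_pos (hwpos t j) (Real.exp_pos _))
    exact univ_nonempty_iff.mpr ⟨⟨0, hd⟩⟩
  -- step for log-weights
  have hlogstep : ∀ t < T, ∀ i, Real.log (w (t + 1) i) =
      Real.log (w t i) + (-η * G t i) - Real.log (Z t) := by
    intro t ht i
    have hst : w (t + 1) i = w t i * Real.exp (-η * G t i) / Z t := by
      simp only [hZdef, hG, dif_pos ht]
      exact ew_step (η := η) (L := L) ω ht i
    rw [hst, Real.log_div (ne_of_gt (mul_pos (hwpos t i) (Real.exp_pos _))) (ne_of_gt (hZpos t)),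
      Real.log_mul (ne_of_gt (hwpos t i)) (ne_of_gt (Real.exp_pos _)), Real.log_exp]
  -- per-round bound on log Z
  have hZbound : ∀ t < T, Real.log (Z t) ≤
      -η * (∑ j, w t j * G t j) + η ^ 2 / 2 * ∑ j, w t j * (G t j) ^ 2 := by
    intro t _
    have h1 : Z t ≤ 1 - η * (∑ j, w t j * G t j) + η ^ 2 / 2 * ∑ j, w t j * (G t j) ^ 2 := by
      have h2 : Z t ≤ ∑ j, w t j * (1 - η * G t j + (η * G t j) ^ 2 / 2) := by
        apply Finset.sum_le_sum
        intro j _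
        have := exp_quad (mul_nonneg hη.le (hGnn t j))
        have hx : -η * G t j = -(η * G t j) := by ring
        rw [hx]
        exact mul_le_mul_of_nonneg_left this (hwpos t j).le
      refine h2.trans_eq ?_
      have : ∑ j, w t j * (1 - η * G t j + (η * G t j) ^ 2 / 2) =
          (∑ j, w t j) - η * (∑ j, w t j * G t j)
            + η ^ 2 / 2 * ∑ j, w t j * (G t j) ^ 2 := by
        rw [Finset.mul_sum, Finset.mul_sum, ← Finset.sum_sub_distrib, ← Finset.sum_add_distrib]
        apply Finset.sum_congr rfl
        intro j _
        ring
      rw [this, hwsum t]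
    calc Real.log (Z t) ≤ Z t - 1 := Real.log_le_sub_one_of_pos (hZpos t)
      _ ≤ -η * (∑ j, w t j * G t j) + η ^ 2 / 2 * ∑ j, w t j * (G t j) ^ 2 := by linarith
  -- telescoping, per fixed arm i*
  have hkey : ∀ i0 : Fin d,
      η * (∑ t ∈ range T, ∑ j, w t j * G t j)
        - η ^ 2 / 2 * (∑ t ∈ range T, ∑ j, w t j * (G t j) ^ 2)
        ≤ Real.log d + η * ∑ t ∈ range T, G t i0 := by
    intro i0
    have htel : ∑ t ∈ range T, (Real.log (w (t + 1) i0) - Real.log (w t i0)) =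
        Real.log (w T i0) - Real.log (w 0 i0) :=
      Finset.sum_range_sub (fun n => Real.log (w n i0)) T
    have hsum : ∑ t ∈ range T, (Real.log (w (t + 1) i0) - Real.log (w t i0)) =
        ∑ t ∈ range T, ((-η * G t i0) - Real.log (Z t)) := by
      apply Finset.sum_congr rfl
      intro t ht
      rw [hlogstep t (mem_range.mp ht) i0]
      ring
    have hw0 : Real.log (w 0 i0) = -Real.log d := by
      show Real.log ((1 : ℝ) / d) = -Real.log d
      rw [one_div, Real.log_inv]
    have hA : -(∑ t ∈ range T, Real.log (Z t)) =
        Real.log (w T i0) + Real.log d + η * ∑ t ∈ range T, G t i0 := by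
      have h1 : ∑ t ∈ range T, (-η * G t i0 - Real.log (Z t)) =
          Real.log (w T i0) + Real.log d := by
        rw [← hsum, htel, hw0]; ring
      have h2 : ∑ t ∈ range T, (-η * G t i0 - Real.log (Z t)) =
          -(η * ∑ t ∈ range T, G t i0) - ∑ t ∈ range T, Real.log (Z t) := by
        rw [Finset.sum_sub_distrib, Finset.mul_sum, ← Finset.sum_neg_distrib]
        congr 1
        apply Finset.sum_congr rfl; intro t _; ring
      linarith [h1, h2]
    have hlogT : Real.log (w T i0) ≤ 0 :=
      Real.log_nonpos (hwpos T i0).le (ew_le_one hd ω T i0)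
    have hZb : ∑ t ∈ range T, (η * (∑ j, w t j * G t j)
        - η ^ 2 / 2 * ∑ j, w t j * (G t j) ^ 2) ≤ -(∑ t ∈ range T, Real.log (Z t)) := by
      rw [← Finset.sum_neg_distrib]

      apply Finset.sum_le_sum
      intro t ht
      have := hZbound t (mem_range.mp ht)
      linarith
    rw [Finset.sum_sub_distrib, ← Finset.mul_sum, ← Finset.mul_sum] at hZb
    linarith [hZb, hA, hlogT]
  -- combine with wstar
  have hcomb :
      η * (∑ t ∈ range T, ∑ j, w t j * G t j)
        - η ^ 2 / 2 * (∑ t ∈ range T, ∑ j, w t j * (G t j) ^ 2)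
        ≤ Real.log d + η * ∑ t ∈ range T, ∑ i, wstar i * G t i := by
    have h1 : ∀ i0 : Fin d,
        wstar i0 * (η * (∑ t ∈ range T, ∑ j, w t j * G t j)
          - η ^ 2 / 2 * (∑ t ∈ range T, ∑ j, w t j * (G t j) ^ 2))
          ≤ wstar i0 * (Real.log d + η * ∑ t ∈ range T, G t i0) :=
      fun i0 => mul_le_mul_of_nonneg_left (hkey i0) (hws0 i0)
    have h2 := Finset.sum_le_sum (fun i0 (_ : i0 ∈ univ) => h1 i0)
    rw [← Finset.sum_mul, hws1, one_mul] at h2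
    calc η * (∑ t ∈ range T, ∑ j, w t j * G t j)
          - η ^ 2 / 2 * (∑ t ∈ range T, ∑ j, w t j * (G t j) ^ 2)
        ≤ ∑ i0, wstar i0 * (Real.log d + η * ∑ t ∈ range T, G t i0) := h2
      _ = Real.log d + η * ∑ t ∈ range T, ∑ i, wstar i * G t i := by
          have he : ∀ i0 : Fin d, wstar i0 * (Real.log d + η * ∑ t ∈ range T, G t i0) =
              wstar i0 * Real.log d + η * (wstar i0 * ∑ t ∈ range T, G t i0) := by
            intro i0; ring
          simp_rw [he]
          rw [Finset.sum_add_distrib, ← Finset.sum_mul, hws1, one_mul, ← Finset.mul_sum]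
          congr 1
          simp_rw [Finset.mul_sum]
          exact Finset.sum_comm
  -- convert goal to range sums
  have hconv1 : ∑ t : Fin T, ∑ i : Fin d,
      exp3Grad d T Nw η L ω t i * (expWeights d T Nw η L ω (t : ℕ) i - wstar i) =
      ∑ t ∈ range T, (∑ j, w t j * G t j - ∑ i, wstar i * G t i) := by
    rw [← Fin.sum_univ_eq_sum_range
      (fun t => ∑ j, w t j * G t j - ∑ i, wstar i * G t i) T]
    apply Finset.sum_congr rfl
    intro t _
    have hGt : ∀ i, G (t : ℕ) i = exp3Grad d T Nw η L ω t i := by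
      intro i
      simp only [hG, dif_pos t.isLt, Fin.eta]
    rw [← Finset.sum_sub_distrib]
    apply Finset.sum_congr rfl
    intro i _
    rw [hGt i]; ring
  have hconv2 : ∑ t : Fin T, ∑ i : Fin d,
      expWeights d T Nw η L ω (t : ℕ) i * (exp3Grad d T Nw η L ω t i) ^ 2 =
      ∑ t ∈ range T, ∑ j, w t j * (G t j) ^ 2 := by
    rw [← Fin.sum_univ_eq_sum_range (fun t => ∑ j, w t j * (G t j) ^ 2) T]
    apply Finset.sum_congr rfl
    intro t _
    apply Finset.sum_congr rfl
    intro i _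
    simp only [hG, hw, dif_pos t.isLt, Fin.eta]
  rw [hconv1, hconv2, Finset.sum_sub_distrib]
  rw [← mul_le_mul_iff_right₀ hη]
  have e1 : η * (Real.log ↑d / η + η / 2 * ∑ t ∈ range T, ∑ j, w t j * (G t j) ^ 2) =
      Real.log ↑d + η ^ 2 / 2 * ∑ t ∈ range T, ∑ j, w t j * (G t j) ^ 2 := by
    field_simp
  rw [e1, mul_sub]
  linarith [hcomb]


-- factorization of sums over function spaces
lemma sum_prod_fun {Nw d : ℕ} (G : Fin Nw → Fin d → ℝ) :
    ∑ x : Fin Nw → Fin d, ∏ k, G k (x k) = ∏ k, ∑ j, G k j := by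
  calc ∑ x : Fin Nw → Fin d, ∏ k, G k (x k)
      = ∑ x ∈ Fintype.piFinset (fun _ : Fin Nw => (univ : Finset (Fin d))),
          ∏ k, G k (x k) := by rw [Fintype.piFinset_univ]
    _ = ∏ k, ∑ j, G k j := (Finset.prod_univ_sum _ _).symm

lemma single_marg {Nw d : ℕ} (v : Fin d → ℝ) (hv : ∑ j, v j = 1) (φ : Fin d → ℝ)
    (k : Fin Nw) :
    ∑ x : Fin Nw → Fin d, (∏ m, v (x m)) * φ (x k) = ∑ j, v j * φ j := by
  have h1 : ∀ x : Fin Nw → Fin d, (∏ m, v (x m)) * φ (x k) =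
      ∏ m, (v (x m) * if m = k then φ (x m) else 1) := by
    intro x
    rw [Finset.prod_mul_distrib, Finset.prod_ite_eq' univ k (fun m => φ (x m))]
    simp
  simp_rw [h1]
  rw [sum_prod_fun (fun m j => v j * if m = k then φ j else 1)]
  have h2 : ∀ m : Fin Nw, (∑ j, v j * if m = k then φ j else 1) =
      if m = k then ∑ j, v j * φ j else 1 := by
    intro m
    split <;> simp [hv]
  simp_rw [h2]
  rw [Finset.prod_ite_eq' univ k (fun _ => ∑ j, v j * φ j)]
  simp

lemma pair_marg {Nw d : ℕ} (v : Fin d → ℝ) (hv : ∑ j, v j = 1) (φ ψ : Fin d → ℝ)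
    (k l : Fin Nw) (hkl : k ≠ l) :
    ∑ x : Fin Nw → Fin d, (∏ m, v (x m)) * (φ (x k) * ψ (x l)) =
      (∑ j, v j * φ j) * (∑ j, v j * ψ j) := by
  have h1 : ∀ x : Fin Nw → Fin d, (∏ m, v (x m)) * (φ (x k) * ψ (x l)) =
      ∏ m, (v (x m) * ((if m = k then φ (x m) else 1) * (if m = l then ψ (x m) else 1))) := by
    intro x
    simp_rw [← mul_assoc]
    rw [Finset.prod_mul_distrib, Finset.prod_mul_distrib,
      Finset.prod_ite_eq' univ k (fun m => φ (x m)),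
      Finset.prod_ite_eq' univ l (fun m => ψ (x m))]
    simp [mul_assoc]
  simp_rw [h1]
  rw [sum_prod_fun (fun m j => v j * ((if m = k then φ j else 1) * (if m = l then ψ j else 1)))]
  have h2 : ∀ m : Fin Nw, (∑ j, v j * ((if m = k then φ j else 1) * (if m = l then ψ j else 1))) =
      (if m = k then ∑ j, v j * φ j else 1) * (if m = l then ∑ j, v j * ψ j else 1) := by
    intro m
    by_cases hk : m = k <;> by_cases hl : m = l
    · exact absurd (hk ▸ hl ▸ rfl : k = l) hkl
    · simp [hk, hl, hkl, Ne.symm hkl]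
    · simp [hk, hl, hkl, Ne.symm hkl]
    · simp [hk, hl, hv]
  simp_rw [h2]
  rw [Finset.prod_mul_distrib,
    Finset.prod_ite_eq' univ k (fun _ => ∑ j, v j * φ j),
    Finset.prod_ite_eq' univ l (fun _ => ∑ j, v j * ψ j)]
  simp

lemma sq_marg {Nw d : ℕ} (v : Fin d → ℝ) (hv : ∑ j, v j = 1) (i : Fin d) :
    ∑ x : Fin Nw → Fin d, (∏ m, v (x m)) * (∑ k, if x k = i then (1:ℝ) else 0) ^ 2 =
      (Nw : ℝ) * v i + (Nw : ℝ) * ((Nw : ℝ) - 1) * v i ^ 2 := by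
  classical
  set φ : Fin d → ℝ := fun j => if j = i then (1:ℝ) else 0 with hφ
  have hexp : ∀ x : Fin Nw → Fin d,
      (∏ m, v (x m)) * (∑ k, if x k = i then (1:ℝ) else 0) ^ 2 =
      ∑ k, ∑ l, (∏ m, v (x m)) * (φ (x k) * φ (x l)) := by
    intro x
    simp only [sq, Finset.sum_mul_sum, Finset.mul_sum, hφ]
    refine Finset.sum_congr rfl fun k _ => ?_
    rw [show (∏ m, v (x m)) * ((∑ l : Fin Nw, if x l = i then (1:ℝ) else 0) *
          if x k = i then (1:ℝ) else 0) =
        ((∏ m, v (x m)) * (if x k = i then (1:ℝ) else 0)) *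
          ∑ l : Fin Nw, if x l = i then (1:ℝ) else 0 by ring, Finset.mul_sum]
    exact Finset.sum_congr rfl fun l _ => by ring
  have hvφ : ∑ j, v j * φ j = v i := by
    simp [hφ, mul_ite, mul_one, mul_zero, Finset.sum_ite_eq']
  have hterm : ∀ k l : Fin Nw, ∑ x : Fin Nw → Fin d, (∏ m, v (x m)) * (φ (x k) * φ (x l)) =
      if k = l then v i else v i ^ 2 := by
    intro k l
    by_cases hkl : k = l
    · subst hkl
      rw [if_pos rfl]
      have hsq : ∀ x : Fin Nw → Fin d,
          (∏ m, v (x m)) * (φ (x k) * φ (x k)) = (∏ m, v (x m)) * φ (x k) := by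
        intro x; simp only [hφ]; split <;> ring
      simp_rw [hsq]
      rw [single_marg v hv φ k, hvφ]
    · rw [if_neg hkl, pair_marg v hv φ φ k l hkl, hvφ]; ring
  simp_rw [hexp]
  rw [Finset.sum_comm]
  have hswap : ∀ k : Fin Nw, ∑ x : Fin Nw → Fin d, ∑ l, (∏ m, v (x m)) * (φ (x k) * φ (x l)) =
      ∑ l : Fin Nw, (if k = l then v i else v i ^ 2) := by
    intro k
    rw [Finset.sum_comm]
    exact Finset.sum_congr rfl fun l _ => hterm k l
  simp_rw [hswap]
  have hrow : ∀ k : Fin Nw, ∑ l : Fin Nw, (if k = l then v i else v i ^ 2) =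
      v i + ((Nw:ℝ) - 1) * v i ^ 2 := by
    intro k
    have e : ∀ l : Fin Nw, (if k = l then v i else v i ^ 2) =
        v i ^ 2 + (if k = l then v i - v i ^ 2 else 0) := by intro l; split <;> ring
    simp_rw [e]
    rw [Finset.sum_add_distrib, Finset.sum_const, Finset.sum_ite_eq]
    simp [card_univ]
    ring
  simp_rw [hrow]
  rw [Finset.sum_const]
  simp [card_univ]
  ring

lemma cond_bound {Nw d : ℕ} (hd : 1 ≤ d) (hNw : 1 ≤ Nw) (v : Fin d → ℝ)
    (hvpos : ∀ i, 0 < v i) (hv : ∑ j, v j = 1) (c : Fin d → ℝ)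
    (hc : ∀ i, c i ∈ Set.Icc (0:ℝ) 1) :
    ∑ x : Fin Nw → Fin d, (∏ m, v (x m)) *
        (∑ i, v i * ((1 / (Nw : ℝ)) * (c i / v i) *
          ∑ k : Fin Nw, if x k = i then (1:ℝ) else 0) ^ 2) ≤
      ((d : ℝ) - 1) / Nw + 1 := by
  have hn : (0:ℝ) < (Nw:ℝ) := by exact_mod_cast hNw
  -- swap sums and factor constants
  have hswap : ∑ x : Fin Nw → Fin d, (∏ m, v (x m)) *
      (∑ i, v i * ((1 / (Nw : ℝ)) * (c i / v i) *
        ∑ k : Fin Nw, if x k = i then (1:ℝ) else 0) ^ 2) =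
      ∑ i, (v i * ((1 / (Nw : ℝ)) * (c i / v i)) ^ 2) *
        ∑ x : Fin Nw → Fin d, (∏ m, v (x m)) *
          (∑ k : Fin Nw, if x k = i then (1:ℝ) else 0) ^ 2 := by
    simp_rw [Finset.mul_sum]
    rw [Finset.sum_comm]
    refine Finset.sum_congr rfl fun i _ => ?_
    refine Finset.sum_congr rfl fun x _ => ?_
    rw [← Finset.mul_sum]
    ring
  rw [hswap]
  have hbound : ∀ i : Fin d, (v i * ((1 / (Nw : ℝ)) * (c i / v i)) ^ 2) *
      ((Nw : ℝ) * v i + (Nw : ℝ) * ((Nw : ℝ) - 1) * v i ^ 2) ≤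
      1 / Nw + ((Nw : ℝ) - 1) / Nw * v i := by
    intro i
    have hvi := hvpos i
    have hci := hc i
    have heq : (v i * ((1 / (Nw : ℝ)) * (c i / v i)) ^ 2) *
        ((Nw : ℝ) * v i + (Nw : ℝ) * ((Nw : ℝ) - 1) * v i ^ 2) =
        c i ^ 2 * (1 / Nw + ((Nw : ℝ) - 1) / Nw * v i) := by
      field_simp
    rw [heq]
    have hc2 : c i ^ 2 ≤ 1 := by nlinarith [hci.1, hci.2]
    have hpos : 0 ≤ 1 / (Nw:ℝ) + ((Nw : ℝ) - 1) / Nw * v i := by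
      have h1 : (0:ℝ) ≤ ((Nw : ℝ) - 1) / Nw := by
        apply div_nonneg _ hn.le
        have : (1:ℝ) ≤ (Nw:ℝ) := by exact_mod_cast hNw
        linarith
      positivity
    nlinarith [sq_nonneg (c i)]
  calc ∑ i, (v i * ((1 / (Nw : ℝ)) * (c i / v i)) ^ 2) *
        ∑ x : Fin Nw → Fin d, (∏ m, v (x m)) *
          (∑ k : Fin Nw, if x k = i then (1:ℝ) else 0) ^ 2
      = ∑ i, (v i * ((1 / (Nw : ℝ)) * (c i / v i)) ^ 2) *
        ((Nw : ℝ) * v i + (Nw : ℝ) * ((Nw : ℝ) - 1) * v i ^ 2) := by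
        refine Finset.sum_congr rfl fun i _ => ?_
        rw [sq_marg v hv i]
    _ ≤ ∑ i, (1 / (Nw:ℝ) + ((Nw : ℝ) - 1) / Nw * v i) :=
        Finset.sum_le_sum fun i _ => hbound i
    _ = ((d : ℝ) - 1) / Nw + 1 := by
        rw [Finset.sum_add_distrib, Finset.sum_const, ← Finset.mul_sum, hv, card_univ,
          Fintype.card_fin, nsmul_eq_mul]
        field_simp
        ring

section Marg
variable {T A : Type*} [Fintype T] [DecidableEq T] [Fintype A] [DecidableEq A]

lemma marg_aux (m : T) (F : (T → A) → ℝ) (h : (T → A) → A → ℝ)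
    (hF : ∀ ω x, F (Function.update ω m x) = F ω)
    (hh : ∀ ω x y, h (Function.update ω m x) y = h ω y) :
    ∑ ω : T → A, F ω * ∑ x : A, h ω x =
      (Fintype.card A : ℝ) * ∑ ω : T → A, F ω * h ω (ω m) := by
  classical
  set e := Equiv.funSplitAt m A with he
  have hupd : ∀ (x x' : A) (ρ : {j // j ≠ m} → A),
      Function.update (e.symm (x, ρ)) m x' = e.symm (x', ρ) := by
    intro x x' ρ
    funext j
    by_cases hj : j = m
    · subst hj
      simp [he, Equiv.funSplitAt, Equiv.piSplitAt]
    · simp [Function.update_of_ne hj, he, Equiv.funSplitAt, Equiv.piSplitAt, hj]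
  have hem : ∀ (x : A) (ρ : {j // j ≠ m} → A), e.symm (x, ρ) m = x := by
    intro x ρ
    simp [he, Equiv.funSplitAt, Equiv.piSplitAt]
  have hFconst : ∀ (x x' : A) (ρ : {j // j ≠ m} → A),
      F (e.symm (x, ρ)) = F (e.symm (x', ρ)) := by
    intro x x' ρ
    rw [← hupd x' x ρ, hF]
  have hhconst : ∀ (x x' : A) (ρ : {j // j ≠ m} → A) (y : A),
      h (e.symm (x, ρ)) y = h (e.symm (x', ρ)) y := by
    intro x x' ρ y
    rw [← hupd x' x ρ, hh]
  rw [← Equiv.sum_comp e.symm (fun ω => F ω * ∑ x : A, h ω x),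
    ← Equiv.sum_comp e.symm (fun ω => F ω * h ω (ω m))]
  rw [Fintype.sum_prod_type, Fintype.sum_prod_type]
  rw [Finset.sum_comm, Finset.sum_comm (γ := A)]
  rw [Finset.mul_sum]
  refine Finset.sum_congr rfl fun ρ _ => ?_
  -- fix a base point: use ρ's extension? need some x0 : A. A is nonempty? not necessarily!
  by_cases hA : Nonempty A
  · obtain ⟨x0⟩ := hA
    have h1 : ∀ x : A, F (e.symm (x, ρ)) * ∑ y : A, h (e.symm (x, ρ)) y =
        F (e.symm (x0, ρ)) * ∑ y : A, h (e.symm (x0, ρ)) y := by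
      intro x
      rw [hFconst x x0 ρ]
      congr 1
      exact Finset.sum_congr rfl fun y _ => hhconst x x0 ρ y
    have h2 : ∀ x : A, F (e.symm (x, ρ)) * h (e.symm (x, ρ)) ((e.symm (x, ρ)) m) =
        F (e.symm (x0, ρ)) * h (e.symm (x0, ρ)) x := by
      intro x
      rw [hFconst x x0 ρ, hem]
      congr 1
      exact hhconst x x0 ρ x
    simp_rw [h1, h2]
    rw [Finset.sum_const, card_univ, nsmul_eq_mul, ← Finset.mul_sum]
  · have : IsEmpty A := not_nonempty_iff.mp hA
    simp
end Marg

noncomputable def pathProb (d T Nw : ℕ) (η : ℝ) (L : Fin T → Fin d → ℝ) (m : ℕ)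
    (ω : Fin T → Fin Nw → Fin d) : ℝ :=
  ∏ s ∈ range m,
    if h : s < T then ∏ k, expWeights d T Nw η L ω s (ω ⟨s, h⟩ k) else 1

variable {d T Nw : ℕ} {η : ℝ} {L : Fin T → Fin d → ℝ}

lemma pathProb_zero (ω : Fin T → Fin Nw → Fin d) : pathProb d T Nw η L 0 ω = 1 := by
  simp [pathProb]

lemma pathProb_succ {m : ℕ} (hm : m < T) (ω : Fin T → Fin Nw → Fin d) :
    pathProb d T Nw η L (m + 1) ω =
      pathProb d T Nw η L m ω * ∏ k, expWeights d T Nw η L ω m (ω ⟨m, hm⟩ k) := by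
  rw [pathProb, Finset.prod_range_succ, dif_pos hm]
  rfl

lemma pathProb_top (ω : Fin T → Fin Nw → Fin d) :
    pathProb d T Nw η L T ω =
      ∏ t : Fin T, ∏ k : Fin Nw, expWeights d T Nw η L ω (t : ℕ) (ω t k) := by
  rw [pathProb, ← Fin.prod_univ_eq_prod_range
    (fun s => if h : s < T then ∏ k, expWeights d T Nw η L ω s (ω ⟨s, h⟩ k) else 1) T]
  exact Finset.prod_congr rfl fun t _ => by rw [dif_pos t.isLt]

lemma pathProb_nonneg (hd : 1 ≤ d) (ω : Fin T → Fin Nw → Fin d) (m : ℕ) :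
    0 ≤ pathProb d T Nw η L m ω := by
  apply Finset.prod_nonneg
  intro s _
  split
  · exact Finset.prod_nonneg fun k _ => (ew_pos hd ω _ _).le
  · exact zero_le_one

lemma pathProb_update {m : ℕ} (hm : m < T) (ω : Fin T → Fin Nw → Fin d)
    (x : Fin Nw → Fin d) :
    pathProb d T Nw η L m (Function.update ω ⟨m, hm⟩ x) = pathProb d T Nw η L m ω := by
  apply Finset.prod_congr rfl
  intro s hs
  have hsm : s < m := mem_range.mp hs
  split
  · rename_i h
    have hag : ∀ u : Fin T, (u : ℕ) < s → Function.update ω ⟨m, hm⟩ x u = ω u := by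
      intro u hu
      apply Function.update_of_ne
      intro he
      rw [he] at hu
      simp at hu
      omega
    rw [ew_congr (Function.update ω ⟨m, hm⟩ x) ω s hag]
    rw [Function.update_of_ne (by intro he; rw [Fin.mk.injEq] at he; omega)]
  · rfl

lemma ew_update {m : ℕ} (hm : m < T) (ω : Fin T → Fin Nw → Fin d)
    (x : Fin Nw → Fin d) {n : ℕ} (hn : n ≤ m) :
    expWeights d T Nw η L (Function.update ω ⟨m, hm⟩ x) n = expWeights d T Nw η L ω n := by
  apply ew_congr
  intro u hu
  apply Function.update_of_ne
  intro he
  rw [he] at hu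
  simp at hu
  omega

lemma ew_sum_x (hd : 1 ≤ d) (ω : Fin T → Fin Nw → Fin d) (n : ℕ) :
    ∑ x : Fin Nw → Fin d, ∏ k, expWeights d T Nw η L ω n (x k) = 1 := by
  rw [sum_prod_fun (fun _ j => expWeights d T Nw η L ω n j)]
  rw [Finset.prod_congr rfl fun k _ => ew_sum hd ω n]
  simp

lemma pp_marg_one (hd : 1 ≤ d) {m : ℕ} (hm : m < T)
    (g : (Fin T → Fin Nw → Fin d) → ℝ)
    (hg : ∀ ω x, g (Function.update ω ⟨m, hm⟩ x) = g ω) :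
    ((d : ℝ) ^ Nw) * ∑ ω : Fin T → Fin Nw → Fin d, pathProb d T Nw η L (m + 1) ω * g ω =
      ∑ ω : Fin T → Fin Nw → Fin d, pathProb d T Nw η L m ω * g ω := by
  classical
  have hmarg := marg_aux (⟨m, hm⟩ : Fin T)
    (fun ω => pathProb d T Nw η L m ω * g ω)
    (fun ω x => ∏ k, expWeights d T Nw η L ω m (x k))
    (fun ω x => by rw [pathProb_update hm, hg])
    (fun ω x y => by rw [ew_update hm ω x (le_refl m)])
  have hcard : (Fintype.card (Fin Nw → Fin d) : ℝ) = (d : ℝ) ^ Nw := by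
    rw [Fintype.card_fun, Fintype.card_fin, Fintype.card_fin]
    push_cast
    rfl
  rw [hcard] at hmarg
  have hleft : ∑ ω : Fin T → Fin Nw → Fin d, (pathProb d T Nw η L m ω * g ω) *
      ∑ x : Fin Nw → Fin d, ∏ k, expWeights d T Nw η L ω m (x k) =
      ∑ ω : Fin T → Fin Nw → Fin d, pathProb d T Nw η L m ω * g ω := by
    refine Finset.sum_congr rfl fun ω _ => ?_
    rw [ew_sum_x hd ω m, mul_one]
  have hright : ∀ ω : Fin T → Fin Nw → Fin d,
      (pathProb d T Nw η L m ω * g ω) * (∏ k, expWeights d T Nw η L ω m (ω ⟨m, hm⟩ k)) =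
      pathProb d T Nw η L (m + 1) ω * g ω := by
    intro ω
    rw [pathProb_succ hm]
    ring
  rw [hleft] at hmarg
  rw [hmarg]
  rw [Finset.mul_sum, Finset.mul_sum]
  exact Finset.sum_congr rfl fun ω _ => by rw [hright ω]

lemma pp_mass (hd : 1 ≤ d) : ∀ m : ℕ, m ≤ T →
    ∑ ω : Fin T → Fin Nw → Fin d, pathProb d T Nw η L m ω = ((d : ℝ) ^ Nw) ^ (T - m) := by
  have hdne : ((d : ℝ) ^ Nw) ≠ 0 := by
    have h0 : (0:ℝ) < (d:ℝ) := by exact_mod_cast hd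
    positivity
  intro m
  induction m with
  | zero =>
    intro _
    simp only [pathProb_zero, Finset.sum_const, card_univ, nsmul_eq_mul, mul_one,
      Nat.sub_zero]
    rw [Fintype.card_fun, Fintype.card_fun, Fintype.card_fin, Fintype.card_fin,
      Fintype.card_fin]
    push_cast
    rfl
  | succ m ih =>
    intro hm1
    have hm : m < T := hm1
    have h1 := pp_marg_one (Nw := Nw) (η := η) (L := L) hd hm (fun _ => (1:ℝ)) (fun _ _ => rfl)
    simp only [mul_one] at h1
    rw [ih (le_of_lt hm)] at h1
    have h2 : T - m = (T - (m + 1)) + 1 := by omega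
    rw [h2, pow_succ] at h1
    exact mul_left_cancel₀ hdne (by rw [h1]; ring)

lemma pp_Q (hd : 1 ≤ d) (hNw : 1 ≤ Nw) (hL : ∀ t i, L t i ∈ Set.Icc (0 : ℝ) 1)
    (t : Fin T) :
    ∑ ω : Fin T → Fin Nw → Fin d, pathProb d T Nw η L T ω *
        (∑ i, expWeights d T Nw η L ω (t : ℕ) i * (exp3Grad d T Nw η L ω t i) ^ 2) ≤
      ((d : ℝ) - 1) / Nw + 1 := by
  classical
  set Q : (Fin T → Fin Nw → Fin d) → ℝ :=
    fun ω => ∑ i, expWeights d T Nw η L ω (t : ℕ) i * (exp3Grad d T Nw η L ω t i) ^ 2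
    with hQ
  have hdpos : (0:ℝ) < (d:ℝ) := by exact_mod_cast hd
  have hdpow : (0:ℝ) < (d:ℝ) ^ Nw := by positivity
  -- base case: integrate round t
  have hbase : ∑ ω : Fin T → Fin Nw → Fin d, pathProb d T Nw η L ((t : ℕ) + 1) ω * Q ω ≤
      (((d : ℝ) - 1) / Nw + 1) * ((d : ℝ) ^ Nw) ^ (T - ((t : ℕ) + 1)) := by
    have hmarg := marg_aux (t : Fin T)
      (fun ω => pathProb d T Nw η L (t : ℕ) ω)
      (fun ω x => (∏ k, expWeights d T Nw η L ω (t : ℕ) (x k)) *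
        ∑ i, expWeights d T Nw η L ω (t : ℕ) i *
          ((1 / (Nw : ℝ)) * (L t i / expWeights d T Nw η L ω (t : ℕ) i) *
            ∑ k : Fin Nw, if x k = i then (1:ℝ) else 0) ^ 2)
      (fun ω x => by
        have := pathProb_update (d := d) (Nw := Nw) (η := η) (L := L) t.isLt ω x
        rwa [Fin.eta] at this)
      (fun ω x y => by
        have := ew_update (d := d) (Nw := Nw) (η := η) (L := L) t.isLt ω x
          (le_refl (t : ℕ))
        rw [Fin.eta] at this
        rw [this])
    have hcard : (Fintype.card (Fin Nw → Fin d) : ℝ) = (d : ℝ) ^ Nw := by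
      rw [Fintype.card_fun, Fintype.card_fin, Fintype.card_fin]
      push_cast
      rfl
    rw [hcard] at hmarg
    -- right side of hmarg equals the desired sum
    have hright : ∀ ω : Fin T → Fin Nw → Fin d,
        pathProb d T Nw η L (t : ℕ) ω *
          ((∏ k, expWeights d T Nw η L ω (t : ℕ) (ω t k)) *
            ∑ i, expWeights d T Nw η L ω (t : ℕ) i *
              ((1 / (Nw : ℝ)) * (L t i / expWeights d T Nw η L ω (t : ℕ) i) *
                ∑ k : Fin Nw, if ω t k = i then (1:ℝ) else 0) ^ 2) =
        pathProb d T Nw η L ((t : ℕ) + 1) ω * Q ω := by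
      intro ω
      have hps := pathProb_succ (d := d) (Nw := Nw) (η := η) (L := L) t.isLt ω
      rw [Fin.eta] at hps
      rw [hps, hQ]
      have : ∀ i, exp3Grad d T Nw η L ω t i =
          (1 / (Nw : ℝ)) * (L t i / expWeights d T Nw η L ω (t : ℕ) i) *
            ∑ k : Fin Nw, if ω t k = i then (1:ℝ) else 0 := fun i => rfl
      simp_rw [this]
      ring
    -- bound the left side of hmarg using cond_bound
    have hleft : ∑ ω : Fin T → Fin Nw → Fin d, pathProb d T Nw η L (t : ℕ) ω *
        (∑ x : Fin Nw → Fin d, (∏ k, expWeights d T Nw η L ω (t : ℕ) (x k)) *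
          ∑ i, expWeights d T Nw η L ω (t : ℕ) i *
            ((1 / (Nw : ℝ)) * (L t i / expWeights d T Nw η L ω (t : ℕ) i) *
              ∑ k : Fin Nw, if x k = i then (1:ℝ) else 0) ^ 2) ≤
        (((d : ℝ) - 1) / Nw + 1) * ((d : ℝ) ^ Nw) ^ (T - (t : ℕ)) := by
      calc ∑ ω : Fin T → Fin Nw → Fin d, pathProb d T Nw η L (t : ℕ) ω *
            (∑ x : Fin Nw → Fin d, (∏ k, expWeights d T Nw η L ω (t : ℕ) (x k)) *
              ∑ i, expWeights d T Nw η L ω (t : ℕ) i *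
                ((1 / (Nw : ℝ)) * (L t i / expWeights d T Nw η L ω (t : ℕ) i) *
                  ∑ k : Fin Nw, if x k = i then (1:ℝ) else 0) ^ 2)
          ≤ ∑ ω : Fin T → Fin Nw → Fin d, pathProb d T Nw η L (t : ℕ) ω *
              (((d : ℝ) - 1) / Nw + 1) := by
            apply Finset.sum_le_sum
            intro ω _
            apply mul_le_mul_of_nonneg_left _ (pathProb_nonneg hd ω _)
            exact cond_bound hd hNw _ (ew_pos hd ω _) (ew_sum hd ω _) (L t) (hL t)
        _ = (((d : ℝ) - 1) / Nw + 1) * ((d : ℝ) ^ Nw) ^ (T - (t : ℕ)) := by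
            rw [← Finset.sum_mul, pp_mass hd (t : ℕ) t.isLt.le]
            ring
    have hmarg2 : ((d : ℝ) ^ Nw) *
        ∑ ω : Fin T → Fin Nw → Fin d, pathProb d T Nw η L ((t : ℕ) + 1) ω * Q ω ≤
        (((d : ℝ) - 1) / Nw + 1) * ((d : ℝ) ^ Nw) ^ (T - (t : ℕ)) := by
      have e1 : ∑ ω : Fin T → Fin Nw → Fin d, pathProb d T Nw η L ((t : ℕ) + 1) ω * Q ω =
          ∑ ω : Fin T → Fin Nw → Fin d, pathProb d T Nw η L (t : ℕ) ω *
            ((∏ k, expWeights d T Nw η L ω (t : ℕ) (ω t k)) *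
              ∑ i, expWeights d T Nw η L ω (t : ℕ) i *
                ((1 / (Nw : ℝ)) * (L t i / expWeights d T Nw η L ω (t : ℕ) i) *
                  ∑ k : Fin Nw, if ω t k = i then (1:ℝ) else 0) ^ 2) :=
        Finset.sum_congr rfl fun ω _ => (hright ω).symm
      rw [e1, ← hmarg]
      exact hleft
    have hsplit : T - (t : ℕ) = (T - ((t : ℕ) + 1)) + 1 := by omega
    rw [hsplit, pow_succ] at hmarg2
    calc ∑ ω : Fin T → Fin Nw → Fin d, pathProb d T Nw η L ((t : ℕ) + 1) ω * Q ω
        = (((d : ℝ) ^ Nw) * ∑ ω : Fin T → Fin Nw → Fin d,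
            pathProb d T Nw η L ((t : ℕ) + 1) ω * Q ω) / ((d : ℝ) ^ Nw) := by
          field_simp
      _ ≤ (((d : ℝ) - 1) / Nw + 1) * (((d : ℝ) ^ Nw) ^ (T - ((t : ℕ) + 1)) * ((d : ℝ) ^ Nw)) /
            ((d : ℝ) ^ Nw) := (div_le_div_iff_of_pos_right hdpow).mpr hmarg2
      _ = (((d : ℝ) - 1) / Nw + 1) * ((d : ℝ) ^ Nw) ^ (T - ((t : ℕ) + 1)) := by
          field_simp
  -- inductive step
  have hstep : ∀ m : ℕ, (t : ℕ) + 1 ≤ m → m ≤ T →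
      ∑ ω : Fin T → Fin Nw → Fin d, pathProb d T Nw η L m ω * Q ω ≤
        (((d : ℝ) - 1) / Nw + 1) * ((d : ℝ) ^ Nw) ^ (T - m) := by
    intro m hm
    induction m, hm using Nat.le_induction with
    | base => intro _; exact hbase
    | succ m hm ih =>
      intro hm2
      have hmT : m < T := by omega
      have hQinv : ∀ (ω : Fin T → Fin Nw → Fin d) (x : Fin Nw → Fin d),
          Q (Function.update ω ⟨m, hmT⟩ x) = Q ω := by
        intro ω x
        have htm : (t : Fin T) ≠ ⟨m, hmT⟩ := by
          intro he
          have : (t : ℕ) = m := by rw [he]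
          omega
        have hW := ew_update (d := d) (Nw := Nw) (η := η) (L := L) hmT ω x
          (le_of_lt (by omega : (t : ℕ) < m))
        simp only [hQ]
        refine Finset.sum_congr rfl fun i _ => ?_
        rw [hW]
        congr 2
        unfold exp3Grad
        rw [hW, Function.update_of_ne htm]
      have h1 := pp_marg_one (Nw := Nw) (η := η) (L := L) hd hmT Q hQinv
      have h2 := ih (by omega)
      have hsplit : T - m = (T - (m + 1)) + 1 := by omega
      rw [hsplit, pow_succ] at h2
      calc ∑ ω : Fin T → Fin Nw → Fin d, pathProb d T Nw η L (m + 1) ω * Q ω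
          = (((d : ℝ) ^ Nw) * ∑ ω : Fin T → Fin Nw → Fin d,
              pathProb d T Nw η L (m + 1) ω * Q ω) / ((d : ℝ) ^ Nw) := by field_simp
        _ = (∑ ω : Fin T → Fin Nw → Fin d, pathProb d T Nw η L m ω * Q ω) /
              ((d : ℝ) ^ Nw) := by rw [h1]
        _ ≤ ((((d : ℝ) - 1) / Nw + 1) * (((d : ℝ) ^ Nw) ^ (T - (m + 1)) * ((d : ℝ) ^ Nw))) /
              ((d : ℝ) ^ Nw) := (div_le_div_iff_of_pos_right hdpow).mpr h2
        _ = (((d : ℝ) - 1) / Nw + 1) * ((d : ℝ) ^ Nw) ^ (T - (m + 1)) := by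
            field_simp
  have hfin := hstep T (by omega) (le_refl T)
  rw [Nat.sub_self, pow_zero, mul_one] at hfin
  exact hfin

/-- Expected-regret bound for EXP3 with `Nw` arm-pulls per iteration
(Proposition 2): with `z = (d-1)/Nw + 1` and `η = √(2 log d / (z T))`,
`∑ₜ E[γ(t)ᵀ(w(t) - w*)] ≤ √(2 z T log d)`.  The expectation over the sample path is
written as a sum over all paths `ω`, each weighted by its probability
`∏ₜ ∏ₖ w(t)(ω t k)` under the algorithm's sequential sampling. -/
theorem stmt1 (d T Nw : ℕ) (hd : 1 ≤ d) (hT : 1 ≤ T) (hNw : 1 ≤ Nw)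
    (L : Fin T → Fin d → ℝ) (hL : ∀ t i, L t i ∈ Set.Icc (0 : ℝ) 1)
    (z η : ℝ) (hz : z = ((d : ℝ) - 1) / Nw + 1)
    (hη : η = Real.sqrt (2 * Real.log d / (z * T)))
    (wstar : Fin d → ℝ) (hws0 : ∀ i, 0 ≤ wstar i) (hws1 : ∑ i, wstar i = 1) :
    ∑ ω : Fin T → Fin Nw → Fin d,
        (∏ t : Fin T, ∏ k : Fin Nw, expWeights d T Nw η L ω (t : ℕ) (ω t k)) *
          ∑ t : Fin T, ∑ i : Fin d,
            exp3Grad d T Nw η L ω t i * (expWeights d T Nw η L ω (t : ℕ) i - wstar i) ≤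
      Real.sqrt (2 * z * T * Real.log d) := by
  classical
  rcases eq_or_lt_of_le hd with hd1 | hd2
  · -- degenerate case d = 1
    subst hd1
    have hLHS0 : ∀ ω : Fin T → Fin Nw → Fin 1,
        (∑ t : Fin T, ∑ i : Fin 1,
          exp3Grad 1 T Nw η L ω t i * (expWeights 1 T Nw η L ω (t : ℕ) i - wstar i)) = 0 := by
      intro ω
      apply Finset.sum_eq_zero
      intro t _
      apply Finset.sum_eq_zero
      intro i _
      have hi : i = 0 := Subsingleton.elim i 0
      have h1 : expWeights 1 T Nw η L ω (t : ℕ) i = 1 := by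
        have h := ew_sum (le_refl 1) (η := η) (L := L) ω (t : ℕ)
        rw [Fin.sum_univ_one] at h
        rw [hi]; exact h
      have h2 : wstar i = 1 := by
        have h := hws1
        rw [Fin.sum_univ_one] at h
        rw [hi]; exact h
      rw [h1, h2, sub_self, mul_zero]
    calc ∑ ω : Fin T → Fin Nw → Fin 1,
          (∏ t : Fin T, ∏ k : Fin Nw, expWeights 1 T Nw η L ω (t : ℕ) (ω t k)) *
            ∑ t : Fin T, ∑ i : Fin 1,
              exp3Grad 1 T Nw η L ω t i * (expWeights 1 T Nw η L ω (t : ℕ) i - wstar i)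
        = 0 := Finset.sum_eq_zero fun ω _ => by rw [hLHS0 ω, mul_zero]
      _ ≤ Real.sqrt (2 * z * T * Real.log ((1:ℕ):ℝ)) := Real.sqrt_nonneg _
  · -- main case 1 < d
    have hdr : (1:ℝ) < (d:ℝ) := by exact_mod_cast hd2
    have hlog : 0 < Real.log d := Real.log_pos hdr
    have hnw : (0:ℝ) < (Nw:ℝ) := by exact_mod_cast hNw
    have hTr : (0:ℝ) < (T:ℝ) := by exact_mod_cast hT
    have hzpos : 0 < z := by
      rw [hz]
      have : (0:ℝ) ≤ ((d:ℝ) - 1) / Nw := by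
        apply div_nonneg _ hnw.le
        linarith
      linarith
    have hzT : 0 < z * (T:ℝ) := mul_pos hzpos hTr
    have hηpos : 0 < η := by
      rw [hη]
      apply Real.sqrt_pos.mpr
      positivity
    have hη2 : η ^ 2 = 2 * Real.log d / (z * T) := by
      rw [hη]
      exact Real.sq_sqrt (by positivity)
    have hS1 : ∑ ω : Fin T → Fin Nw → Fin d, pathProb d T Nw η L T ω = 1 := by
      rw [pp_mass hd T (le_refl T), Nat.sub_self, pow_zero]
    have hQsum : ∑ ω : Fin T → Fin Nw → Fin d, pathProb d T Nw η L T ω *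
        (∑ t : Fin T, ∑ i, expWeights d T Nw η L ω (t : ℕ) i *
          (exp3Grad d T Nw η L ω t i) ^ 2) ≤ (T:ℝ) * z := by
      have e : ∑ ω : Fin T → Fin Nw → Fin d, pathProb d T Nw η L T ω *
          (∑ t : Fin T, ∑ i, expWeights d T Nw η L ω (t : ℕ) i *
            (exp3Grad d T Nw η L ω t i) ^ 2) =
          ∑ t : Fin T, ∑ ω : Fin T → Fin Nw → Fin d, pathProb d T Nw η L T ω *
            (∑ i, expWeights d T Nw η L ω (t : ℕ) i * (exp3Grad d T Nw η L ω t i) ^ 2) := by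
        simp_rw [Finset.mul_sum]
        exact Finset.sum_comm
      rw [e]
      calc ∑ t : Fin T, ∑ ω : Fin T → Fin Nw → Fin d, pathProb d T Nw η L T ω *
            (∑ i, expWeights d T Nw η L ω (t : ℕ) i * (exp3Grad d T Nw η L ω t i) ^ 2)
          ≤ ∑ _t : Fin T, (((d : ℝ) - 1) / Nw + 1) :=
            Finset.sum_le_sum fun t _ => pp_Q hd hNw hL t
        _ = (T:ℝ) * z := by
            rw [Finset.sum_const, card_univ, Fintype.card_fin, nsmul_eq_mul, hz]
    have hmain : ∑ ω : Fin T → Fin Nw → Fin d,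
        (∏ t : Fin T, ∏ k : Fin Nw, expWeights d T Nw η L ω (t : ℕ) (ω t k)) *
          ∑ t : Fin T, ∑ i : Fin d,
            exp3Grad d T Nw η L ω t i * (expWeights d T Nw η L ω (t : ℕ) i - wstar i) ≤
        Real.log d / η + η / 2 * ((T:ℝ) * z) := by
      calc ∑ ω : Fin T → Fin Nw → Fin d,
            (∏ t : Fin T, ∏ k : Fin Nw, expWeights d T Nw η L ω (t : ℕ) (ω t k)) *
              ∑ t : Fin T, ∑ i : Fin d,
                exp3Grad d T Nw η L ω t i * (expWeights d T Nw η L ω (t : ℕ) i - wstar i)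
          = ∑ ω : Fin T → Fin Nw → Fin d, pathProb d T Nw η L T ω *
              ∑ t : Fin T, ∑ i : Fin d,
                exp3Grad d T Nw η L ω t i * (expWeights d T Nw η L ω (t : ℕ) i - wstar i) :=
            Finset.sum_congr rfl fun ω _ => by rw [pathProb_top]
        _ ≤ ∑ ω : Fin T → Fin Nw → Fin d, pathProb d T Nw η L T ω *
              (Real.log d / η + η / 2 * ∑ t : Fin T, ∑ i : Fin d,
                expWeights d T Nw η L ω (t : ℕ) i * (exp3Grad d T Nw η L ω t i) ^ 2) :=
            Finset.sum_le_sum fun ω _ => mul_le_mul_of_nonneg_left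
              (pathwise hd hL hηpos wstar hws0 hws1 ω) (pathProb_nonneg hd ω T)
        _ = ∑ ω : Fin T → Fin Nw → Fin d, pathProb d T Nw η L T ω * (Real.log d / η) +
              η / 2 * ∑ ω : Fin T → Fin Nw → Fin d, pathProb d T Nw η L T ω *
                (∑ t : Fin T, ∑ i : Fin d,
                  expWeights d T Nw η L ω (t : ℕ) i * (exp3Grad d T Nw η L ω t i) ^ 2) := by
            rw [Finset.mul_sum, ← Finset.sum_add_distrib]
            exact Finset.sum_congr rfl fun ω _ => by ring
        _ ≤ ∑ ω : Fin T → Fin Nw → Fin d, pathProb d T Nw η L T ω * (Real.log d / η) +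
              η / 2 * ((T:ℝ) * z) := by
            have h2 : 0 ≤ η / 2 := by positivity
            exact add_le_add_right (mul_le_mul_of_nonneg_left hQsum h2) _
        _ = Real.log d / η + η / 2 * ((T:ℝ) * z) := by
            rw [← Finset.sum_mul, hS1, one_mul]
    have halg : Real.log d / η + η / 2 * ((T:ℝ) * z) = Real.sqrt (2 * z * T * Real.log d) := by
      have hstep : η / 2 * ((T:ℝ) * z) = Real.log d / η := by
        rw [eq_div_iff (ne_of_gt hηpos)]
        calc η / 2 * ((T:ℝ) * z) * η = η ^ 2 * (z * (T:ℝ)) / 2 := by ring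
          _ = (2 * Real.log d / (z * T)) * (z * (T:ℝ)) / 2 := by rw [hη2]
          _ = Real.log d := by field_simp
      rw [hstep]
      have hdouble : Real.log d / η + Real.log d / η = 2 * Real.log d / η := by ring
      rw [hdouble]
      have hsq : (2 * Real.log d / η) ^ 2 = 2 * z * T * Real.log d := by
        rw [div_pow, hη2]
        field_simp
      have hpos2 : 0 ≤ 2 * Real.log d / η := by positivity
      rw [← Real.sqrt_sq hpos2, hsq]
    rw [← halg]
    exact hmain
end

section
/- Let (𝒲, ℱ, P) be a probability space, let φ : ℝ → ℝ ∪ {+∞} be a closed convex function with domain contained in [0,∞) and φ(1) = 0, let φ*(s) = sup_{t ≥ 0} {t s − φ(t)} be its conjugate, let ρ > 0, and let g : 𝒲 → ℝ be a bounded measurable function. Then sup over probability measures Q with Q ≪ P and D_φ(Q‖P) ≤ ρ of ∫ g(w) dQ(w) equals inf over λ ≥ 0 and η ∈ ℝ of { λ ∫ φ*((g(w) − η)/λ) dP(w) + ρλ + η }. -/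
open MeasureTheory Set

lemma aux_dense_u : ∃ u : ℕ → ℝ, u 0 = 0 ∧ (∀ n, 0 ≤ u n) ∧
    Ici (0:ℝ) ⊆ closure (Set.range u) := by
  obtain ⟨e, he⟩ := exists_surjective_nat ℚ
  refine ⟨fun n => Nat.casesOn n 0 (fun m => max ((e m : ℚ) : ℝ) 0),
    rfl, ?_, ?_⟩
  · rintro (_ | m)
    · exact le_refl 0
    · exact le_max_right _ _
  · intro x hx
    have hxd : x ∈ closure (Set.range ((↑) : ℚ → ℝ)) := by
      rw [Rat.denseRange_cast.closure_eq]; trivial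
    have : x = max x 0 := (max_eq_left hx).symm
    have hmem : max x 0 ∈ closure ((fun y : ℝ => max y 0) '' Set.range ((↑) : ℚ → ℝ)) := by
      have hcont : Continuous (fun y : ℝ => max y 0) := continuous_id.max continuous_const
      exact (image_closure_subset_closure_image hcont) ⟨x, hxd, rfl⟩
    rw [this]
    refine closure_mono ?_ hmem
    rintro y ⟨z, ⟨q, rfl⟩, rfl⟩
    obtain ⟨m, rfl⟩ := he q
    exact ⟨m.succ, rfl⟩

lemma aux_ub_eq {f : ℝ → ℝ} (hf : Continuous f) {u : ℕ → ℝ} (hu : ∀ n, 0 ≤ u n)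
    (hd : Ici (0:ℝ) ⊆ closure (Set.range u)) :
    upperBounds (f '' Ici 0) = upperBounds (Set.range (fun n => f (u n))) := by
  apply le_antisymm
  · apply upperBounds_mono_set
    rintro y ⟨n, rfl⟩; exact ⟨u n, hu n, rfl⟩
  · intro b hb
    rintro y ⟨x, hx, rfl⟩
    have hclosed : IsClosed {z : ℝ | f z ≤ b} := isClosed_le hf continuous_const
    have : Set.range u ⊆ {z : ℝ | f z ≤ b} := by
      rintro z ⟨n, rfl⟩; exact hb ⟨n, rfl⟩
    exact (hclosed.closure_subset_iff.2 this) (hd hx)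

lemma aux_isLUB_smul {c : ℝ} (hc : 0 < c) {s : Set ℝ} {a : ℝ} (h : IsLUB s a) :
    IsLUB ((fun x => c * x) '' s) (c * a) := by
  constructor
  · rintro y ⟨x, hx, rfl⟩
    exact mul_le_mul_of_nonneg_left (h.1 hx) hc.le
  · intro b hb
    have : a ≤ b / c := by
      apply h.2
      intro x hx
      rw [le_div_iff₀ hc, mul_comm]
      exact hb ⟨x, hx, rfl⟩
    calc c * a ≤ c * (b / c) := mul_le_mul_of_nonneg_left this hc.le
      _ = b := by field_simp

lemma aux_minorant {φ : ℝ → ℝ} (hconv : ConvexOn ℝ (Set.Ici 0) φ)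
    (hclosed : ContinuousOn φ (Set.Ici 0)) (hφ1 : φ 1 = 0) :
    ∃ C K : ℝ, 0 ≤ C ∧ 0 ≤ K ∧ ∀ t, 0 ≤ t → -C - K * t ≤ φ t := by
  obtain ⟨m, hm, hmin⟩ : ∃ m ∈ Icc (0:ℝ) 2, IsMinOn φ (Icc 0 2) m := by
    apply IsCompact.exists_isMinOn isCompact_Icc ⟨0, by norm_num⟩
    exact hclosed.mono (fun x hx => hx.1)
  refine ⟨|φ m|, |φ 2|, abs_nonneg _, abs_nonneg _, fun t ht => ?_⟩
  rcases le_or_gt t 2 with h2 | h2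
  · have h0 : φ m ≤ φ t := hmin ⟨ht, h2⟩
    have h1 : -|φ m| ≤ φ m := neg_abs_le _
    have h3 : 0 ≤ |φ 2| * t := mul_nonneg (abs_nonneg _) ht
    linarith
  · have ht1 : (0:ℝ) < t - 1 := by linarith
    have key : φ 2 ≤ ((t-2)/(t-1)) * φ 1 + (1/(t-1)) * φ t := by
      have h := hconv.2 (mem_Ici.2 (by norm_num : (0:ℝ) ≤ 1)) (mem_Ici.2 (by linarith : (0:ℝ) ≤ t))
        (div_nonneg (by linarith) (by linarith) : (0:ℝ) ≤ (t-2)/(t-1))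
        (by positivity : (0:ℝ) ≤ 1/(t-1))
        (by field_simp; ring)
      simp only [smul_eq_mul] at h
      have heq : (t-2)/(t-1) * (1:ℝ) + (1/(t-1)) * t = 2 := by
        field_simp; ring
      rw [heq] at h
      exact h
    rw [hφ1, mul_zero, zero_add, one_div] at key
    have h3 : φ 2 * (t - 1) ≤ φ t := by
      rw [← le_div_iff₀ ht1, div_eq_inv_mul]
      exact key
    have h4 : -|φ 2| * (t - 1) ≤ φ 2 * (t-1) :=
      mul_le_mul_of_nonneg_right (neg_abs_le _) (by linarith)
    have h5 : -|φ m| ≤ (0:ℝ) := neg_nonpos_of_nonneg (abs_nonneg _)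
    nlinarith [abs_nonneg (φ 2)]

open scoped ENNReal NNReal

lemma aux_dual_branch {W : Type*} [MeasurableSpace W] (P : Measure W) [IsProbabilityMeasure P]
    (φ φc : ℝ → ℝ) (hφc : Continuous φc) (hφeq : ∀ t, 0 ≤ t → φc t = φ t)
    (g : W → ℝ) (hg : Measurable g) (M : ℝ) (hgbdd : ∀ w, |g w| ≤ M)
    (lam η B : ℝ) (hlam : 0 < lam)
    (master : ∀ L : W → ℝ, Measurable L → (∀ w, 0 ≤ L w) → Integrable L P →
      Integrable (fun w => φc (L w)) P →
      ∫ w, ((g w - η) * L w - lam * φc (L w)) ∂P ≤ B) :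
    (∀ᵐ w ∂P, BddAbove ((fun t => ((g w - η) / lam) * t - φ t) '' Set.Ici 0)) ∧
    Integrable (fun w => sSup ((fun t => ((g w - η) / lam) * t - φ t) '' Set.Ici 0)) P ∧
    ∫ w, sSup ((fun t => ((g w - η) / lam) * t - φ t) '' Set.Ici 0) ∂P ≤ B / lam := by
  classical
  obtain ⟨u, hu0, hunn, hud⟩ := aux_dense_u
  set s : W → ℝ := fun w => g w - η with hs_def
  have hs_meas : Measurable s := hg.sub measurable_const
  have hs_bdd : ∀ w, |s w| ≤ M + |η| := by
    intro w
    calc |s w| ≤ |g w| + |η| := abs_sub _ _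
      _ ≤ M + |η| := by linarith [hgbdd w]
  -- recursively defined approximate maximizers
  let L : ℕ → W → ℝ := fun n => n.rec (fun _ => u 0)
    (fun k Lk w => if s w * u (k+1) - lam * φc (u (k+1)) ≤ s w * Lk w - lam * φc (Lk w)
      then Lk w else u (k+1))
  set G : ℕ → W → ℝ := fun k w => s w * L k w - lam * φc (L k w) with hG_def
  have hLsucc : ∀ k w, L (k+1) w =
      if s w * u (k+1) - lam * φc (u (k+1)) ≤ G k w then L k w else u (k+1) := fun k w => rfl
  have hL0 : ∀ w, L 0 w = u 0 := fun w => rfl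
  -- basic properties of L
  have hLprop : ∀ k, Measurable (L k) ∧ (∀ w, 0 ≤ L k w) ∧ Integrable (L k) P ∧
      Integrable (fun w => φc (L k w)) P ∧ (∀ w, ∃ n, L k w = u n) := by
    intro k
    induction k with
    | zero =>
      refine ⟨measurable_const, fun w => hunn 0, integrable_const _, ?_, fun w => ⟨0, rfl⟩⟩
      exact (integrable_const (φc (u 0)) : Integrable (fun _ : W => φc (u 0)) P)
    | succ k ih =>
      obtain ⟨hm, hnn, hint, hintφ, hrange⟩ := ih
      have hGm : Measurable (G k) := (hs_meas.mul hm).sub ((hφc.measurable.comp hm).const_mul lam)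
      have hcond : MeasurableSet {w | s w * u (k+1) - lam * φc (u (k+1)) ≤ G k w} :=
        measurableSet_le ((hs_meas.mul measurable_const).sub measurable_const) hGm
      have hpw : L (k+1) = Set.piecewise {w | s w * u (k+1) - lam * φc (u (k+1)) ≤ G k w}
          (L k) (fun _ => u (k+1)) := by
        funext w
        rw [hLsucc k w]
        simp only [Set.piecewise, mem_setOf_eq]
      refine ⟨?_, ?_, ?_, ?_, ?_⟩
      · rw [hpw]; exact Measurable.piecewise hcond hm measurable_const
      · intro w; rw [hLsucc k w]; split_ifs
        · exact hnn w
        · exact hunn (k+1)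
      · rw [hpw]; exact Integrable.piecewise hcond hint.integrableOn
          (integrable_const _).integrableOn
      · have : (fun w => φc (L (k+1) w)) =
            Set.piecewise {w | s w * u (k+1) - lam * φc (u (k+1)) ≤ G k w}
            (fun w => φc (L k w)) (fun _ => φc (u (k+1))) := by
          funext w
          rw [hLsucc k w]
          simp only [Set.piecewise, mem_setOf_eq]
          split_ifs <;> rfl
        rw [this]
        exact Integrable.piecewise hcond hintφ.integrableOn (integrable_const _).integrableOn
      · intro w; rw [hLsucc k w]; split_ifs
        · exact hrange w
        · exact ⟨k+1, rfl⟩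
  -- G properties
  have hGmono : ∀ k w, G k w ≤ G (k+1) w := by
    intro k w
    show s w * L (k+1) w - lam * φc (L (k+1) w) ≥ G k w
    rw [hLsucc k w]
    split_ifs with h
    · exact le_refl _
    · push_neg at h; exact h.le
  have hGmono' : ∀ k k', k ≤ k' → ∀ w, G k w ≤ G k' w := by
    intro k k' hk w
    induction k' with
    | zero => rw [Nat.le_zero.mp hk]
    | succ m ih =>
      rcases Nat.lt_or_ge k (m+1) with h | h
      · exact le_trans (ih (Nat.lt_succ_iff.mp h)) (hGmono m w)
      · rw [le_antisymm hk h]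
  have hvG : ∀ k n, n ≤ k → ∀ w, s w * u n - lam * φc (u n) ≤ G k w := by
    intro k
    induction k with
    | zero =>
      intro n hn w
      rw [Nat.le_zero.mp hn]
      show s w * u 0 - lam * φc (u 0) ≤ s w * L 0 w - lam * φc (L 0 w)
      rw [hL0 w]
    | succ k ih =>
      intro n hn w
      rcases Nat.lt_or_ge n (k+1) with h | h
      · exact le_trans (ih n (Nat.lt_succ_iff.mp h) w) (hGmono k w)
      · have hn' : n = k + 1 := le_antisymm hn h
        rw [hn']
        show s w * u (k+1) - lam * φc (u (k+1)) ≤ s w * L (k+1) w - lam * φc (L (k+1) w)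
        rw [hLsucc k w]
        split_ifs with h'
        · exact h'
        · exact le_refl _
  set c0 : ℝ := -(lam * φc 0) with hc0_def
  have hG0 : ∀ w, G 0 w = c0 := by
    intro w; rw [hG_def]; simp only [hL0 w, hu0, mul_zero, zero_sub, hc0_def]
  have hGc0 : ∀ k w, c0 ≤ G k w := by
    intro k w
    rw [← hG0 w]; exact hGmono' 0 k (Nat.zero_le k) w
  -- integrability of G k and the master bound
  have hGint : ∀ k, Integrable (G k) P := by
    intro k
    obtain ⟨hm, hnn, hint, hintφ, _⟩ := hLprop k
    refine Integrable.sub ?_ (hintφ.const_mul lam)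
    exact hint.bdd_mul (c := M + |η|) hs_meas.aestronglyMeasurable
      (Filter.Eventually.of_forall fun w => hs_bdd w)
  have hGB : ∀ k, ∫ w, G k w ∂P ≤ B := by
    intro k
    obtain ⟨hm, hnn, hint, hintφ, _⟩ := hLprop k
    exact master (L k) hm hnn hint hintφ
  -- the ENNReal-valued envelope
  set H : W → ℝ≥0∞ := fun w => ⨆ k, ENNReal.ofReal (G k w - c0) with hH_def
  have hGmeas : ∀ k, Measurable (G k) := fun k =>
    (hs_meas.mul (hLprop k).1).sub ((hφc.measurable.comp (hLprop k).1).const_mul lam)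
  have hHmeas : Measurable H := by
    apply Measurable.iSup
    intro k
    exact ((hGmeas k).sub measurable_const).ennreal_ofReal
  have hc0B : c0 ≤ B := by
    have := hGB 0
    have h0 : ∫ w, G 0 w ∂P = c0 := by
      rw [show (fun w => G 0 w) = fun _ : W => c0 from funext hG0]
      simp [measure_univ]
    linarith [h0 ▸ this]
  have hHlint : ∫⁻ w, H w ∂P ≤ ENNReal.ofReal (B - c0) := by
    rw [hH_def]
    beta_reduce
    rw [lintegral_iSup (f := fun k w => ENNReal.ofReal (G k w - c0)) (fun k => ((hGmeas k).sub measurable_const).ennreal_ofReal)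
      (fun k k' hkk' w => ENNReal.ofReal_le_ofReal (by linarith [hGmono' k k' hkk' w]))]
    apply iSup_le
    intro k
    have hint' : Integrable (fun w => G k w - c0) P := (hGint k).sub (integrable_const c0)
    rw [← ofReal_integral_eq_lintegral_ofReal hint'
      (Filter.Eventually.of_forall fun w => by
        show (0:ℝ) ≤ G k w - c0
        linarith [hGc0 k w])]
    apply ENNReal.ofReal_le_ofReal
    rw [integral_sub (hGint k) (integrable_const c0)]
    simp only [integral_const, probReal_univ, ENNReal.toReal_one, one_smul, smul_eq_mul]
    linarith [hGB k]
  have hHfin : ∀ᵐ w ∂P, H w < ⊤ :=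
    ae_lt_top hHmeas (lt_of_le_of_lt hHlint ENNReal.ofReal_lt_top).ne
  have hHint : Integrable (fun w => (H w).toReal) P :=
    integrable_toReal_of_lintegral_ne_top hHmeas.aemeasurable
      (lt_of_le_of_lt hHlint ENNReal.ofReal_lt_top).ne
  have hHintle : ∫ w, (H w).toReal ∂P ≤ B - c0 := by
    rw [integral_toReal hHmeas.aemeasurable hHfin]
    exact ENNReal.toReal_le_of_le_ofReal (by linarith) hHlint
  -- pointwise identification of the sSup
  have hpt : ∀ w, H w < ⊤ →
      IsLUB ((fun t => ((g w - η) / lam) * t - φ t) '' Set.Ici 0)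
        ((1 / lam) * ((H w).toReal + c0)) := by
    intro w hw
    set fw : ℝ → ℝ := fun t => s w * t - lam * φc t with hfw_def
    have hfw_cont : Continuous fw :=
      (continuous_const.mul continuous_id).sub (continuous_const.mul hφc)
    have hvn : ∀ n, fw (u n) = s w * u n - lam * φc (u n) := fun n => rfl
    -- IsLUB over the countable range
    have hub : IsLUB (Set.range (fun n => fw (u n))) ((H w).toReal + c0) := by
      constructor
      · rintro y ⟨n, rfl⟩
        have h1 : ENNReal.ofReal (fw (u n) - c0) ≤ H w := by
          calc ENNReal.ofReal (fw (u n) - c0) ≤ ENNReal.ofReal (G n w - c0) :=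
              ENNReal.ofReal_le_ofReal (by rw [hvn n]; linarith [hvG n n le_rfl w])
            _ ≤ H w := le_iSup (fun k => ENNReal.ofReal (G k w - c0)) n
        rcases le_or_gt (fw (u n)) c0 with h | h
        · have : (0:ℝ) ≤ (H w).toReal := ENNReal.toReal_nonneg
          linarith
        · have h2 : fw (u n) - c0 = (ENNReal.ofReal (fw (u n) - c0)).toReal := by
            rw [ENNReal.toReal_ofReal (by linarith)]
          have h3 : (ENNReal.ofReal (fw (u n) - c0)).toReal ≤ (H w).toReal :=
            ENNReal.toReal_mono hw.ne h1
          linarith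
      · intro b hb
        have hb0 : c0 ≤ b := by
          have := hb (Set.mem_range_self 0)
          rw [hvn 0, hu0] at this
          simpa using this
        have hHb : H w ≤ ENNReal.ofReal (b - c0) := by
          apply iSup_le
          intro k
          apply ENNReal.ofReal_le_ofReal
          obtain ⟨n, hn⟩ := (hLprop k).2.2.2.2 w
          have hGkval : G k w = fw (u n) := by
            show s w * L k w - lam * φc (L k w) = _
            rw [hn]
          have := hb (Set.mem_range_self n)
          linarith [hGkval ▸ this]
        have h4 : (H w).toReal ≤ (ENNReal.ofReal (b - c0)).toReal :=
          ENNReal.toReal_mono ENNReal.ofReal_ne_top hHb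
        have h5 : (ENNReal.ofReal (b - c0)).toReal = b - c0 :=
          ENNReal.toReal_ofReal (by linarith)
        linarith
    -- transfer to the image over Ici 0
    have hubeq := aux_ub_eq hfw_cont hunn hud
    have hlub2 : IsLUB (fw '' Set.Ici 0) ((H w).toReal + c0) := by
      rw [IsLUB, IsLeast, hubeq]
      rw [IsLUB, IsLeast] at hub
      exact hub
    have himg : ((fun t => ((g w - η) / lam) * t - φ t) '' Set.Ici 0) =
        (fun x => (1 / lam) * x) '' (fw '' Set.Ici 0) := by
      rw [Set.image_image]
      apply Set.image_congr
      intro t ht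
      rw [← hφeq t ht]
      show (g w - η) / lam * t - φc t = 1 / lam * (s w * t - lam * φc t)
      rw [hs_def]
      field_simp
    rw [himg]
    exact aux_isLUB_smul (by positivity) hlub2
  have hae : ∀ᵐ w ∂P,
      BddAbove ((fun t => ((g w - η) / lam) * t - φ t) '' Set.Ici 0) ∧
      sSup ((fun t => ((g w - η) / lam) * t - φ t) '' Set.Ici 0)
        = (1 / lam) * ((H w).toReal + c0) := by
    filter_upwards [hHfin] with w hw
    have h := hpt w hw
    refine ⟨⟨_, h.1⟩, ?_⟩
    exact h.csSup_eq ⟨_, Set.mem_image_of_mem _ (Set.self_mem_Ici)⟩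
  have haeBdd : ∀ᵐ w ∂P, BddAbove ((fun t => ((g w - η) / lam) * t - φ t) '' Set.Ici 0) :=
    hae.mono fun w hw => hw.1
  have haeSup : (fun w => sSup ((fun t => ((g w - η) / lam) * t - φ t) '' Set.Ici 0))
      =ᵐ[P] fun w => (1 / lam) * ((H w).toReal + c0) :=
    hae.mono fun w hw => hw.2
  have hint2 : Integrable (fun w => (1 / lam) * ((H w).toReal + c0)) P :=
    (hHint.add (integrable_const c0)).const_mul (1 / lam)
  refine ⟨haeBdd, hint2.congr haeSup.symm, ?_⟩
  rw [integral_congr_ae haeSup]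
  rw [integral_const_mul, integral_add hHint (integrable_const c0)]
  simp only [integral_const, probReal_univ, ENNReal.toReal_one, one_smul, smul_eq_mul]
  have h1lam : (0:ℝ) ≤ 1 / lam := by positivity
  have hkey : 1 / lam * (∫ w, (H w).toReal ∂P + c0) ≤ 1 / lam * B :=
    mul_le_mul_of_nonneg_left (by linarith) h1lam
  have hBlam : 1 / lam * B = B / lam := by ring
  linarith

lemma aux_sandwich {W : Type*} [MeasurableSpace W] {P : Measure W}
    {f lo hi : W → ℝ} (hf : AEStronglyMeasurable f P) (hlo : Integrable lo P)
    (hhi : Integrable hi P) (h1 : ∀ w, lo w ≤ f w) (h2 : ∀ w, f w ≤ hi w) :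
    Integrable f P := by
  have hint : Integrable (fun w => |lo w| + |hi w|) P := hlo.abs.add hhi.abs
  apply Integrable.mono' hint hf
  apply Filter.Eventually.of_forall
  intro w
  rw [Real.norm_eq_abs, abs_le]
  have ha := neg_abs_le (lo w)
  have hb := le_abs_self (hi w)
  have hc : (0:ℝ) ≤ |hi w| := abs_nonneg _
  have hd : (0:ℝ) ≤ |lo w| := abs_nonneg _
  exact ⟨by linarith [h1 w], by linarith [h2 w]⟩

lemma aux_weak {W : Type*} [MeasurableSpace W] (P : Measure W) [IsProbabilityMeasure P]
    (φ : ℝ → ℝ) (ρ : ℝ) (g : W → ℝ) (hg : Measurable g) (M : ℝ) (hgbdd : ∀ w, |g w| ≤ M)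
    (Q : Measure W) (hQprob : IsProbabilityMeasure Q) (hQP : Q ≪ P)
    (hQφint : Integrable (fun w => φ (Q.rnDeriv P w).toReal) P)
    (hQφle : (∫ w, φ (Q.rnDeriv P w).toReal ∂P) ≤ ρ)
    (lam : ℝ) (hlam : 0 < lam) (η : ℝ)
    (hBdd : ∀ᵐ w ∂P, BddAbove ((fun t => ((g w - η) / lam) * t - φ t) '' Set.Ici 0))
    (hIint : Integrable
      (fun w => sSup ((fun t => ((g w - η) / lam) * t - φ t) '' Set.Ici 0)) P) :
    ∫ w, g w ∂Q ≤
      lam * (∫ w, sSup ((fun t => ((g w - η) / lam) * t - φ t) '' Set.Ici 0) ∂P)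
        + ρ * lam + η := by
  set L : W → ℝ := fun w => (Q.rnDeriv P w).toReal with hL_def
  have hL_meas : Measurable L := (Measure.measurable_rnDeriv Q P).ennreal_toReal
  have hL_nn : ∀ w, 0 ≤ L w := fun w => ENNReal.toReal_nonneg
  have hL_int : Integrable L P := Measure.integrable_toReal_rnDeriv
  have hL_one : ∫ w, L w ∂P = 1 := by
    rw [hL_def, Measure.integral_toReal_rnDeriv hQP]
    simp [measure_univ]
  have hgQ : ∫ w, g w ∂Q = ∫ w, g w * L w ∂P := by
    rw [← integral_rnDeriv_smul hQP (f := g)]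
    congr 1
    funext w
    rw [smul_eq_mul, mul_comm]
  have hgL_int : Integrable (fun w => g w * L w) P :=
    hL_int.bdd_mul (c := M) hg.aestronglyMeasurable
      (Filter.Eventually.of_forall fun w => by
        rw [Real.norm_eq_abs]; exact hgbdd w)
  have hAB : Integrable (fun w => (1 / lam) * (g w * L w) - (η / lam) * L w) P :=
    (hgL_int.const_mul _).sub (hL_int.const_mul _)
  have heq : (fun w => ((g w - η) / lam) * L w - φ (L w)) =
      fun w => ((1 / lam) * (g w * L w) - (η / lam) * L w) - φ (L w) := by
    funext w; field_simp
  have hA1_int : Integrable (fun w => ((g w - η) / lam) * L w - φ (L w)) P := by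
    rw [heq]; exact hAB.sub hQφint
  have hptwise : ∀ᵐ w ∂P, ((g w - η) / lam) * L w - φ (L w) ≤
      sSup ((fun t => ((g w - η) / lam) * t - φ t) '' Set.Ici 0) := by
    filter_upwards [hBdd] with w hw
    exact le_csSup hw (Set.mem_image_of_mem _ (hL_nn w))
  have hmono := integral_mono_ae hA1_int hIint hptwise
  have hsplit : ∫ w, (((g w - η) / lam) * L w - φ (L w)) ∂P =
      (1 / lam) * ∫ w, g w * L w ∂P - (η / lam) * ∫ w, L w ∂P - ∫ w, φ (L w) ∂P := by
    rw [heq, integral_sub hAB hQφint,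
      integral_sub (hgL_int.const_mul _) (hL_int.const_mul _),
      integral_const_mul, integral_const_mul]
  rw [hsplit, hL_one] at hmono
  set I := ∫ w, sSup ((fun t => ((g w - η) / lam) * t - φ t) '' Set.Ici 0) ∂P
  rw [hgQ]
  have h2 : ∫ w, φ (L w) ∂P ≤ ρ := hQφle
  have h3 : lam * ((1 / lam) * ∫ w, g w * L w ∂P) = ∫ w, g w * L w ∂P := by
    field_simp
  have h4 : lam * ((η / lam) * 1) = η := by field_simp
  nlinarith [mul_le_mul_of_nonneg_left hmono hlam.le, mul_le_mul_of_nonneg_left h2 hlam.le]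

lemma aux_subset_closure_interior {E : Type*} [AddCommGroup E] [Module ℝ E]
    [TopologicalSpace E] [IsTopologicalAddGroup E] [ContinuousSMul ℝ E]
    {A : Set E} (hA : Convex ℝ A) {y : E} (hy : y ∈ interior A) :
    A ⊆ closure (interior A) := by
  intro x hx
  have hseq : Filter.Tendsto (fun n : ℕ => (1 / ((n:ℝ) + 1) : ℝ)) Filter.atTop (nhds 0) :=
    tendsto_one_div_add_atTop_nhds_zero_nat
  have hcont : Continuous (fun θ : ℝ => θ • y + (1 - θ) • x) := by continuity
  have hlim : Filter.Tendsto
      (fun n : ℕ => (1 / ((n:ℝ) + 1)) • y + ((1:ℝ) - 1 / ((n:ℝ) + 1)) • x)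
      Filter.atTop (nhds x) := by
    have h0 : (fun n : ℕ => (1 / ((n:ℝ) + 1)) • y + ((1:ℝ) - 1 / ((n:ℝ) + 1)) • x) =
        (fun θ : ℝ => θ • y + (1 - θ) • x) ∘ (fun n : ℕ => (1 / ((n:ℝ) + 1) : ℝ)) := rfl
    rw [h0]
    have := (hcont.tendsto 0).comp hseq
    simpa using this
  apply mem_closure_of_tendsto hlim
  apply Filter.Eventually.of_forall
  intro n
  have hpos : (0:ℝ) < 1 / ((n:ℝ) + 1) := by positivity
  have hle : (1:ℝ) / ((n:ℝ) + 1) ≤ 1 := by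
    rw [div_le_one (by positivity)]
    linarith [Nat.cast_nonneg (α := ℝ) n]
  exact hA.combo_interior_self_mem_interior hy hx hpos (by linarith) (by ring)

/-- Duality for φ-divergence-constrained distributionally robust optimization
(Ben-Tal et al.): for a closed convex `φ` with domain contained in `[0,∞)` and
`φ(1) = 0`, a probability measure `P` and a bounded measurable `g`,
`sup {∫ g dQ : Q ≪ P, D_φ(Q‖P) ≤ ρ}
  = inf_{λ ≥ 0, η} { λ ∫ φ*((g - η)/λ) dP + ρλ + η }`.
Here `φ*(s) = sup_{t ≥ 0} (st - φ(t))` appears as `sSup ((fun t => s*t - φ t) '' Ici 0)`;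
the `λ > 0` branch is restricted to pairs where the integrand is (a.e.) finite and
integrable (otherwise the dual objective is `+∞`), and the `λ = 0` branch carries the
perspective-function value, which equals `η` exactly when `g ≤ η` `P`-a.e. (and is
`+∞` otherwise, since `dom φ ⊆ [0,∞)`). -/
theorem stmt2 {W : Type*} [MeasurableSpace W] (P : Measure W) [IsProbabilityMeasure P]
    (φ : ℝ → ℝ) (hconv : ConvexOn ℝ (Set.Ici 0) φ)
    (hclosed : ContinuousOn φ (Set.Ici 0)) (hφ1 : φ 1 = 0)
    (ρ : ℝ) (hρ : 0 < ρ)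
    (g : W → ℝ) (hg : Measurable g) (M : ℝ) (hgbdd : ∀ w, |g w| ≤ M) :
    sSup {v : ℝ | ∃ Q : Measure W, IsProbabilityMeasure Q ∧ Q ≪ P ∧
        Integrable (fun w => φ (Q.rnDeriv P w).toReal) P ∧
        (∫ w, φ (Q.rnDeriv P w).toReal ∂P) ≤ ρ ∧
        v = ∫ w, g w ∂Q} =
      sInf {v : ℝ |
        (∃ lam : ℝ, 0 < lam ∧ ∃ η : ℝ,
          (∀ᵐ w ∂P,
            BddAbove ((fun t => ((g w - η) / lam) * t - φ t) '' Set.Ici 0)) ∧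
          Integrable
            (fun w => sSup ((fun t => ((g w - η) / lam) * t - φ t) '' Set.Ici 0)) P ∧
          v = lam * (∫ w, sSup ((fun t => ((g w - η) / lam) * t - φ t) '' Set.Ici 0) ∂P)
              + ρ * lam + η) ∨
        (∃ η : ℝ, (∀ᵐ w ∂P, g w ≤ η) ∧ v = η)} := by
  classical
  set Sst : Set ℝ := {v : ℝ | ∃ Q : Measure W, IsProbabilityMeasure Q ∧ Q ≪ P ∧
        Integrable (fun w => φ (Q.rnDeriv P w).toReal) P ∧
        (∫ w, φ (Q.rnDeriv P w).toReal ∂P) ≤ ρ ∧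
        v = ∫ w, g w ∂Q} with hSst_def
  set Tst : Set ℝ := {v : ℝ |
        (∃ lam : ℝ, 0 < lam ∧ ∃ η : ℝ,
          (∀ᵐ w ∂P,
            BddAbove ((fun t => ((g w - η) / lam) * t - φ t) '' Set.Ici 0)) ∧
          Integrable
            (fun w => sSup ((fun t => ((g w - η) / lam) * t - φ t) '' Set.Ici 0)) P ∧
          v = lam * (∫ w, sSup ((fun t => ((g w - η) / lam) * t - φ t) '' Set.Ici 0) ∂P)
              + ρ * lam + η) ∨
        (∃ η : ℝ, (∀ᵐ w ∂P, g w ≤ η) ∧ v = η)} with hTst_def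
  -- the continuous extension of φ
  set φc : ℝ → ℝ := fun x => φ (max x 0) with hφc_def
  have hφc_cont : Continuous φc :=
    hclosed.comp_continuous (continuous_id.max continuous_const)
      (fun x => mem_Ici.2 (le_max_right x 0))
  have hφeq : ∀ t : ℝ, 0 ≤ t → φc t = φ t := by
    intro t ht
    rw [hφc_def]
    simp [max_eq_left ht]
  have hφc1 : φc 1 = 0 := by rw [hφeq 1 zero_le_one]; exact hφ1
  obtain ⟨C, K, hC, hK, hmino⟩ := aux_minorant hconv hclosed hφ1
  have hminoc : ∀ t, 0 ≤ t → -C - K * t ≤ φc t := by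
    intro t ht; rw [hφeq t ht]; exact hmino t ht
  -- P itself is feasible
  have hSmem : (∫ w, g w ∂P) ∈ Sst := by
    rw [hSst_def]
    refine ⟨P, inferInstance, Measure.AbsolutelyContinuous.rfl, ?_, ?_, rfl⟩
    · apply (integrable_const (0:ℝ)).congr
      filter_upwards [Measure.rnDeriv_self P] with w hw
      rw [hw]; simp [hφ1]
    · have : (fun w => φ (P.rnDeriv P w).toReal) =ᵐ[P] fun _ => (0:ℝ) := by
        filter_upwards [Measure.rnDeriv_self P] with w hw
        rw [hw]; simp [hφ1]
      rw [integral_congr_ae this]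
      simp [hρ.le]
  have hSne : Sst.Nonempty := ⟨_, hSmem⟩
  have hSub : ∀ v ∈ Sst, v ≤ M := by
    rintro v ⟨Q, hQprob, hQP, hQint, hQle, rfl⟩
    haveI := hQprob
    have h := norm_integral_le_of_norm_le_const (μ := Q) (f := g) (C := M)
      (Filter.Eventually.of_forall fun w => by rw [Real.norm_eq_abs]; exact hgbdd w)
    rw [probReal_univ] at h
    simp only [ENNReal.toReal_one, mul_one] at h
    calc ∫ w, g w ∂Q ≤ ‖∫ w, g w ∂Q‖ := le_abs_self _
      _ ≤ M := h
  have hSbdd : BddAbove Sst := ⟨M, fun v hv => hSub v hv⟩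
  -- weak duality
  have hweak : ∀ u ∈ Tst, ∀ v ∈ Sst, v ≤ u := by
    rintro u hu v ⟨Q, hQprob, hQP, hQint, hQle, rfl⟩
    haveI := hQprob
    rw [hTst_def] at hu
    rcases hu with ⟨lam, hlam, η, hBdd, hIint, hueq⟩ | ⟨η, hη, hueq⟩
    · rw [hueq]
      exact aux_weak P φ ρ g hg M hgbdd Q hQprob hQP hQint hQle lam hlam η hBdd hIint
    · rw [hueq]
      have hgint : Integrable g Q := by
        apply Integrable.mono' (integrable_const M) hg.aestronglyMeasurable
        exact Filter.Eventually.of_forall fun w => by rw [Real.norm_eq_abs]; exact hgbdd w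
      have hδ : ∀ᵐ w ∂Q, g w ≤ η := hη.filter_mono hQP.ae_le
      calc ∫ w, g w ∂Q ≤ ∫ _, η ∂Q := integral_mono_ae hgint (integrable_const η) hδ
        _ = η := by simp [measure_univ]
  have hTne : Tst.Nonempty := by
    refine ⟨M, ?_⟩
    rw [hTst_def]
    exact Or.inr ⟨M, Filter.Eventually.of_forall fun w => (abs_le.mp (hgbdd w)).2, rfl⟩
  have hTbdd : BddBelow Tst := ⟨∫ w, g w ∂P, fun u hu => hweak u hu _ hSmem⟩
  apply le_antisymm
  · exact csSup_le hSne fun v hv => le_csInf hTne fun u hu => hweak u hu v hv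
  -- strong duality
  · apply le_of_forall_pos_le_add
    intro ε hε
    set V : ℝ := sSup Sst with hV_def
    -- the convex "achievable" set in ℝ³
    set A : Set (ℝ × ℝ × ℝ) := {x | ∃ L : W → ℝ, Measurable L ∧ (∀ w, 0 ≤ L w) ∧
      Integrable L P ∧ Integrable (fun w => φc (L w)) P ∧ x.1 = ∫ w, L w ∂P ∧
      (∫ w, φc (L w) ∂P) ≤ x.2.1 ∧ x.2.2 ≤ ∫ w, g w * L w ∂P} with hA_def
    have hmemA : ∀ (L : W → ℝ), Measurable L → (∀ w, 0 ≤ L w) → Integrable L P →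
        Integrable (fun w => φc (L w)) P →
        ((∫ w, L w ∂P, ∫ w, φc (L w) ∂P, ∫ w, g w * L w ∂P) : ℝ × ℝ × ℝ) ∈ A :=
      fun L hm hnn hint hintφ => ⟨L, hm, hnn, hint, hintφ, rfl, le_refl _, le_refl _⟩
    have hconst_facts : ∀ a : ℝ, (∫ w, (fun _ : W => a) w ∂P) = a ∧
        (∫ w, φc ((fun _ : W => a) w) ∂P) = φc a ∧
        (∫ w, g w * (fun _ : W => a) w ∂P) = (∫ w, g w ∂P) * a := by
      intro a
      refine ⟨by simp [measure_univ], by simp [measure_univ], ?_⟩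
      rw [integral_mul_const]
    have hconst_mem : ∀ a : ℝ, 0 ≤ a →
        ((a, φc a, (∫ w, g w ∂P) * a) : ℝ × ℝ × ℝ) ∈ A := by
      intro a ha
      obtain ⟨h1, h2, h3⟩ := hconst_facts a
      have := hmemA (fun _ => a) measurable_const (fun _ => ha)
        (integrable_const a) (integrable_const (φc a))
      rw [h1, h2, h3] at this
      exact this
    have hslack_mem : ∀ a b c : ℝ, 0 ≤ a → φc a ≤ b → c ≤ (∫ w, g w ∂P) * a →
        ((a, b, c) : ℝ × ℝ × ℝ) ∈ A := by
      intro a b c ha hb hc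
      obtain ⟨h1, h2, h3⟩ := hconst_facts a
      exact ⟨fun _ => a, measurable_const, fun _ => ha, integrable_const a,
        integrable_const (φc a), by rw [h1], by rw [h2]; exact hb, by rw [h3]; exact hc⟩
    have hAconv : Convex ℝ A := by
      rintro x ⟨L1, hm1, hnn1, hi1, hiφ1, hx1, hx2, hx3⟩
        y ⟨L2, hm2, hnn2, hi2, hiφ2, hy1, hy2, hy3⟩ a b ha hb hab
      set L3 : W → ℝ := fun w => a * L1 w + b * L2 w with hL3_def
      have hm3 : Measurable L3 := (hm1.const_mul a).add (hm2.const_mul b)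
      have hnn3 : ∀ w, 0 ≤ L3 w := fun w =>
        add_nonneg (mul_nonneg ha (hnn1 w)) (mul_nonneg hb (hnn2 w))
      have hi3 : Integrable L3 P := (hi1.const_mul a).add (hi2.const_mul b)
      have hφub : ∀ w, φc (L3 w) ≤ a * φc (L1 w) + b * φc (L2 w) := by
        intro w
        have h := hconv.2 (mem_Ici.2 (hnn1 w)) (mem_Ici.2 (hnn2 w)) ha hb hab
        simp only [smul_eq_mul] at h
        rw [hφeq _ (hnn3 w), hφeq _ (hnn1 w), hφeq _ (hnn2 w)]
        exact h
      have hφlb : ∀ w, -C + (-K) * L3 w ≤ φc (L3 w) := by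
        intro w
        have := hminoc (L3 w) (hnn3 w)
        linarith
      have hiφ3 : Integrable (fun w => φc (L3 w)) P := by
        apply aux_sandwich (lo := fun w => -C + (-K) * L3 w)
          (hi := fun w => a * φc (L1 w) + b * φc (L2 w))
          (hφc_cont.measurable.comp hm3).aestronglyMeasurable
          ((integrable_const (-C)).add (hi3.const_mul (-K)))
          ((hiφ1.const_mul a).add (hiφ2.const_mul b)) hφlb hφub
      refine ⟨L3, hm3, hnn3, hi3, hiφ3, ?_, ?_, ?_⟩
      · show (a • x + b • y).1 = _
        have : ∫ w, L3 w ∂P = a * ∫ w, L1 w ∂P + b * ∫ w, L2 w ∂P := by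
          rw [hL3_def]
          rw [integral_add (hi1.const_mul a) (hi2.const_mul b),
            integral_const_mul, integral_const_mul]
        rw [this, ← hx1, ← hy1]
        simp [smul_eq_mul]
      · show _ ≤ (a • x + b • y).2.1
        have h1 : ∫ w, φc (L3 w) ∂P ≤ ∫ w, (a * φc (L1 w) + b * φc (L2 w)) ∂P :=
          integral_mono hiφ3 ((hiφ1.const_mul a).add (hiφ2.const_mul b)) hφub
        have h2 : ∫ w, (a * φc (L1 w) + b * φc (L2 w)) ∂P =
            a * ∫ w, φc (L1 w) ∂P + b * ∫ w, φc (L2 w) ∂P := by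
          rw [integral_add (hiφ1.const_mul a) (hiφ2.const_mul b),
            integral_const_mul, integral_const_mul]
        have h3 : a * ∫ w, φc (L1 w) ∂P + b * ∫ w, φc (L2 w) ∂P ≤
            a * x.2.1 + b * y.2.1 :=
          add_le_add (mul_le_mul_of_nonneg_left hx2 ha) (mul_le_mul_of_nonneg_left hy2 hb)
        have h4 : (a • x + b • y).2.1 = a * x.2.1 + b * y.2.1 := by simp [smul_eq_mul]
        rw [h4]
        linarith
      · show (a • x + b • y).2.2 ≤ _
        have hgL1 : Integrable (fun w => g w * L1 w) P :=
          hi1.bdd_mul (c := M) hg.aestronglyMeasurable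
            (Filter.Eventually.of_forall fun w => by rw [Real.norm_eq_abs]; exact hgbdd w)
        have hgL2 : Integrable (fun w => g w * L2 w) P :=
          hi2.bdd_mul (c := M) hg.aestronglyMeasurable
            (Filter.Eventually.of_forall fun w => by rw [Real.norm_eq_abs]; exact hgbdd w)
        have h2 : ∫ w, g w * L3 w ∂P =
            a * ∫ w, g w * L1 w ∂P + b * ∫ w, g w * L2 w ∂P := by
          have : (fun w => g w * L3 w) =
              fun w => a * (g w * L1 w) + b * (g w * L2 w) := by
            funext w; rw [hL3_def]; ring
          rw [this, integral_add (hgL1.const_mul a) (hgL2.const_mul b),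
            integral_const_mul, integral_const_mul]
        have h3 : a * x.2.2 + b * y.2.2 ≤
            a * ∫ w, g w * L1 w ∂P + b * ∫ w, g w * L2 w ∂P :=
          add_le_add (mul_le_mul_of_nonneg_left hx3 ha) (mul_le_mul_of_nonneg_left hy3 hb)
        have h4 : (a • x + b • y).2.2 = a * x.2.2 + b * y.2.2 := by simp [smul_eq_mul]
        rw [h4, h2]
        linarith
    -- an interior point
    set Ig : ℝ := ∫ w, g w ∂P with hIg_def
    set U : Set (ℝ × ℝ × ℝ) :=
      {x | 0 < x.1 ∧ φc x.1 < x.2.1 ∧ x.2.2 < Ig * x.1} with hU_def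
    have hUopen : IsOpen U := by
      rw [hU_def]
      refine IsOpen.inter (isOpen_lt continuous_const continuous_fst) ?_
      refine IsOpen.inter (isOpen_lt (hφc_cont.comp continuous_fst)
        (continuous_fst.comp continuous_snd)) ?_
      exact isOpen_lt (continuous_snd.comp continuous_snd)
        (continuous_const.mul continuous_fst)
    have hUsub : U ⊆ A := by
      rintro ⟨a, b, c⟩ ⟨h1, h2, h3⟩
      exact hslack_mem a b c h1.le h2.le h3.le
    have hy0U : ((1:ℝ), φc 1 + 1, Ig - 1) ∈ U := by
      rw [hU_def]
      simp only [mem_setOf_eq]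
      norm_num
    have hy0int : ((1:ℝ), φc 1 + 1, Ig - 1) ∈ interior A :=
      interior_maximal hUsub hUopen hy0U
    -- the point to separate
    have hpnot : (((1:ℝ), ρ, V + ε) : ℝ × ℝ × ℝ) ∉ A := by
      rintro ⟨L, hm, hnn, hint, hintφ, h1, h2, h3⟩
      simp only at h1 h2 h3
      -- build the measure Q with density L
      set Q : Measure W := P.withDensity (fun w => ENNReal.ofReal (L w)) with hQ_def
      have hQmeas : Measurable fun w => ENNReal.ofReal (L w) := hm.ennreal_ofReal
      have hQuniv : Q univ = 1 := by
        rw [hQ_def, withDensity_apply _ MeasurableSet.univ, setLIntegral_univ,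
          ← ofReal_integral_eq_lintegral_ofReal hint
            (Filter.Eventually.of_forall fun w => hnn w), ← h1]
        simp
      have hQprob : IsProbabilityMeasure Q := ⟨hQuniv⟩
      have hQP : Q ≪ P := withDensity_absolutelyContinuous P _
      have hrn : (fun w => (Q.rnDeriv P w).toReal) =ᵐ[P] L := by
        filter_upwards [Measure.rnDeriv_withDensity P hQmeas] with w hw
        rw [hQ_def]
        rw [hw, ENNReal.toReal_ofReal (hnn w)]
      have hQφint : Integrable (fun w => φ (Q.rnDeriv P w).toReal) P := by
        apply hintφ.congr
        filter_upwards [hrn] with w hw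
        rw [hw, hφeq _ (hnn w)]
      have hQφle : (∫ w, φ (Q.rnDeriv P w).toReal ∂P) ≤ ρ := by
        have heq : (fun w => φ (Q.rnDeriv P w).toReal) =ᵐ[P] fun w => φc (L w) := by
          filter_upwards [hrn] with w hw
          rw [hw, hφeq _ (hnn w)]
        rw [integral_congr_ae heq]
        exact h2
      have hgQ : ∫ w, g w ∂Q = ∫ w, g w * L w ∂P := by
        have hQ2 : Q = P.withDensity (fun w => ((L w).toNNReal : ℝ≥0∞)) := hQ_def
        rw [hQ2, integral_withDensity_eq_integral_smul hm.real_toNNReal]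
        congr 1
        funext w
        rw [NNReal.smul_def, Real.coe_toNNReal _ (hnn w), smul_eq_mul, mul_comm]
      have hmemS : (∫ w, g w ∂Q) ∈ Sst := by
        rw [hSst_def]
        exact ⟨Q, hQprob, hQP, hQφint, hQφle, rfl⟩
      have hle : ∫ w, g w ∂Q ≤ V := le_csSup hSbdd hmemS
      rw [hgQ] at hle
      linarith
    have hpnotint : (((1:ℝ), ρ, V + ε) : ℝ × ℝ × ℝ) ∉ interior A :=
      fun h => hpnot (interior_subset h)
    obtain ⟨f, hf⟩ := geometric_hahn_banach_open_point hAconv.interior isOpen_interior hpnotint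
    have hfA : ∀ z ∈ A, f z ≤ f ((1:ℝ), ρ, V + ε) := by
      intro z hz
      have hclos : closure (interior A) ⊆ {z | f z ≤ f ((1:ℝ), ρ, V + ε)} :=
        closure_minimal (fun z hz => (hf z hz).le) (isClosed_le f.continuous continuous_const)
      exact hclos (aux_subset_closure_interior hAconv hy0int hz)
    set α : ℝ := f ((1:ℝ), (0:ℝ), (0:ℝ)) with hα_def
    set β : ℝ := f ((0:ℝ), (1:ℝ), (0:ℝ)) with hβ_def
    set γ : ℝ := f ((0:ℝ), (0:ℝ), (1:ℝ)) with hγ_def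
    have hflin : ∀ x : ℝ × ℝ × ℝ, f x = α * x.1 + β * x.2.1 + γ * x.2.2 := by
      intro x
      have hx : x = x.1 • (((1:ℝ), (0:ℝ), (0:ℝ)) : ℝ × ℝ × ℝ)
          + x.2.1 • (((0:ℝ), (1:ℝ), (0:ℝ)) : ℝ × ℝ × ℝ)
          + x.2.2 • (((0:ℝ), (0:ℝ), (1:ℝ)) : ℝ × ℝ × ℝ) := by
        simp [Prod.ext_iff, smul_eq_mul]
      rw [hx, f.map_add, f.map_add, f.map_smul, f.map_smul, f.map_smul]
      simp [smul_eq_mul, hα_def, hβ_def, hγ_def]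
      ring
    have hFp : f ((1:ℝ), ρ, V + ε) = α + β * ρ + γ * (V + ε) := by
      rw [hflin]; simp
    set Fp : ℝ := f ((1:ℝ), ρ, V + ε) with hFp_def
    have hFp' : Fp = α + β * ρ + γ * (V + ε) := hFp
    -- sign facts
    have hslack1 : ∀ s : ℝ, 0 ≤ s → α + β * (φc 1 + s) + γ * Ig ≤ Fp := by
      intro s hs
      have hmem : (((1:ℝ), φc 1 + s, Ig) : ℝ × ℝ × ℝ) ∈ A := by
        apply hslack_mem 1 (φc 1 + s) Ig zero_le_one (by linarith)
        rw [mul_one]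
      have := hfA _ hmem
      rw [hflin] at this
      simpa using this
    have hslack2 : ∀ s : ℝ, 0 ≤ s → α + β * φc 1 + γ * (Ig - s) ≤ Fp := by
      intro s hs
      have hmem : (((1:ℝ), φc 1, Ig - s) : ℝ × ℝ × ℝ) ∈ A := by
        apply hslack_mem 1 (φc 1) (Ig - s) zero_le_one (le_refl _)
        rw [mul_one]; linarith
      have := hfA _ hmem
      rw [hflin] at this
      simpa using this
    have hβ : β ≤ 0 := by
      by_contra hcon
      push_neg at hcon
      have h0 := hslack1 0 (le_refl 0)
      set s0 : ℝ := (Fp - α - β * φc 1 - γ * Ig + 1) / β with hs0_def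
      have hs0nn : 0 ≤ s0 := div_nonneg (by linarith) hcon.le
      have hs := hslack1 s0 hs0nn
      have hexp : β * (φc 1 + s0) = β * φc 1 + (Fp - α - β * φc 1 - γ * Ig + 1) := by
        rw [hs0_def, mul_add, mul_div_cancel₀ _ (ne_of_gt hcon)]
      linarith
    have hγ : 0 ≤ γ := by
      by_contra hcon
      push_neg at hcon
      have h0 := hslack2 0 (le_refl 0)
      set s0 : ℝ := (Fp - α - β * φc 1 - γ * Ig + 1) / (-γ) with hs0_def
      have hs0nn : 0 ≤ s0 := div_nonneg (by linarith) (by linarith)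
      have hs := hslack2 s0 hs0nn
      have hγne : γ ≠ 0 := ne_of_lt hcon
      have hexp : γ * (Ig - s0) = γ * Ig + (Fp - α - β * φc 1 - γ * Ig + 1) := by
        have : (-γ) * s0 = Fp - α - β * φc 1 - γ * Ig + 1 := by
          rw [hs0_def, mul_div_cancel₀]
          intro hz
          exact hγne (by linarith)
        nlinarith [this]
      linarith
    -- the master inequality in coordinates
    have master0 : ∀ L : W → ℝ, Measurable L → (∀ w, 0 ≤ L w) → Integrable L P →
        Integrable (fun w => φc (L w)) P →
        α * (∫ w, L w ∂P) + β * (∫ w, φc (L w) ∂P) + γ * (∫ w, g w * L w ∂P) ≤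
          α + β * ρ + γ * (V + ε) := by
      intro L hm hnn hint hintφ
      have h := hfA _ (hmemA L hm hnn hint hintφ)
      rw [hflin] at h
      rw [← hFp']
      simpa using h
    -- γ must be positive
    have hγpos : 0 < γ := by
      rcases hγ.lt_or_eq with h | h
      · exact h
      · exfalso
        have hβ0 : β = 0 := by
          have h1 := master0 (fun _ => 1) measurable_const (fun _ => zero_le_one)
            (integrable_const 1) (integrable_const (φc 1))
          obtain ⟨e1, e2, e3⟩ := hconst_facts 1
          rw [e1, e2, e3, hφc1, ← h] at h1
          have hβnn : 0 ≤ β := by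
            by_contra hbneg
            push_neg at hbneg
            have : β * ρ < 0 := mul_neg_of_neg_of_pos hbneg hρ
            nlinarith
          exact le_antisymm hβ hβnn
        have hα0 : α = 0 := by
          have h2 := master0 (fun _ => 2) measurable_const (fun _ => by norm_num)
            (integrable_const 2) (integrable_const (φc 2))
          obtain ⟨e1, e2, e3⟩ := hconst_facts 2
          rw [e1, e2, e3, hβ0, ← h] at h2
          have h0 := master0 (fun _ => 0) measurable_const (fun _ => le_refl 0)
            (integrable_const 0) (integrable_const (φc 0))
          obtain ⟨f1, f2, f3⟩ := hconst_facts 0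
          rw [f1, f2, f3, hβ0, ← h] at h0
          have ha1 : 2 * α ≤ α := by linarith
          have ha2 : 0 ≤ α := by linarith
          linarith
        have hy0lt := hf _ hy0int
        rw [hflin, hFp', hα0, hβ0, ← h] at hy0lt
        simp at hy0lt
    -- dual variables
    set lam : ℝ := -β / γ with hlam_def
    set η : ℝ := -α / γ with hη_def
    have hlamnn : 0 ≤ lam := div_nonneg (by linarith) hγpos.le
    set B : ℝ := V + ε - η - lam * ρ with hB_def
    have hγlam : γ * lam = -β := by
      rw [hlam_def, mul_div_cancel₀ _ (ne_of_gt hγpos)]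
    have hγη : γ * η = -α := by
      rw [hη_def, mul_div_cancel₀ _ (ne_of_gt hγpos)]
    have master : ∀ L : W → ℝ, Measurable L → (∀ w, 0 ≤ L w) → Integrable L P →
        Integrable (fun w => φc (L w)) P →
        ∫ w, ((g w - η) * L w - lam * φc (L w)) ∂P ≤ B := by
      intro L hm hnn hint hintφ
      have hgL : Integrable (fun w => g w * L w) P :=
        hint.bdd_mul (c := M) hg.aestronglyMeasurable
          (Filter.Eventually.of_forall fun w => by rw [Real.norm_eq_abs]; exact hgbdd w)
      have hsplit : ∫ w, ((g w - η) * L w - lam * φc (L w)) ∂P =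
          ∫ w, g w * L w ∂P - η * ∫ w, L w ∂P - lam * ∫ w, φc (L w) ∂P := by
        have heq : (fun w => (g w - η) * L w - lam * φc (L w)) =
            fun w => (g w * L w - η * L w) - lam * φc (L w) := by
          funext w; ring
        have hsub1 : Integrable (fun w => g w * L w - η * L w) P :=
          hgL.sub (hint.const_mul η)
        rw [heq, integral_sub hsub1 (hintφ.const_mul lam),
          integral_sub hgL (hint.const_mul η), integral_const_mul, integral_const_mul]
      rw [hsplit, hB_def]
      have hkey := master0 L hm hnn hint hintφ
      set X := ∫ w, L w ∂P
      set Y := ∫ w, φc (L w) ∂P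
      set Z := ∫ w, g w * L w ∂P
      have hγmul : γ * (Z - η * X - lam * Y) ≤ γ * (V + ε - η - lam * ρ) := by
        have e1 : γ * (Z - η * X - lam * Y) =
            γ * Z + (γ * η) * (-X) + (γ * lam) * (-Y) := by ring
        have e2 : γ * (V + ε - η - lam * ρ) =
            γ * (V + ε) + (γ * η) * (-1) + (γ * lam) * (-ρ) := by ring
        rw [e1, e2, hγη, hγlam]
        linarith [hkey]
      exact le_of_mul_le_mul_left hγmul hγpos
    rcases hlamnn.lt_or_eq with hlampos | hlam0
    · -- λ > 0 : use the conjugate branch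
      obtain ⟨hBdd, hIint, hIle⟩ := aux_dual_branch P φ φc hφc_cont hφeq g hg M hgbdd
        lam η B hlampos master
      have hmemT : (lam * (∫ w, sSup ((fun t => ((g w - η) / lam) * t - φ t) '' Set.Ici 0) ∂P)
          + ρ * lam + η) ∈ Tst := by
        rw [hTst_def]
        exact Or.inl ⟨lam, hlampos, η, hBdd, hIint, rfl⟩
      have h1 := csInf_le hTbdd hmemT
      have h2 : lam * (∫ w, sSup ((fun t => ((g w - η) / lam) * t - φ t) '' Set.Ici 0) ∂P)
          ≤ lam * (B / lam) := mul_le_mul_of_nonneg_left hIle hlampos.le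
      have h3 : lam * (B / lam) = B := by field_simp
      rw [hB_def] at h3
      linarith
    · -- λ = 0 : the essential-supremum branch
      have hmaster0 : ∀ L : W → ℝ, Measurable L → (∀ w, 0 ≤ L w) → Integrable L P →
          Integrable (fun w => φc (L w)) P →
          ∫ w, (g w - η) * L w ∂P ≤ B := by
        intro L hm hnn hint hintφ
        have h := master L hm hnn hint hintφ
        rw [← hlam0] at h
        simp only [zero_mul, sub_zero] at h
        exact h
      have hB0 : 0 ≤ B := by
        have h0 := hmaster0 (fun _ => 0) measurable_const (fun _ => le_refl 0)
          (integrable_const 0) (integrable_const (φc 0))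
        simpa using h0
      have hnull : ∀ n : ℕ, P {w | η + 1 / ((n:ℝ) + 1) ≤ g w} = 0 := by
        intro n
        by_contra hne
        set D := {w | η + 1 / ((n:ℝ) + 1) ≤ g w} with hD_def
        have hDmeas : MeasurableSet D := measurableSet_le measurable_const hg
        have hDpos : 0 < (P D).toReal := ENNReal.toReal_pos hne (measure_ne_top P D)
        set t : ℝ := (B + 1) * ((n:ℝ) + 1) / (P D).toReal with ht_def
        have htnn : 0 ≤ t := by
          apply div_nonneg _ hDpos.le
          have h1 : (0:ℝ) ≤ B + 1 := by linarith
          have h2 : (0:ℝ) ≤ (n:ℝ) + 1 := by positivity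
          exact mul_nonneg h1 h2
        set L : W → ℝ := D.indicator (fun _ => t) with hL_def
        have hLm : Measurable L := measurable_const.indicator hDmeas
        have hLnn : ∀ w, 0 ≤ L w := by
          intro w
          rw [hL_def]
          by_cases h : w ∈ D
          · rw [indicator_of_mem h]; exact htnn
          · rw [indicator_of_notMem h]
        have hLint : Integrable L P := (integrable_const t).indicator hDmeas
        have hφeqL : (fun w => φc (L w)) =
            fun w => D.indicator (fun _ => φc t - φc 0) w + φc 0 := by
          funext w
          rw [hL_def]
          by_cases h : w ∈ D
          · rw [indicator_of_mem h, indicator_of_mem h]; ring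
          · rw [indicator_of_notMem h, indicator_of_notMem h]; ring
        have hφLint : Integrable (fun w => φc (L w)) P := by
          rw [hφeqL]
          exact ((integrable_const _).indicator hDmeas).add (integrable_const _)
        have hmb := hmaster0 L hLm hLnn hLint hφLint
        have hprod : (fun w => (g w - η) * L w) = D.indicator (fun w => (g w - η) * t) := by
          funext w
          rw [hL_def]
          by_cases h : w ∈ D
          · rw [indicator_of_mem h, indicator_of_mem h]
          · rw [indicator_of_notMem h, indicator_of_notMem h, mul_zero]
        rw [hprod, integral_indicator hDmeas] at hmb
        have hgηint : Integrable (fun w => (g w - η) * t) P := by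
          apply Integrable.mono' (integrable_const ((M + |η|) * |t|))
            ((hg.sub measurable_const).mul_const t).aestronglyMeasurable
          apply Filter.Eventually.of_forall
          intro w
          rw [Real.norm_eq_abs, abs_mul]
          apply mul_le_mul_of_nonneg_right _ (abs_nonneg t)
          calc |g w - η| ≤ |g w| + |η| := abs_sub _ _
            _ ≤ M + |η| := by linarith [hgbdd w]
        have hlow : (1 / ((n:ℝ) + 1)) * t * (P D).toReal ≤ ∫ w in D, (g w - η) * t ∂P := by
          have hmono : ∀ w ∈ D, (1 / ((n:ℝ) + 1)) * t ≤ (g w - η) * t := by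
            intro w hw
            apply mul_le_mul_of_nonneg_right _ htnn
            rw [hD_def] at hw
            simp only [mem_setOf_eq] at hw
            linarith
          calc (1 / ((n:ℝ) + 1)) * t * (P D).toReal
              = ∫ _ in D, (1 / ((n:ℝ) + 1)) * t ∂P := by
                rw [setIntegral_const, measureReal_def, smul_eq_mul, mul_comm]
            _ ≤ ∫ w in D, (g w - η) * t ∂P := by
                apply setIntegral_mono_on
                  integrableOn_const
                  hgηint.integrableOn hDmeas hmono
        have hval : (1 / ((n:ℝ) + 1)) * t * (P D).toReal = B + 1 := by
          rw [ht_def]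
          have hn1 : ((n:ℝ) + 1) ≠ 0 := by positivity
          field_simp
        rw [hval] at hlow
        linarith
      have hgle : ∀ᵐ w ∂P, g w ≤ η := by
        rw [ae_iff]
        apply measure_mono_null _ ((measure_iUnion_null_iff).2 hnull)
        intro w hw
        simp only [mem_setOf_eq, not_le] at hw
        obtain ⟨n, hn⟩ := exists_nat_one_div_lt (show (0:ℝ) < g w - η by linarith)
        apply mem_iUnion.2 ⟨n, ?_⟩
        simp only [mem_setOf_eq]
        linarith
      have hmemT : η ∈ Tst := by
        rw [hTst_def]
        exact Or.inr ⟨η, hgle, rfl⟩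
      have h1 := csInf_le hTbdd hmemT
      have hBval : B = V + ε - η := by rw [hB_def, ← hlam0]; ring
      linarith
end

section
/- Let Z₁,…,Z_N be i.i.d. real random variables with common distribution P₀ and |Z_i| ≤ M almost surely. For ρ > 0, with φ(t) = t² − 1, let 𝒫 = {Q : D_φ(Q‖P₀) ≤ ρ} and 𝒫_N = {q ∈ Δ_N : (1/N)∑_{i=1}^N φ(N q_i) ≤ ρ}. Then E[ sup_{q ∈ 𝒫_N} ∑_{i=1}^N q_i Z_i ] ≤ sup_{Q ∈ 𝒫} E_Q[Z]. -/
open MeasureTheory ProbabilityTheory Finset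

open scoped NNReal ENNReal

section Aux

variable {Ω : Type*} [MeasurableSpace Ω] {μ : Measure Ω}

/-- The measure `A ↦ ∫ q ω · 1_A (Z ω) dμ`. -/
noncomputable def mkQ (μ : Measure Ω) (Z : Ω → ℝ) (q : Ω → ℝ) : Measure ℝ :=
  (μ.withDensity fun ω => ((Real.toNNReal (q ω) : ℝ≥0) : ℝ≥0∞)).map Z

lemma mkQ_le (P₀ : Measure ℝ) (Z : Ω → ℝ) (hZ : Measurable Z) (hlaw : μ.map Z = P₀)
    (q : Ω → ℝ) (hq1 : ∀ ω, q ω ≤ 1) : mkQ μ Z q ≤ P₀ := by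
  have hν : μ.withDensity (fun ω => ((Real.toNNReal (q ω) : ℝ≥0) : ℝ≥0∞)) ≤ μ := by
    refine Measure.le_iff.mpr fun s hs => ?_
    rw [withDensity_apply _ hs]
    refine (setLIntegral_le_meas hs (fun ω _ _ => ?_) (fun ω _ h => absurd (by trivial) h)).trans
      le_rfl
    simp only [ENNReal.coe_le_one_iff, Real.toNNReal_le_one]
    exact hq1 ω
  rw [← hlaw]
  exact Measure.map_mono hν hZ

lemma mkQ_univ (Z : Ω → ℝ) (hZ : Measurable Z) (q : Ω → ℝ) :
    mkQ μ Z q Set.univ = ∫⁻ ω, ENNReal.ofReal (q ω) ∂μ := by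
  rw [mkQ, Measure.map_apply hZ MeasurableSet.univ, Set.preimage_univ,
    withDensity_apply _ MeasurableSet.univ, setLIntegral_univ]
  rfl

lemma integral_mkQ (Z : Ω → ℝ) (hZ : Measurable Z) (q : Ω → ℝ) (hqm : Measurable q)
    (hq0 : ∀ ω, 0 ≤ q ω) (g : ℝ → ℝ) (hg : Measurable g) :
    ∫ x, g x ∂(mkQ μ Z q) = ∫ ω, q ω * g (Z ω) ∂μ := by
  rw [mkQ, integral_map hZ.aemeasurable hg.aestronglyMeasurable,
    integral_withDensity_eq_integral_smul hqm.real_toNNReal (fun ω => g (Z ω))]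
  refine integral_congr_ae (Filter.Eventually.of_forall fun ω => ?_)
  simp only [NNReal.smul_def, Real.coe_toNNReal _ (hq0 ω), smul_eq_mul]


lemma rnDeriv_mkQ_sq (P₀ : Measure ℝ) [IsProbabilityMeasure P₀] [IsProbabilityMeasure μ]
    (Z : Ω → ℝ) (hZ : Measurable Z) (hlaw : μ.map Z = P₀)
    (q : Ω → ℝ) (hqm : Measurable q) (hq0 : ∀ ω, 0 ≤ q ω) (hq1 : ∀ ω, q ω ≤ 1) :
    ∫ x, (((mkQ μ Z q).rnDeriv P₀ x).toReal) ^ 2 ∂P₀ ≤ ∫ ω, q ω ^ 2 ∂μ := by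
  set Qi := mkQ μ Z q with hQi
  have hle : Qi ≤ P₀ := mkQ_le P₀ Z hZ hlaw q hq1
  haveI : IsFiniteMeasure Qi :=
    ⟨lt_of_le_of_lt (Measure.le_iff'.mp hle Set.univ) (by simp [measure_univ])⟩
  set g := fun x => ((Qi.rnDeriv P₀ x).toReal) with hg
  have hgm : Measurable g := (Measure.measurable_rnDeriv _ _).ennreal_toReal
  have hg0 : ∀ x, 0 ≤ g x := fun x => ENNReal.toReal_nonneg
  have hg1 : ∀ᵐ x ∂P₀, g x ≤ 1 := by
    filter_upwards [Measure.rnDeriv_le_one_of_le hle] with x hx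
    simpa [hg] using ENNReal.toReal_mono (by norm_num) hx
  -- ∫ g² dP₀ = ∫ g dQi = ∫ q · g(Z) dμ
  have hQi_repr : P₀.withDensity (Qi.rnDeriv P₀) = Qi :=
    Measure.withDensity_rnDeriv_eq _ _ hle.absolutelyContinuous
  have key1 : ∫ x, g x ∂Qi = ∫ x, g x ^ 2 ∂P₀ := by
    rw [← hQi_repr]
    have hcongr : P₀.withDensity (Qi.rnDeriv P₀)
        = P₀.withDensity fun x => (((Qi.rnDeriv P₀ x).toNNReal : ℝ≥0) : ℝ≥0∞) :=
      withDensity_congr_ae ((Measure.rnDeriv_lt_top Qi P₀).mono fun x hx =>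
        (ENNReal.coe_toNNReal hx.ne).symm)
    rw [hcongr, integral_withDensity_eq_integral_smul
      ((Measure.measurable_rnDeriv _ _).ennreal_toNNReal) g]
    refine integral_congr_ae (Filter.Eventually.of_forall fun x => ?_)
    simp only [NNReal.smul_def, smul_eq_mul]
    rw [show ((Qi.rnDeriv P₀ x).toNNReal : ℝ) = g x from rfl, sq]
  have key2 : ∫ x, g x ∂Qi = ∫ ω, q ω * g (Z ω) ∂μ := integral_mkQ Z hZ q hqm hq0 g hgm
  have htrans : ∫ ω, g (Z ω) ^ 2 ∂μ = ∫ x, g x ^ 2 ∂P₀ := by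
    rw [← hlaw, integral_map hZ.aemeasurable ((hgm.pow_const 2).aestronglyMeasurable)]
  have hgZ1 : ∀ᵐ ω ∂μ, g (Z ω) ≤ 1 := by
    have h' : ∀ᵐ x ∂(μ.map Z), g x ≤ 1 := by rwa [hlaw]
    exact (ae_map_iff hZ.aemeasurable (measurableSet_le hgm measurable_const)).mp h'
  -- integrability
  have hint2 : Integrable (fun ω => q ω ^ 2) μ := by
    refine Integrable.mono' (integrable_const 1) ((hqm.pow_const 2).aestronglyMeasurable)
      (Filter.Eventually.of_forall fun ω => ?_)
    rw [Real.norm_eq_abs, abs_of_nonneg (by positivity)]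
    nlinarith [hq0 ω, hq1 ω]
  have hint3 : Integrable (fun ω => g (Z ω) ^ 2) μ := by
    refine Integrable.mono' (integrable_const 1)
      (((hgm.comp hZ).pow_const 2).aestronglyMeasurable) ?_
    filter_upwards [hgZ1] with ω h1
    rw [Real.norm_eq_abs, abs_of_nonneg (by positivity)]
    nlinarith [hg0 (Z ω)]
  have hint1 : Integrable (fun ω => q ω * g (Z ω)) μ := by
    refine Integrable.mono' (integrable_const 1) ((hqm.mul (hgm.comp hZ)).aestronglyMeasurable) ?_
    filter_upwards [hgZ1] with ω h1
    rw [Real.norm_eq_abs, abs_of_nonneg (mul_nonneg (hq0 ω) (hg0 _))]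
    calc q ω * g (Z ω) ≤ 1 * 1 :=
      mul_le_mul (hq1 ω) h1 (hg0 _) zero_le_one
    _ = 1 := by ring
  -- AM-GM
  have hAM : ∫ ω, q ω * g (Z ω) ∂μ ≤ (∫ ω, q ω ^ 2 ∂μ + ∫ ω, g (Z ω) ^ 2 ∂μ) / 2 := by
    rw [div_eq_inv_mul, ← integral_add hint2 hint3, ← integral_const_mul]
    refine integral_mono hint1 ((hint2.add hint3).const_mul _) fun ω => ?_
    simp only [Pi.add_apply]
    nlinarith [sq_nonneg (q ω - g (Z ω))]
  have hA : ∫ x, g x ^ 2 ∂P₀ = ∫ ω, q ω * g (Z ω) ∂μ := by rw [← key1, key2]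
  rw [hA] at *
  linarith [htrans ▸ hAM]


lemma withDensity_finset_sum' {α ι : Type*} [MeasurableSpace α] (P : Measure α) (s : Finset ι)
    (f : ι → α → ℝ≥0∞) (hf : ∀ i, Measurable (f i)) :
    P.withDensity (fun x => ∑ i ∈ s, f i x) = ∑ i ∈ s, P.withDensity (f i) := by
  classical
  induction s using Finset.induction with
  | empty => simp
  | insert a s h ih =>
    have hfe : (fun x => ∑ i ∈ insert a s, f i x) = f a + fun x => ∑ i ∈ s, f i x :=
      funext fun x => by simp [Finset.sum_insert h]
    rw [hfe, withDensity_add_left (hf a), ih, Finset.sum_insert h]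

end Aux

/-- Upper bound: for i.i.d. bounded `Z₁, …, Z_N ∼ P₀` and the χ²-divergence ball of
radius `ρ`, `E[sup_{q ∈ 𝒫_N} ∑ᵢ qᵢ Zᵢ] ≤ sup_{Q ∈ 𝒫} E_Q[Z]`. -/
theorem stmt4 {Ω : Type*} [MeasurableSpace Ω] (μ : Measure Ω) [IsProbabilityMeasure μ]
    (N : ℕ) (hN : 1 ≤ N) (M ρ : ℝ) (hρ : 0 < ρ)
    (P₀ : Measure ℝ) [IsProbabilityMeasure P₀]
    (Z : Fin N → Ω → ℝ) (hZm : ∀ i, Measurable (Z i))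
    (hlaw : ∀ i, Measure.map (Z i) μ = P₀)
    (hbdd : ∀ i, ∀ᵐ ω ∂μ, |Z i ω| ≤ M)
    (hindep : iIndepFun Z μ)
    (Pset : Set (Measure ℝ))
    (hP : Pset = {Q | IsProbabilityMeasure Q ∧ Q ≪ P₀ ∧
        Integrable (fun x => ((Q.rnDeriv P₀ x).toReal) ^ 2 - 1) P₀ ∧
        ∫ x, (((Q.rnDeriv P₀ x).toReal) ^ 2 - 1) ∂P₀ ≤ ρ})
    (PN : Set (Fin N → ℝ))
    (hPN : PN = {q | (∀ i, 0 ≤ q i) ∧ ∑ i, q i = 1 ∧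
        (1 / (N : ℝ)) * ∑ i, (((N : ℝ) * q i) ^ 2 - 1) ≤ ρ}) :
    ∫ ω, sSup ((fun q => ∑ i, q i * Z i ω) '' PN) ∂μ ≤
      sSup {v : ℝ | ∃ Q ∈ Pset, v = ∫ x, x ∂Q} := by
  classical
  have hN0 : (0:ℝ) < N := by exact_mod_cast hN
  -- membership facts for PN
  have hq_nn : ∀ q ∈ PN, ∀ i, 0 ≤ q i := by intro q hq; rw [hPN] at hq; exact hq.1
  have hq_sum : ∀ q ∈ PN, ∑ i, q i = 1 := by intro q hq; rw [hPN] at hq; exact hq.2.1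
  have hq_le_one : ∀ q ∈ PN, ∀ i, q i ≤ 1 := by
    intro q hq i
    calc q i ≤ ∑ j, q j := Finset.single_le_sum (fun j _ => hq_nn q hq j) (mem_univ i)
    _ = 1 := hq_sum q hq
  have hq_sumsq : ∀ q ∈ PN, ∑ i, q i ^ 2 ≤ (1 + ρ) / N := by
    intro q hq
    have h2 : (1 / (N : ℝ)) * ∑ i, (((N : ℝ) * q i) ^ 2 - 1) ≤ ρ := by
      rw [hPN] at hq; exact hq.2.2
    have hsum : ∑ i, (((N : ℝ) * q i) ^ 2 - 1) = (N:ℝ)^2 * ∑ i, q i ^ 2 - N := by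
      rw [Finset.sum_sub_distrib, Finset.sum_const, card_univ, Fintype.card_fin, Finset.mul_sum]
      congr 1
      · exact Finset.sum_congr rfl fun i _ => by ring
      · simp
    rw [hsum, one_div, inv_mul_le_iff₀ hN0] at h2
    rw [le_div_iff₀ hN0]
    nlinarith [h2, hN0]
  have hu₀ : (fun _ : Fin N => 1 / (N:ℝ)) ∈ PN := by
    rw [hPN]
    refine ⟨fun i => by positivity, ?_, ?_⟩
    · rw [Finset.sum_const, card_univ, Fintype.card_fin, nsmul_eq_mul]; field_simp
    · have h1 : ((N:ℝ) * (1 / N)) ^ 2 - 1 = 0 := by field_simp; norm_num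
      simp only [h1, Finset.sum_const, smul_zero, mul_zero]
      exact le_of_lt hρ
  -- countable dense subset of PN
  haveI hne : Nonempty PN := ⟨⟨_, hu₀⟩⟩
  obtain ⟨s, hsc, hsd⟩ := TopologicalSpace.exists_countable_dense PN
  obtain ⟨e, hse⟩ := hsc.exists_eq_range (hsd.nonempty)
  set E : ℕ → Fin N → ℝ := fun k => (e k : Fin N → ℝ) with hE_def
  have hE : ∀ k, E k ∈ PN := fun k => (e k).2
  set g : ℕ → Ω → ℝ := fun k ω => ∑ i, E k i * Z i ω with hg_def
  have hgm : ∀ k, Measurable (g k) :=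
    fun k => Finset.measurable_sum _ fun i _ => (hZm i).const_mul _
  -- boundedness of the image
  have himg_le : ∀ ω, ∀ q ∈ PN, ∑ i, q i * Z i ω ≤ ∑ i, |Z i ω| := by
    intro ω q hq
    refine Finset.sum_le_sum fun i _ => ?_
    calc q i * Z i ω ≤ q i * |Z i ω| :=
      mul_le_mul_of_nonneg_left (le_abs_self _) (hq_nn q hq i)
    _ ≤ 1 * |Z i ω| := mul_le_mul_of_nonneg_right (hq_le_one q hq i) (abs_nonneg _)
    _ = |Z i ω| := one_mul _
  have hBdd : ∀ ω, BddAbove ((fun q => ∑ i, q i * Z i ω) '' PN) := by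
    intro ω
    exact ⟨∑ i, |Z i ω|, by rintro x ⟨q, hq, rfl⟩; exact himg_le ω q hq⟩
  have hBddR : ∀ ω, BddAbove (Set.range fun k => g k ω) := by
    intro ω
    exact ⟨∑ i, |Z i ω|, by rintro x ⟨k, rfl⟩; exact himg_le ω _ (hE k)⟩
  set S : Ω → ℝ := fun ω => ⨆ k, g k ω with hS_def
  have hS_eq : ∀ ω, sSup ((fun q => ∑ i, q i * Z i ω) '' PN) = S ω := by
    intro ω
    apply le_antisymm
    · refine csSup_le ⟨_, Set.mem_image_of_mem _ hu₀⟩ ?_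
      rintro x ⟨q, hq, rfl⟩
      have hq' : (⟨q, hq⟩ : PN) ∈ closure s := hsd _
      rw [mem_closure_iff_seq_limit] at hq'
      obtain ⟨x, hxs, hxt⟩ := hq'
      have hΦ : Continuous fun v : Fin N → ℝ => ∑ i, v i * Z i ω :=
        continuous_finset_sum _ fun i _ => (continuous_apply i).mul continuous_const
      have h1 : Filter.Tendsto (fun n => ((x n : PN) : Fin N → ℝ)) Filter.atTop (nhds q) :=
        ((continuous_subtype_val.tendsto _).comp hxt)
      have h2 : Filter.Tendsto (fun n => ∑ i, ((x n : PN) : Fin N → ℝ) i * Z i ω)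
          Filter.atTop (nhds (∑ i, q i * Z i ω)) := (hΦ.tendsto q).comp h1
      refine le_of_tendsto h2 (Filter.Eventually.of_forall fun n => ?_)
      obtain ⟨k, hk⟩ := by rw [hse] at hxs; exact hxs n
      have : (fun i => ((x n : PN) : Fin N → ℝ) i) = E k := by rw [← hk]
      calc ∑ i, ((x n : PN) : Fin N → ℝ) i * Z i ω = g k ω := by
            rw [hg_def]; exact Finset.sum_congr rfl fun i _ => by rw [← hk]
      _ ≤ S ω := le_ciSup (hBddR ω) k
    · exact ciSup_le fun k => le_csSup (hBdd ω) (Set.mem_image_of_mem _ (hE k))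
  have hSm : Measurable S := Measurable.iSup hgm
  -- a.e. bounds
  have habs : ∀ᵐ ω ∂μ, ∀ i, |Z i ω| ≤ M := (ae_all_iff).mpr hbdd
  have hgk_bdd : ∀ ω, (∀ i, |Z i ω| ≤ M) → ∀ q ∈ PN, |∑ i, q i * Z i ω| ≤ M := by
    intro ω hω q hq
    calc |∑ i, q i * Z i ω| ≤ ∑ i, |q i * Z i ω| := Finset.abs_sum_le_sum_abs _ _
    _ ≤ ∑ i, q i * M := by
        refine Finset.sum_le_sum fun i _ => ?_
        rw [abs_mul, abs_of_nonneg (hq_nn q hq i)]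
        exact mul_le_mul_of_nonneg_left (hω i) (hq_nn q hq i)
    _ = M := by rw [← Finset.sum_mul, hq_sum q hq, one_mul]
  have hS_bdd : ∀ᵐ ω ∂μ, ‖S ω‖ ≤ M := by
    filter_upwards [habs] with ω hω
    rw [Real.norm_eq_abs, abs_le]
    constructor
    · calc -M ≤ g 0 ω := neg_le_of_abs_le (hgk_bdd ω hω _ (hE 0))
      _ ≤ S ω := le_ciSup (hBddR ω) 0
    · exact ciSup_le fun k => le_of_abs_le (hgk_bdd ω hω _ (hE k))
  have hS_int : Integrable S μ :=
    Integrable.mono' (integrable_const M) hSm.aestronglyMeasurable hS_bdd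
  -- reduce to ε > 0
  have key : ∀ ε : ℝ, 0 < ε →
      ∫ ω, S ω ∂μ ≤ sSup {v : ℝ | ∃ Q ∈ Pset, v = ∫ x, x ∂Q} + ε := by
    intro ε hε
    -- measurable ε-approximate maximiser
    have hex : ∀ ω, ∃ k, S ω - ε < g k ω := by
      intro ω
      exact exists_lt_of_lt_ciSup (by linarith [sub_lt_self (S ω) hε] : S ω - ε < S ω)
    set σ : Fin N → Ω → ℝ := fun i ω => E (Nat.find (hex ω)) i with hσ_def
    have hpm : ∀ k, MeasurableSet {ω | S ω - ε < g k ω} :=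
      fun k => measurableSet_lt (hSm.sub measurable_const) (hgm k)
    have hσm : ∀ i, Measurable (σ i) :=
      fun i => Measurable.find (f := fun k (_ : Ω) => E k i) (fun _ => measurable_const) hpm hex
    have hσ_mem : ∀ ω, (fun i => σ i ω) ∈ PN := fun ω => hE _
    have hσ_spec : ∀ ω, S ω - ε < ∑ i, σ i ω * Z i ω := fun ω => Nat.find_spec (hex ω)
    have hσ0 : ∀ i ω, 0 ≤ σ i ω := fun i ω => hq_nn _ (hσ_mem ω) i
    have hσ1 : ∀ i ω, σ i ω ≤ 1 := fun i ω => hq_le_one _ (hσ_mem ω) i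
    -- the tilted measure
    set Qi : Fin N → Measure ℝ := fun i => mkQ μ (Z i) (σ i) with hQi_def
    set Q : Measure ℝ := ∑ i, Qi i with hQ_def
    have hQi_le : ∀ i, Qi i ≤ P₀ := fun i => mkQ_le P₀ (Z i) (hZm i) (hlaw i) (σ i) (hσ1 i)
    have hfin : ∀ i, IsFiniteMeasure (Qi i) := fun i =>
      ⟨lt_of_le_of_lt (Measure.le_iff'.mp (hQi_le i) Set.univ) (by simp [measure_univ])⟩
    set G : Fin N → ℝ → ℝ≥0∞ := fun i => (Qi i).rnDeriv P₀ with hG_def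
    have hGm : ∀ i, Measurable (G i) := fun i => Measure.measurable_rnDeriv _ _
    have hG_repr : ∀ i, P₀.withDensity (G i) = Qi i := fun i => by
      haveI := hfin i
      exact Measure.withDensity_rnDeriv_eq _ _ (hQi_le i).absolutelyContinuous
    have hQ_repr : Q = P₀.withDensity (fun x => ∑ i, G i x) := by
      rw [hQ_def, withDensity_finset_sum' P₀ univ G hGm]
      exact Finset.sum_congr rfl fun i _ => (hG_repr i).symm
    have hQrn : Q.rnDeriv P₀ =ᵐ[P₀] fun x => ∑ i, G i x := by
      rw [hQ_repr]
      exact Measure.rnDeriv_withDensity P₀ (Finset.measurable_sum _ fun i _ => hGm i)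
    have hG1 : ∀ i, G i ≤ᵐ[P₀] 1 := fun i => by
      haveI := hfin i
      exact Measure.rnDeriv_le_one_of_le (hQi_le i)
    have hQ_ac : Q ≪ P₀ := hQ_repr ▸ withDensity_absolutelyContinuous _ _
    have hQprob : IsProbabilityMeasure Q := by
      constructor
      rw [hQ_def]
      rw [Measure.coe_finset_sum, Finset.sum_apply]
      have h1 : ∀ i ∈ univ, Qi i Set.univ = ∫⁻ ω, ENNReal.ofReal (σ i ω) ∂μ :=
        fun i _ => mkQ_univ (Z i) (hZm i) (σ i)
      rw [Finset.sum_congr rfl h1, ← lintegral_finset_sum _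
        (fun i _ => (hσm i).ennreal_ofReal)]
      have h2 : ∀ ω, ∑ i, ENNReal.ofReal (σ i ω) = 1 := by
        intro ω
        rw [← ENNReal.ofReal_sum_of_nonneg (fun i _ => hσ0 i ω), hq_sum _ (hσ_mem ω),
          ENNReal.ofReal_one]
      simp only [h2, lintegral_one, measure_univ]
    -- the radon-nikodym derivative of Q as a real function
    set r : ℝ → ℝ := fun x => ∑ i, (G i x).toReal with hr_def
    have hrm : Measurable r := Finset.measurable_sum _ fun i _ => (hGm i).ennreal_toReal
    have hr_ae : (fun x => (Q.rnDeriv P₀ x).toReal) =ᵐ[P₀] r := by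
      filter_upwards [hQrn, ae_all_iff.mpr hG1] with x hx hx2
      rw [hx, hr_def, ENNReal.toReal_sum fun i _ => (lt_of_le_of_lt (hx2 i) (by
        simp [ENNReal.one_lt_top])).ne]
    have hr_bdd : ∀ᵐ x ∂P₀, ∀ i, (G i x).toReal ≤ 1 := by
      filter_upwards [ae_all_iff.mpr hG1] with x hx i
      simpa using ENNReal.toReal_mono (by norm_num) (hx i)
    have hr_nn : ∀ x, 0 ≤ r x := fun x => Finset.sum_nonneg fun i _ => ENNReal.toReal_nonneg
    have hrN : ∀ᵐ x ∂P₀, r x ≤ N := by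
      filter_upwards [hr_bdd] with x hx
      calc r x ≤ ∑ _i : Fin N, (1:ℝ) := Finset.sum_le_sum fun i _ => hx i
      _ = N := by simp
    -- χ²-divergence bound
    have hint_chi : Integrable (fun x => ((Q.rnDeriv P₀ x).toReal) ^ 2 - 1) P₀ := by
      refine Integrable.mono' (integrable_const ((N:ℝ)^2 + 1))
        ((((Measure.measurable_rnDeriv Q P₀).ennreal_toReal.pow_const 2).sub
          measurable_const).aestronglyMeasurable) ?_
      filter_upwards [hr_ae, hrN] with x hx hxN
      rw [Real.norm_eq_abs, abs_le]
      constructor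
      · nlinarith [sq_nonneg ((Q.rnDeriv P₀ x).toReal), hN0]
      · rw [hx]
        nlinarith [hr_nn x, hN0]
    have hgi_int : ∀ i, Integrable (fun x => (G i x).toReal ^ 2) P₀ := by
      intro i
      refine Integrable.mono' (integrable_const 1)
        (((hGm i).ennreal_toReal.pow_const 2).aestronglyMeasurable) ?_
      filter_upwards [hr_bdd] with x hx
      rw [Real.norm_eq_abs, abs_of_nonneg (by positivity)]
      nlinarith [hx i, ENNReal.toReal_nonneg (a := G i x)]
    have hint_r2 : Integrable (fun x => r x ^ 2) P₀ := by
      refine Integrable.mono' (integrable_const ((N:ℝ)^2)) ((hrm.pow_const 2).aestronglyMeasurable) ?_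
      filter_upwards [hrN] with x hx
      rw [Real.norm_eq_abs, abs_of_nonneg (by positivity)]
      nlinarith [hr_nn x, hN0]
    have hσsq_int : ∀ i, Integrable (fun ω => σ i ω ^ 2) μ := by
      intro i
      refine Integrable.mono' (integrable_const 1) (((hσm i).pow_const 2).aestronglyMeasurable)
        (Filter.Eventually.of_forall fun ω => ?_)
      rw [Real.norm_eq_abs, abs_of_nonneg (by positivity)]
      nlinarith [hσ0 i ω, hσ1 i ω]
    have hr2_le : ∫ x, r x ^ 2 ∂P₀ ≤ 1 + ρ := by
      have hpt : ∀ x, r x ^ 2 ≤ (N:ℝ) * ∑ i, (G i x).toReal ^ 2 := by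
        intro x
        have := sq_sum_le_card_mul_sum_sq (s := (univ : Finset (Fin N)))
          (f := fun i => (G i x).toReal)
        simpa [card_univ] using this
      calc ∫ x, r x ^ 2 ∂P₀ ≤ ∫ x, (N:ℝ) * ∑ i, (G i x).toReal ^ 2 ∂P₀ :=
            integral_mono hint_r2 ((integrable_finset_sum _ fun i _ => hgi_int i).const_mul _) hpt
      _ = (N:ℝ) * ∑ i, ∫ x, (G i x).toReal ^ 2 ∂P₀ := by
            rw [integral_const_mul, integral_finset_sum _ fun i _ => hgi_int i]
      _ ≤ (N:ℝ) * ∑ i, ∫ ω, σ i ω ^ 2 ∂μ := by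
            refine mul_le_mul_of_nonneg_left (Finset.sum_le_sum fun i _ => ?_) (le_of_lt hN0)
            exact rnDeriv_mkQ_sq P₀ (Z i) (hZm i) (hlaw i) (σ i) (hσm i) (hσ0 i) (hσ1 i)
      _ = (N:ℝ) * ∫ ω, ∑ i, σ i ω ^ 2 ∂μ := by
            rw [integral_finset_sum _ fun i _ => hσsq_int i]
      _ ≤ (N:ℝ) * ((1 + ρ) / N) := by
            refine mul_le_mul_of_nonneg_left ?_ (le_of_lt hN0)
            calc ∫ ω, ∑ i, σ i ω ^ 2 ∂μ ≤ ∫ _ω, (1 + ρ) / N ∂μ :=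
                  integral_mono (integrable_finset_sum _ fun i _ => hσsq_int i)
                    (integrable_const _) (fun ω => hq_sumsq _ (hσ_mem ω))
            _ = (1 + ρ) / N := by simp [measure_univ]
      _ = 1 + ρ := by field_simp
    have hchi : ∫ x, (((Q.rnDeriv P₀ x).toReal) ^ 2 - 1) ∂P₀ ≤ ρ := by
      have : ∫ x, (((Q.rnDeriv P₀ x).toReal) ^ 2 - 1) ∂P₀ = ∫ x, (r x ^ 2 - 1) ∂P₀ :=
        integral_congr_ae (hr_ae.mono fun x hx => by dsimp only at hx ⊢; rw [hx])
      rw [this, integral_sub hint_r2 (integrable_const 1), integral_const, probReal_univ]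
      simp only [ENNReal.toReal_one, one_smul, smul_eq_mul]
      linarith [hr2_le]
    have hQmem : Q ∈ Pset := by
      rw [hP]
      exact ⟨hQprob, hQ_ac, hint_chi, hchi⟩
    -- the mean of Q
    have hP0bdd : ∀ᵐ x ∂P₀, |x| ≤ M := by
      have i0 : Fin N := ⟨0, hN⟩
      rw [← hlaw i0]
      rw [ae_map_iff (hZm i0).aemeasurable
        (measurableSet_le measurable_abs measurable_const)]
      exact hbdd i0
    have hid_int : ∀ (Q' : Measure ℝ), IsProbabilityMeasure Q' → Q' ≪ P₀ →
        Integrable (fun x => x) Q' := by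
      intro Q' hp hac
      haveI := hp
      refine Integrable.mono' (integrable_const M) measurable_id.aestronglyMeasurable ?_
      exact hac.ae_le hP0bdd
    have hmean : ∫ x, x ∂Q = ∫ ω, ∑ i, σ i ω * Z i ω ∂μ := by
      have hint_i : ∀ i ∈ univ, Integrable (fun x => x) (Qi i) := by
        intro i _
        haveI := hfin i
        refine Integrable.mono' (integrable_const M) measurable_id.aestronglyMeasurable ?_
        exact ((hQi_le i).absolutelyContinuous).ae_le hP0bdd
      rw [hQ_def, integral_finset_sum_measure hint_i]
      have h1 : ∀ i, ∫ x, x ∂(Qi i) = ∫ ω, σ i ω * Z i ω ∂μ := by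
        intro i
        exact integral_mkQ (Z i) (hZm i) (σ i) (hσm i) (hσ0 i) (fun x => x) measurable_id
      rw [Finset.sum_congr rfl fun i _ => h1 i]
      rw [← integral_finset_sum]
      intro i _
      refine Integrable.mono' (integrable_const M) ((hσm i).mul (hZm i)).aestronglyMeasurable ?_
      filter_upwards [hbdd i] with ω hω
      rw [Real.norm_eq_abs, abs_mul, abs_of_nonneg (hσ0 i ω)]
      calc σ i ω * |Z i ω| ≤ 1 * M := by
            refine mul_le_mul (hσ1 i ω) hω (abs_nonneg _) zero_le_one
      _ = M := one_mul M
    -- RHS is bounded above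
    have hub : ∀ v ∈ {v : ℝ | ∃ Q ∈ Pset, v = ∫ x, x ∂Q}, v ≤ M := by
      rintro v ⟨Q', hQ'mem, rfl⟩
      rw [hP] at hQ'mem
      obtain ⟨hp, hac, _, _⟩ := hQ'mem
      haveI := hp
      calc ∫ x, x ∂Q' ≤ ∫ _x, M ∂Q' := by
            refine integral_mono_ae (hid_int Q' hp hac) (integrable_const M) ?_
            filter_upwards [hac.ae_le hP0bdd] with x hx
            exact le_trans (le_abs_self x) hx
      _ = M := by simp [measure_univ]
    have hbdd_rhs : BddAbove {v : ℝ | ∃ Q ∈ Pset, v = ∫ x, x ∂Q} := ⟨M, fun v hv => hub v hv⟩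
    -- conclusion
    have hint_sZ : Integrable (fun ω => ∑ i, σ i ω * Z i ω) μ := by
      refine Integrable.mono' (integrable_const M)
        ((Finset.measurable_sum _ fun i _ => (hσm i).mul (hZm i)).aestronglyMeasurable) ?_
      filter_upwards [habs] with ω hω
      exact hgk_bdd ω hω _ (hσ_mem ω)
    calc ∫ ω, S ω ∂μ ≤ ∫ ω, (∑ i, σ i ω * Z i ω) + ε ∂μ := by
          refine integral_mono hS_int (hint_sZ.add (integrable_const ε)) fun ω => ?_
          linarith [hσ_spec ω]
    _ = ∫ ω, ∑ i, σ i ω * Z i ω ∂μ + ε := by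
          rw [integral_add hint_sZ (integrable_const ε), integral_const, probReal_univ]
          simp
    _ = ∫ x, x ∂Q + ε := by rw [hmean]
    _ ≤ sSup {v : ℝ | ∃ Q ∈ Pset, v = ∫ x, x ∂Q} + ε := by
          refine add_le_add (le_csSup hbdd_rhs ⟨Q, hQmem, rfl⟩) le_rfl
  have hgoal : ∫ ω, S ω ∂μ ≤ sSup {v : ℝ | ∃ Q ∈ Pset, v = ∫ x, x ∂Q} := by
    by_contra hc
    push_neg at hc
    have := key ((∫ ω, S ω ∂μ - sSup {v : ℝ | ∃ Q ∈ Pset, v = ∫ x, x ∂Q}) / 2) (by linarith)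
    linarith
  calc ∫ ω, sSup ((fun q => ∑ i, q i * Z i ω) '' PN) ∂μ = ∫ ω, S ω ∂μ := by
        exact integral_congr_ae (Filter.Eventually.of_forall fun ω => hS_eq ω)
  _ ≤ _ := hgoal
end

section
/- Let Z ≥ 0 be a nonzero random variable with finite 2p-th moment, where 1 ≤ p ≤ 2, and let Z₁,…,Z_n be i.i.d. copies of Z. Then E[ ((1/n) ∑_{i=1}^n Z_i^p)^{1/p} ] ≥ ‖Z‖_p − ((p−1)/p) √(2/n) √(Var(Z^p / E[Z^p])) ‖Z‖₂, where ‖Z‖_r = (E[Z^r])^{1/r}. -/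
open MeasureTheory ProbabilityTheory Finset


/-- pointwise key inequality -/
lemma aux_ptwise {α x : ℝ} (hα0 : 0 < α) (hα1 : α ≤ 1) (hx : 0 ≤ x) :
    1 + α * (x - 1) - (1 - α) * (|x - 1| * max 1 (x ^ α)) ≤ x ^ α := by
  rcases le_total x 1 with h | h
  · have hxα : x ≤ x ^ α := by
      rcases eq_or_lt_of_le hx with rfl | hx0
      · simp [Real.zero_rpow hα0.ne']
      · calc x = x ^ (1:ℝ) := (Real.rpow_one x).symm
          _ ≤ x ^ α := Real.rpow_le_rpow_of_exponent_ge hx0 h hα1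
    have hmax : max 1 (x ^ α) = 1 := max_eq_left (Real.rpow_le_one hx h hα0.le)
    rw [hmax, abs_of_nonpos (by linarith)]
    nlinarith
  · have hxpos : (0:ℝ) < x := lt_of_lt_of_le one_pos h
    have h1 : x ^ (1 - α) ≤ 1 + (1 - α) * (x - 1) := by
      have := rpow_one_add_le_one_add_mul_self (s := x - 1) (by linarith)
        (p := 1 - α) (by linarith) (by linarith)
      simpa using this
    have hxα1 : 1 ≤ x ^ α := Real.one_le_rpow h hα0.le
    have hmax : max 1 (x ^ α) = x ^ α := max_eq_right hxα1
    have hx' : x ^ α * x ^ (1 - α) = x := by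
      rw [← Real.rpow_add hxpos]; norm_num
    have key : x ≤ x ^ α * (1 + (1 - α) * (x - 1)) := by
      calc x = x ^ α * x ^ (1 - α) := hx'.symm
        _ ≤ x ^ α * (1 + (1 - α) * (x - 1)) :=
          mul_le_mul_of_nonneg_left h1 (by positivity)
    rw [hmax, abs_of_nonneg (by linarith)]
    nlinarith [mul_le_mul_of_nonneg_right hα1 (sub_nonneg.2 h)]


/-- Cauchy-Schwarz for integrals of nonnegative functions. -/
lemma aux_cs {Ω : Type*} [MeasurableSpace Ω] (μ : Measure Ω) [IsProbabilityMeasure μ]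
    {f g : Ω → ℝ} (hf : AEStronglyMeasurable f μ) (hg : AEStronglyMeasurable g μ)
    (hf0 : 0 ≤ᵐ[μ] f) (hg0 : 0 ≤ᵐ[μ] g)
    (hf2 : Integrable (fun ω => f ω ^ 2) μ) (hg2 : Integrable (fun ω => g ω ^ 2) μ) :
    ∫ ω, f ω * g ω ∂μ ≤ Real.sqrt (∫ ω, f ω ^ 2 ∂μ) * Real.sqrt (∫ ω, g ω ^ 2 ∂μ) := by
  have hpq : (2:ℝ).HolderConjugate 2 := Real.HolderConjugate.two_two
  have h2 : ENNReal.ofReal (2:ℝ) = 2 := by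
    simp [ENNReal.ofReal_ofNat]
  have hfm : MemLp f (ENNReal.ofReal (2:ℝ)) μ := by
    rw [h2]; exact (memLp_two_iff_integrable_sq hf).2 hf2
  have hgm : MemLp g (ENNReal.ofReal (2:ℝ)) μ := by
    rw [h2]; exact (memLp_two_iff_integrable_sq hg).2 hg2
  have key := MeasureTheory.integral_mul_le_Lp_mul_Lq_of_nonneg hpq hf0 hg0 hfm hgm
  have e1 : ∀ h : Ω → ℝ, (∫ ω, h ω ^ (2:ℝ) ∂μ) = ∫ ω, h ω ^ 2 ∂μ := by
    intro h; apply integral_congr_ae; filter_upwards with ω; rw [Real.rpow_two]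
  rw [e1, e1] at key
  calc ∫ ω, f ω * g ω ∂μ ≤ (∫ ω, f ω ^ 2 ∂μ) ^ (1/(2:ℝ)) * (∫ ω, g ω ^ 2 ∂μ) ^ (1/(2:ℝ)) := key
    _ = _ := by rw [← Real.sqrt_eq_rpow, ← Real.sqrt_eq_rpow]

/-- power mean inequality between p and 2 moments -/
lemma aux_pm {Ω : Type*} [MeasurableSpace Ω] (μ : Measure Ω) [IsProbabilityMeasure μ]
    {p : ℝ} (hp1 : 1 ≤ p) (hp2 : p ≤ 2) {Z : Ω → ℝ} (hZm : Measurable Z)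
    (hZ0 : ∀ ω, 0 ≤ Z ω) (h2 : Integrable (fun ω => Z ω ^ (2:ℝ)) μ)
    (hp : Integrable (fun ω => Z ω ^ p) μ) :
    (∫ ω, Z ω ^ p ∂μ) ^ (2/p) ≤ ∫ ω, Z ω ^ (2:ℝ) ∂μ := by
  have hp0 : (0:ℝ) < p := lt_of_lt_of_le one_pos hp1
  rcases eq_or_lt_of_le hp2 with rfl | hplt
  · norm_num
  · set a : ℝ := 2 / p with ha
    have ha1 : 1 < a := (one_lt_div hp0).2 hplt
    have hpq : a.HolderConjugate (Real.conjExponent a) := Real.HolderConjugate.conjExponent ha1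
    have hZp_nonneg : 0 ≤ᵐ[μ] (fun ω => Z ω ^ p) :=
      Filter.Eventually.of_forall fun ω => Real.rpow_nonneg (hZ0 ω) p
    have hZpa : (fun ω => (Z ω ^ p) ^ a) = fun ω => Z ω ^ (2:ℝ) := by
      funext ω
      rw [← Real.rpow_mul (hZ0 ω)]
      congr 1
      rw [ha]; field_simp
    have hmemp : MemLp (fun ω => Z ω ^ p) (ENNReal.ofReal a) μ := by
      have hane : ENNReal.ofReal a ≠ 0 := by
        simp [ENNReal.ofReal_eq_zero, not_le]
        linarith
      have hant : ENNReal.ofReal a ≠ ⊤ := ENNReal.ofReal_ne_top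
      have hmeas : AEStronglyMeasurable (fun ω => Z ω ^ p) μ :=
        ((Real.continuous_rpow_const hp0.le).measurable.comp hZm).aestronglyMeasurable
      refine (memLp_norm_rpow_iff hmeas hane hant).1 ?_
      rw [ENNReal.div_self hane hant, memLp_one_iff_integrable]
      have : (fun ω => ‖Z ω ^ p‖ ^ (ENNReal.ofReal a).toReal) = fun ω => Z ω ^ (2:ℝ) := by
        funext ω
        rw [Real.norm_of_nonneg (Real.rpow_nonneg (hZ0 ω) p),
          ENNReal.toReal_ofReal (by positivity : (0:ℝ) ≤ a)]
        exact congrFun hZpa ω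
      rw [this]
      exact h2
    have hmem1 : MemLp (fun _ : Ω => (1:ℝ)) (ENNReal.ofReal a.conjExponent) μ :=
      memLp_const 1
    have key := MeasureTheory.integral_mul_le_Lp_mul_Lq_of_nonneg hpq hZp_nonneg
      (Filter.Eventually.of_forall fun _ => zero_le_one) hmemp hmem1
    simp only [mul_one, Real.one_rpow, integral_const, measure_univ, ENNReal.toReal_one,
      one_smul, probReal_univ] at key
    rw [hZpa] at key
    -- key : ∫ Z^p ≤ (∫ Z^2)^(1/a)
    have hE2 : (0:ℝ) ≤ ∫ ω, Z ω ^ (2:ℝ) ∂μ :=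
      integral_nonneg fun ω => Real.rpow_nonneg (hZ0 ω) _
    have hmono := Real.rpow_le_rpow (integral_nonneg fun ω => Real.rpow_nonneg (hZ0 ω) p)
      key (by positivity : (0:ℝ) ≤ a)
    calc (∫ ω, Z ω ^ p ∂μ) ^ a ≤ ((∫ ω, Z ω ^ (2:ℝ) ∂μ) ^ (1/a)) ^ a := hmono
      _ = ∫ ω, Z ω ^ (2:ℝ) ∂μ := by
        rw [← Real.rpow_mul hE2, one_div, inv_mul_cancel₀ (by positivity : a ≠ 0),
          Real.rpow_one]

/-- Lower bound on the expected empirical `L^p` moment: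
`E[((1/n) ∑ᵢ Zᵢᵖ)^{1/p}] ≥ ‖Z‖_p - ((p-1)/p) √(2/n) √(Var(Zᵖ/E[Zᵖ])) ‖Z‖₂`
for i.i.d. copies `Z₁, …, Z_n` of a nonzero nonnegative random variable `Z`
with finite `2p`-th moment, `1 ≤ p ≤ 2`. -/
theorem stmt5 {Ω : Type*} [MeasurableSpace Ω] (μ : Measure Ω) [IsProbabilityMeasure μ]
    (n : ℕ) (hn : 1 ≤ n) (p : ℝ) (hp1 : 1 ≤ p) (hp2 : p ≤ 2)
    (Z : Ω → ℝ) (hZm : Measurable Z) (hZ0 : ∀ ω, 0 ≤ Z ω)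
    (hZne : ¬ Z =ᵐ[μ] (fun _ => (0 : ℝ)))
    (hmom : Integrable (fun ω => Z ω ^ (2 * p)) μ)
    (Zi : Fin n → Ω → ℝ) (hZim : ∀ i, Measurable (Zi i))
    (hid : ∀ i, IdentDistrib (Zi i) Z μ μ)
    (hindep : iIndepFun Zi μ) :
    (∫ ω, Z ω ^ p ∂μ) ^ (1 / p) -
        ((p - 1) / p) * Real.sqrt (2 / n) *
          Real.sqrt (∫ ω, (Z ω ^ p / (∫ ω', Z ω' ^ p ∂μ) - 1) ^ 2 ∂μ) *
          (∫ ω, Z ω ^ (2 : ℝ) ∂μ) ^ (1 / (2 : ℝ)) ≤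
      ∫ ω, ((1 / (n : ℝ)) * ∑ i, Zi i ω ^ p) ^ (1 / p) ∂μ := by
  have hp0 : (0:ℝ) < p := lt_of_lt_of_le one_pos hp1
  have hn0 : (0:ℝ) < (n:ℝ) := by exact_mod_cast hn
  set α : ℝ := 1 / p with hα
  have hα0 : 0 < α := by positivity
  have hα1 : α ≤ 1 := by rw [hα]; rw [div_le_one hp0]; linarith
  -- measurability of rpow maps
  have hrpm : ∀ c : ℝ, 0 ≤ c → Measurable (fun x : ℝ => x ^ c) := fun c hc =>
    (Real.continuous_rpow_const hc).measurable
  have hZpm : Measurable (fun ω => Z ω ^ p) := (hrpm p hp0.le).comp hZm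
  -- integrability of all moments up to 2p
  have hint : ∀ c : ℝ, 0 < c → c ≤ 2*p → Integrable (fun ω => Z ω ^ c) μ := by
    intro c hc hc2
    refine Integrable.mono' ((integrable_const (1:ℝ)).add hmom)
      ((hrpm c hc.le).comp hZm).aestronglyMeasurable ?_
    refine Filter.Eventually.of_forall fun ω => ?_
    rw [Real.norm_of_nonneg (Real.rpow_nonneg (hZ0 ω) c)]
    rcases le_total (Z ω) 1 with h | h
    · have := Real.rpow_le_one (hZ0 ω) h hc.le
      have := Real.rpow_nonneg (hZ0 ω) (2*p)
      simp only [Pi.add_apply]; linarith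
    · have := Real.rpow_le_rpow_of_exponent_le h hc2
      simp only [Pi.add_apply]; linarith
  have hZp_int : Integrable (fun ω => Z ω ^ p) μ := hint p hp0 (by linarith)
  have hZ2_int : Integrable (fun ω => Z ω ^ (2:ℝ)) μ := hint 2 two_pos (by linarith)
  set m : ℝ := ∫ ω, Z ω ^ p ∂μ with hm
  have hZp_nonneg : ∀ ω, 0 ≤ Z ω ^ p := fun ω => Real.rpow_nonneg (hZ0 ω) p
  have hm_nonneg : 0 ≤ m := integral_nonneg hZp_nonneg
  have hm_pos : 0 < m := by
    rcases eq_or_lt_of_le hm_nonneg with h0 | h; swap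
    · exact h
    exfalso
    apply hZne
    have := (integral_eq_zero_iff_of_nonneg hZp_nonneg hZp_int).1 h0.symm
    filter_upwards [this] with ω hω
    have : Z ω ^ p = 0 := hω
    by_contra hne
    have hpos : 0 < Z ω := lt_of_le_of_ne (hZ0 ω) (Ne.symm hne)
    exact absurd this (ne_of_gt (Real.rpow_pos_of_pos hpos p))
  -- identically distributed p-th powers
  set Y : Fin n → Ω → ℝ := fun i ω => Zi i ω ^ p with hY
  have hYm : ∀ i, Measurable (Y i) := fun i => (hrpm p hp0.le).comp (hZim i)
  have hYid : ∀ i, IdentDistrib (Y i) (fun ω => Z ω ^ p) μ μ := fun i =>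
    (hid i).comp (hrpm p hp0.le)
  have hYint : ∀ i, Integrable (Y i) μ := fun i => (hYid i).symm.integrable_snd hZp_int
  have hYmean : ∀ i, ∫ ω, Y i ω ∂μ = m := fun i => (hYid i).integral_eq
  have hZp_sq_int : Integrable (fun ω => (Z ω ^ p) ^ 2) μ := by
    have : (fun ω => (Z ω ^ p) ^ 2) = fun ω => Z ω ^ (2*p) := by
      funext ω
      rw [sq, ← Real.rpow_add' (hZ0 ω) (by linarith : p + p ≠ 0)]
      ring_nf
    rw [this]; exact hmom
  have hZp_mem2 : MemLp (fun ω => Z ω ^ p) 2 μ :=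
    (memLp_two_iff_integrable_sq hZpm.aestronglyMeasurable).2 hZp_sq_int
  have hYmem2 : ∀ i, MemLp (Y i) 2 μ := fun i => (hYid i).symm.memLp_snd hZp_mem2
  -- a.e. nonnegativity of the Zi
  have hZiae : ∀ᵐ ω ∂μ, ∀ i, 0 ≤ Zi i ω := by
    rw [MeasureTheory.ae_all_iff]
    intro i
    exact (hid i).symm.ae_snd (measurableSet_Ici : MeasurableSet (Set.Ici (0:ℝ)))
      (Filter.Eventually.of_forall hZ0)
  -- the empirical sum
  set S : Ω → ℝ := fun ω => ∑ i, Y i ω with hS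
  set T : Ω → ℝ := fun ω => (1/(n:ℝ)) * S ω with hT
  have hSm : Measurable S := Finset.measurable_sum univ fun i _ => hYm i
  have hTm : Measurable T := (hSm.const_mul _)
  have hSint : Integrable S μ := integrable_finset_sum univ fun i _ => hYint i
  have hTint : Integrable T μ := hSint.const_mul _
  have hSmean : ∫ ω, S ω ∂μ = n * m := by
    rw [hS]
    rw [integral_finset_sum univ fun i _ => hYint i]
    simp [hYmean, card_univ]
  have hTmean : ∫ ω, T ω ∂μ = m := by
    rw [hT]
    simp only []
    rw [MeasureTheory.integral_const_mul, hSmean]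
    field_simp
  have hSmem2 : MemLp S 2 μ := by
    have := memLp_finset_sum (f := Y) univ (fun i _ => hYmem2 i)
    exact this
  -- variance facts
  set VZ : ℝ := variance (fun ω => Z ω ^ p) μ with hVZ
  have hVZ_eq : VZ = ∫ ω, (Z ω ^ p - m) ^ 2 ∂μ := by
    rw [hVZ, variance_eq_integral hZp_mem2.aestronglyMeasurable.aemeasurable]
  have hVZ_nonneg : 0 ≤ VZ := variance_nonneg _ _
  have hpair : Set.Pairwise ↑(univ : Finset (Fin n)) fun i j => IndepFun (Y i) (Y j) μ := by
    intro i _ j _ hij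
    exact (hindep.comp (fun _ => fun x : ℝ => x ^ p) (fun _ => hrpm p hp0.le)).indepFun hij
  have hVarS : variance S μ = n * VZ := by
    have h1 := IndepFun.variance_sum (μ := μ) (X := Y) (s := univ)
      (fun i _ => hYmem2 i) hpair
    have h2 : variance (∑ i, Y i) μ = variance S μ := by
      congr 1
      funext ω
      simp [hS, Finset.sum_apply]
    rw [h2] at h1
    rw [h1]
    have : ∀ i, variance (Y i) μ = VZ := fun i => (hYid i).variance_eq
    simp [this, card_univ, mul_comm]
  have hSsub_int : Integrable (fun ω => (S ω - n * m) ^ 2) μ := by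
    have := (memLp_two_iff_integrable_sq
      ((hSm.sub measurable_const).aestronglyMeasurable)).1 (hSmem2.sub (memLp_const (n * m)))
    exact this
  have hSvar_eq : ∫ ω, (S ω - n * m) ^ 2 ∂μ = n * VZ := by
    rw [← hVarS, variance_eq_integral hSmem2.aestronglyMeasurable.aemeasurable]
    apply integral_congr_ae
    filter_upwards with ω
    simp [hSmean]
  -- the two Cauchy-Schwarz factors
  set f : Ω → ℝ := fun ω => |T ω / m - 1| with hf
  set g : Ω → ℝ := fun ω => max 1 ((T ω / m) ^ α) with hg
  have hfm : Measurable f := ((hTm.div_const m).sub measurable_const).abs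
  have hgm : Measurable g := measurable_const.max ((hrpm α hα0.le).comp (hTm.div_const m))
  have hf2_eq : (fun ω => f ω ^ 2) = fun ω => ((n:ℝ)^2 * m^2)⁻¹ * (S ω - n * m) ^ 2 := by
    funext ω
    rw [hf]
    simp only [sq_abs]
    rw [hT]
    simp only []
    have h1 : 1/(n:ℝ) * S ω / m - 1 = (S ω - (n:ℝ)*m) * ((n:ℝ)*m)⁻¹ := by
      field_simp
    rw [h1, mul_pow]
    ring
  have hf2_int : Integrable (fun ω => f ω ^ 2) μ := by
    rw [hf2_eq]; exact hSsub_int.const_mul _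
  have hf2_val : ∫ ω, f ω ^ 2 ∂μ = VZ / (n * m^2) := by
    rw [hf2_eq, MeasureTheory.integral_const_mul, hSvar_eq]
    field_simp
  -- the quantity in the statement
  have hQ_val : ∫ ω, (Z ω ^ p / m - 1) ^ 2 ∂μ = VZ / m^2 := by
    have he : (fun ω => (Z ω ^ p / m - 1) ^ 2) = fun ω => (m^2)⁻¹ * (Z ω ^ p - m) ^ 2 := by
      funext ω; field_simp [hm_pos.ne']
    rw [he, MeasureTheory.integral_const_mul, ← hVZ_eq]
    field_simp
  -- second moments of the Zi
  set E2 : ℝ := ∫ ω, Z ω ^ (2:ℝ) ∂μ with hE2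
  have hE2_nonneg : 0 ≤ E2 := integral_nonneg fun ω => Real.rpow_nonneg (hZ0 ω) _
  have hZi2id : ∀ i, IdentDistrib (fun ω => Zi i ω ^ (2:ℝ)) (fun ω => Z ω ^ (2:ℝ)) μ μ :=
    fun i => (hid i).comp (hrpm 2 two_pos.le)
  have hZi2int : ∀ i, Integrable (fun ω => Zi i ω ^ (2:ℝ)) μ :=
    fun i => (hZi2id i).symm.integrable_snd hZ2_int
  have hZi2mean : ∀ i, ∫ ω, Zi i ω ^ (2:ℝ) ∂μ = E2 := fun i => (hZi2id i).integral_eq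
  set D : Ω → ℝ := fun ω => 1 + (1/(n:ℝ)) * ∑ i, Zi i ω ^ (2:ℝ) / m ^ (2/p) with hD
  have hDint : Integrable D μ := by
    apply (integrable_const (1:ℝ)).add
    exact (integrable_finset_sum univ fun i _ => (hZi2int i).div_const _).const_mul _
  have hD_val : ∫ ω, D ω ∂μ = 1 + E2 / m ^ (2/p) := by
    rw [hD]
    simp only []
    rw [integral_add (integrable_const _)
      ((integrable_finset_sum univ fun i _ => (hZi2int i).div_const _).const_mul _)]
    rw [MeasureTheory.integral_const_mul, integral_finset_sum univ
      fun i _ => (hZi2int i).div_const _]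
    simp only [integral_div, hZi2mean]
    rw [Finset.sum_const, card_univ, Fintype.card_fin, integral_const]
    simp only [measure_univ, probReal_univ, ENNReal.toReal_one, smul_eq_mul, one_mul, nsmul_eq_mul]
    field_simp
  -- the key a.e. domination of g^2
  have hgD : ∀ᵐ ω ∂μ, g ω ^ 2 ≤ D ω := by
    filter_upwards [hZiae] with ω hω
    have hY0 : ∀ i, 0 ≤ Y i ω := fun i => Real.rpow_nonneg (hω i) p
    have hS0 : 0 ≤ S ω := Finset.sum_nonneg fun i _ => hY0 i
    have hT0 : 0 ≤ T ω := by
      rw [hT]; exact mul_nonneg (by positivity) hS0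
    have hx0 : 0 ≤ T ω / m := div_nonneg hT0 hm_pos.le
    -- Jensen step
    have hJ : (T ω / m) ^ (2/p) ≤ (1/(n:ℝ)) * ∑ i, Zi i ω ^ (2:ℝ) / m ^ (2/p) := by
      have hw : ∑ _i : Fin n, (1/(n:ℝ)) = 1 := by
        rw [Finset.sum_const, card_univ, Fintype.card_fin, nsmul_eq_mul]
        field_simp
      have hz : ∀ i ∈ (univ : Finset (Fin n)), (0:ℝ) ≤ Y i ω / m :=
        fun i _ => div_nonneg (hY0 i) hm_pos.le
      have hjen := Real.rpow_arith_mean_le_arith_mean_rpow univ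
        (fun _ => (1/(n:ℝ))) (fun i => Y i ω / m)
        (fun i _ => by positivity) hw hz
        (by rw [le_div_iff₀ hp0]; linarith : (1:ℝ) ≤ 2/p)
      have hLHS : (∑ i, (1/(n:ℝ)) * (Y i ω / m)) = T ω / m := by
        rw [hT, hS]
        simp only []
        rw [← Finset.mul_sum, ← Finset.sum_div]
        ring
      rw [hLHS] at hjen
      refine hjen.trans_eq ?_
      rw [Finset.mul_sum]
      refine Finset.sum_congr rfl fun i _ => ?_
      rw [Real.div_rpow (hY0 i) hm_pos.le]
      congr 2
      rw [hY]
      simp only []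
      rw [← Real.rpow_mul (hω i)]
      congr 1
      field_simp
    -- from Jensen to the domination
    have hxa2 : ((T ω / m) ^ α) ^ 2 = (T ω / m) ^ (2/p) := by
      rw [sq, ← Real.rpow_add' hx0 (by positivity)]
      congr 1
      rw [hα]; ring
    have hsum_nonneg : 0 ≤ (1/(n:ℝ)) * ∑ i, Zi i ω ^ (2:ℝ) / m ^ (2/p) := by
      apply mul_nonneg (by positivity)
      exact Finset.sum_nonneg fun i _ =>
        div_nonneg (Real.rpow_nonneg (hω i) _) (Real.rpow_nonneg hm_nonneg _)
    rw [hg, hD]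
    simp only []
    rcases le_total ((T ω / m) ^ α) 1 with hc | hc
    · rw [max_eq_left hc]
      simp only [one_pow]
      linarith
    · rw [max_eq_right hc]
      rw [hxa2]
      linarith
  -- integrability of g^2 and its integral bound
  have hg0 : ∀ ω, 0 ≤ g ω := fun ω => le_trans zero_le_one (le_max_left _ _)
  have hg2m : Measurable (fun ω => g ω ^ 2) := hgm.pow_const 2
  have hg2_int : Integrable (fun ω => g ω ^ 2) μ := by
    refine Integrable.mono' hDint hg2m.aestronglyMeasurable ?_
    filter_upwards [hgD] with ω hω
    rw [Real.norm_of_nonneg (sq_nonneg _)]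
    exact hω
  have hg2_val : ∫ ω, g ω ^ 2 ∂μ ≤ 1 + E2 / m ^ (2/p) := by
    rw [← hD_val]
    exact integral_mono_ae hg2_int hDint hgD
  -- power mean
  have hpm : m ^ (2/p) ≤ E2 := aux_pm μ hp1 hp2 hZm hZ0 hZ2_int hZp_int
  have hm2p_pos : 0 < m ^ (2/p) := Real.rpow_pos_of_pos hm_pos _
  have hg2_val' : ∫ ω, g ω ^ 2 ∂μ ≤ 2 * E2 / m ^ (2/p) := by
    have h1 : (1:ℝ) ≤ E2 / m ^ (2/p) := (one_le_div hm2p_pos).2 hpm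
    calc ∫ ω, g ω ^ 2 ∂μ ≤ 1 + E2 / m ^ (2/p) := hg2_val
      _ ≤ E2 / m ^ (2/p) + E2 / m ^ (2/p) := by linarith
      _ = 2 * E2 / m ^ (2/p) := by ring
  -- Cauchy-Schwarz
  have hCS : ∫ ω, f ω * g ω ∂μ ≤
      Real.sqrt (VZ / (n * m^2)) * Real.sqrt (2 * E2 / m ^ (2/p)) := by
    have h := aux_cs μ hfm.aestronglyMeasurable hgm.aestronglyMeasurable
      (Filter.Eventually.of_forall fun ω => abs_nonneg _)
      (Filter.Eventually.of_forall hg0) hf2_int hg2_int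
    rw [hf2_val] at h
    refine h.trans ?_
    exact mul_le_mul_of_nonneg_left (Real.sqrt_le_sqrt hg2_val') (Real.sqrt_nonneg _)
  -- integrability of the product and of T^α
  have hf0 : ∀ ω, 0 ≤ f ω := by
    intro ω; simp only [hf]; exact abs_nonneg _
  have hfg_int : Integrable (fun ω => f ω * g ω) μ := by
    refine Integrable.mono' (((hf2_int.add hg2_int)).const_mul (1/2))
      (hfm.mul hgm).aestronglyMeasurable ?_
    refine Filter.Eventually.of_forall fun ω => ?_
    rw [Real.norm_of_nonneg (mul_nonneg (hf0 ω) (hg0 ω))]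
    have h2 := two_mul_le_add_sq (f ω) (g ω)
    simp only [Pi.add_apply]
    linarith
  have hTam : Measurable (fun ω => T ω ^ α) := (hrpm α hα0.le).comp hTm
  have hTa_int : Integrable (fun ω => T ω ^ α) μ := by
    refine Integrable.mono' ((integrable_const (1:ℝ)).add hTint)
      hTam.aestronglyMeasurable ?_
    filter_upwards [hZiae] with ω hω
    have hS0 : 0 ≤ S ω := Finset.sum_nonneg fun i _ => Real.rpow_nonneg (hω i) p
    have hT0 : 0 ≤ T ω := by rw [hT]; exact mul_nonneg (by positivity) hS0
    rw [Real.norm_of_nonneg (Real.rpow_nonneg hT0 _)]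
    simp only [Pi.add_apply]
    rcases le_total (T ω) 1 with h | h
    · have := Real.rpow_le_one hT0 h hα0.le
      linarith
    · have h2 : T ω ^ α ≤ T ω ^ (1:ℝ) := Real.rpow_le_rpow_of_exponent_le h hα1
      rw [Real.rpow_one] at h2
      linarith
  -- the pointwise lower bound function
  set L : Ω → ℝ := fun ω =>
    m ^ α + α * m ^ α * (T ω / m - 1) - (1-α) * m ^ α * (f ω * g ω) with hL
  have hI2' : Integrable (fun ω => T ω / m - 1) μ :=
    (hTint.div_const m).sub (integrable_const 1)
  have hI3 : Integrable (fun ω => α * m ^ α * (T ω / m - 1)) μ := hI2'.const_mul _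
  have hI1 : Integrable (fun ω => m ^ α + α * m ^ α * (T ω / m - 1)) μ :=
    (integrable_const _).add hI3
  have hIfg : Integrable (fun ω => (1-α) * m ^ α * (f ω * g ω)) μ := hfg_int.const_mul _
  have hLint : Integrable L μ := hI1.sub hIfg
  have hL_val : ∫ ω, L ω ∂μ = m ^ α - (1-α) * m ^ α * ∫ ω, f ω * g ω ∂μ := by
    rw [hL]
    simp only []
    rw [integral_sub hI1 hIfg, integral_add (integrable_const _) hI3,
      MeasureTheory.integral_const_mul, MeasureTheory.integral_const_mul,
      integral_sub (hTint.div_const m) (integrable_const 1), integral_div, hTmean]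
    simp [hm_pos.ne']
  have hmain : ∀ᵐ ω ∂μ, L ω ≤ T ω ^ α := by
    filter_upwards [hZiae] with ω hω
    have hS0 : 0 ≤ S ω := Finset.sum_nonneg fun i _ => Real.rpow_nonneg (hω i) p
    have hT0 : 0 ≤ T ω := by rw [hT]; exact mul_nonneg (by positivity) hS0
    have hx0 : 0 ≤ T ω / m := div_nonneg hT0 hm_pos.le
    have hkey := aux_ptwise hα0 hα1 hx0
    have hma : (0:ℝ) < m ^ α := Real.rpow_pos_of_pos hm_pos _
    have hmul := mul_le_mul_of_nonneg_left hkey hma.le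
    have hrw : m ^ α * (T ω / m) ^ α = T ω ^ α := by
      rw [← Real.mul_rpow hm_nonneg hx0]
      congr 1
      field_simp
    rw [hrw] at hmul
    refine le_trans (le_of_eq ?_) hmul
    rw [hL, hf, hg]
    ring
  have hInt_mono : ∫ ω, L ω ∂μ ≤ ∫ ω, T ω ^ α ∂μ :=
    integral_mono_ae hLint hTa_int hmain
  -- final assembly
  have hgoal_eq : ∫ ω, T ω ^ α ∂μ = ∫ ω, ((1/(n:ℝ)) * ∑ i, Zi i ω ^ p) ^ α ∂μ := by
    apply integral_congr_ae
    filter_upwards with ω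
    simp only [hT, hS, hY]
  have hcoef : (p-1)/p = 1-α := by
    rw [hα, sub_div, div_self hp0.ne']
  have hma_pos : (0:ℝ) < m ^ α := Real.rpow_pos_of_pos hm_pos _
  have hsqm : Real.sqrt (m ^ (2/p)) = m ^ α := by
    have h2 : m ^ (2/p) = (m ^ α) ^ 2 := by
      rw [sq, ← Real.rpow_add' hm_nonneg (by positivity)]
      congr 1
      rw [hα]; ring
    rw [h2, Real.sqrt_sq (Real.rpow_nonneg hm_nonneg α)]
  have h1 : m ^ α * (Real.sqrt (VZ / (n * m^2)) * Real.sqrt (2 * E2 / m ^ (2/p)))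
      = Real.sqrt (2/(n:ℝ)) * Real.sqrt (VZ / m^2) * Real.sqrt E2 := by
    rw [Real.sqrt_div hVZ_nonneg, Real.sqrt_div hVZ_nonneg,
      Real.sqrt_div (by positivity : (0:ℝ) ≤ 2 * E2), hsqm,
      Real.sqrt_div (by norm_num : (0:ℝ) ≤ 2),
      Real.sqrt_mul (by positivity : (0:ℝ) ≤ (n:ℝ)),
      Real.sqrt_mul (by norm_num : (0:ℝ) ≤ 2),
      Real.sqrt_sq hm_nonneg]
    have hsn : (0:ℝ) < Real.sqrt n := Real.sqrt_pos.2 hn0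
    field_simp
  calc m ^ α - (p-1)/p * Real.sqrt (2/(n:ℝ)) *
        Real.sqrt (∫ ω, (Z ω ^ p / m - 1) ^ 2 ∂μ) * E2 ^ (1/(2:ℝ))
      = m ^ α - (1-α) * (Real.sqrt (2/(n:ℝ)) * Real.sqrt (VZ / m^2) * Real.sqrt E2) := by
        rw [hQ_val, ← Real.sqrt_eq_rpow, hcoef]
        ring
    _ = m ^ α - (1-α) * (m ^ α * (Real.sqrt (VZ / (n * m^2)) *
          Real.sqrt (2 * E2 / m ^ (2/p)))) := by rw [h1]
    _ ≤ m ^ α - (1-α) * (m ^ α * ∫ ω, f ω * g ω ∂μ) := by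
        have h2 := mul_le_mul_of_nonneg_left hCS (Real.rpow_nonneg hm_nonneg α)
        have h3 := mul_le_mul_of_nonneg_left h2 (by linarith : (0:ℝ) ≤ 1-α)
        linarith
    _ = ∫ ω, L ω ∂μ := by rw [hL_val]; ring
    _ ≤ ∫ ω, T ω ^ α ∂μ := hInt_mono
    _ = _ := hgoal_eq
end

section
/- Let Z ≥ 0 be a nonzero random variable with ‖Z‖_∞ ≤ C (i.e., Z ≤ C almost surely), let 1 ≤ p ≤ 2, and let Z₁,…,Z_n be i.i.d. copies of Z. Then E[ ((1/n) ∑_{i=1}^n Z_i^p)^{1/p} ] ≥ ‖Z‖_p − C ((p−1)/p) √(2/n), where ‖Z‖_p = (E[Z^p])^{1/p}. -/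
open MeasureTheory ProbabilityTheory Finset

lemma bern6 {θ a : ℝ} (h0 : 0 ≤ θ) (h1 : θ ≤ 1) (ha : 0 ≤ a) :
    a ^ θ ≤ 1 - θ + θ * a := by
  have h := Real.geom_mean_le_arith_mean2_weighted (sub_nonneg.2 h1) h0
    zero_le_one ha (by ring)
  simpa using h

lemma tangent6 {θ t x : ℝ} (h0 : 0 < θ) (h1 : θ ≤ 1) (ht : 0 < t) (hx : 0 ≤ x) :
    x ^ θ ≤ t ^ θ + θ * t ^ (θ - 1) * (x - t) := by
  have hdiv : (0:ℝ) ≤ x / t := div_nonneg hx ht.le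
  have h := bern6 h0.le h1 hdiv
  have hxt : x = t * (x / t) := by field_simp
  have hTpos : 0 < t ^ θ := Real.rpow_pos_of_pos ht θ
  have e1 : x ^ θ = t ^ θ * (x / t) ^ θ := by
    rw [hxt, Real.mul_rpow ht.le hdiv]
    rw [← hxt]
  have e2 : t ^ (θ - 1) = t ^ θ / t := by
    rw [Real.rpow_sub ht, Real.rpow_one]
  rw [e1, e2]
  have h2 : t ^ θ * (x / t) ^ θ ≤ t ^ θ * (1 - θ + θ * (x / t)) :=
    mul_le_mul_of_nonneg_left h hTpos.le
  refine h2.trans (le_of_eq ?_)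
  field_simp
  ring

lemma N1 {γ : ℝ} (h0 : 0 ≤ γ) (h1 : γ ≤ 1) :
    1 + γ ≤ Real.sqrt 2 * 2 ^ γ := by
  have hs : (1.414:ℝ) ≤ Real.sqrt 2 := by
    nlinarith [Real.sq_sqrt (by norm_num : (0:ℝ) ≤ 2), Real.sqrt_nonneg 2]
  have hl2 : (0.6931:ℝ) ≤ Real.log 2 := by
    have := Real.log_two_gt_d9; linarith
  have h2g : 1 + γ * Real.log 2 ≤ (2:ℝ) ^ γ := by
    rw [Real.rpow_def_of_pos (by norm_num : (0:ℝ) < 2)]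
    have := Real.add_one_le_exp (Real.log 2 * γ)
    linarith
  have hs0 : 0 ≤ Real.sqrt 2 := Real.sqrt_nonneg 2
  have key : 1 + γ ≤ Real.sqrt 2 * (1 + γ * Real.log 2) := by
    nlinarith [mul_le_mul_of_nonneg_right (mul_le_mul hs hl2 (by norm_num) (by linarith)) h0]
  exact key.trans (mul_le_mul_of_nonneg_left h2g hs0)

lemma SC6 {α w : ℝ} (hα : 1/2 ≤ α) (hα1 : α ≤ 1) (hw : 0 ≤ w) :
    α * w ^ (2 - 2*α) ≤ Real.sqrt 2 * (1 + (1 - α) * w) := by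
  obtain ⟨γ, hγdef⟩ : ∃ γ : ℝ, γ = 2*α - 1 := ⟨_, rfl⟩
  have hγ0 : 0 ≤ γ := by rw [hγdef]; linarith
  have hγ1 : γ ≤ 1 := by rw [hγdef]; linarith
  have hc : (0:ℝ) < 2 ^ γ := Real.rpow_pos_of_pos (by norm_num) γ
  have hN := N1 hγ0 hγ1
  have am : (w/2) ^ (1-γ) * 1 ^ γ ≤ (1-γ)*(w/2) + γ*1 :=
    Real.geom_mean_le_arith_mean2_weighted (by linarith) hγ0 (by positivity) zero_le_one
      (by ring)
  have am' : (w/2) ^ (1-γ) ≤ (1-γ)*(w/2) + γ := by simpa using am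
  have hw2 : w ^ (1-γ) = 2 ^ (1-γ) * (w/2) ^ (1-γ) := by
    rw [← Real.mul_rpow (by norm_num) (by positivity)]
    congr 1
    ring
  have h2split : (2:ℝ) ^ (1-γ) * 2 ^ γ = 2 := by
    rw [← Real.rpow_add (by norm_num)]
    norm_num
  obtain ⟨A, hAdef⟩ : ∃ A : ℝ, A = (1-γ)*(w/2) + γ := ⟨_, rfl⟩
  have hA0 : 0 ≤ A := by
    have : 0 ≤ (1-γ)*(w/2) := mul_nonneg (by linarith) (by linarith)
    rw [hAdef]; linarith
  have h1 : 2 ^ γ * w ^ (1-γ) ≤ 2 * A := by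
    rw [hw2]
    calc 2 ^ γ * ((2:ℝ) ^ (1-γ) * (w/2) ^ (1-γ))
        = (2 ^ (1-γ) * 2 ^ γ) * (w/2) ^ (1-γ) := by ring
      _ ≤ 2 * A := by
          rw [h2split, hAdef]
          exact mul_le_mul_of_nonneg_left am' (by norm_num)
  -- (1+γ) * w^(1-γ) ≤ 2√2 A
  have h2 : (1+γ) * (2 ^ γ * w ^ (1-γ)) ≤ (Real.sqrt 2 * 2 ^ γ) * (2*A) := by
    have hwp : 0 ≤ 2 ^ γ * w ^ (1-γ) := by positivity
    exact mul_le_mul hN h1 hwp (by positivity)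
  have h3 : (1+γ) * w ^ (1-γ) ≤ 2 * (Real.sqrt 2 * A) := by
    have h2' : 2 ^ γ * ((1+γ) * w ^ (1-γ)) ≤ 2 ^ γ * (2 * (Real.sqrt 2 * A)) := by
      nlinarith [h2]
    exact le_of_mul_le_mul_left h2' hc
  have hαγ : α = (1+γ)/2 := by rw [hγdef]; ring
  have hexp : 2 - 2*α = 1 - γ := by rw [hγdef]; ring
  have hfin : Real.sqrt 2 * A ≤ Real.sqrt 2 * (1 + (1-α)*w) := by
    apply mul_le_mul_of_nonneg_left _ (Real.sqrt_nonneg 2)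
    have h : (1-α) * w = (1-γ)*(w/2) := by rw [hαγ]; ring
    rw [hAdef, h]
    linarith
  calc α * w ^ (2-2*α) = ((1+γ) * w ^ (1-γ))/2 := by rw [hexp, hαγ]; ring
    _ ≤ Real.sqrt 2 * A := by nlinarith [h3]
    _ ≤ _ := hfin

lemma PW1 {α u : ℝ} (hα : 1/2 ≤ α) (hα1 : α ≤ 1) (hu : 0 ≤ u) :
    1 - α + α*u - u^α ≤ Real.sqrt 2 * (1-α) * |u-1| ^ (2*α) := by
  have hs2 : (1:ℝ) ≤ Real.sqrt 2 := by
    nlinarith [Real.sq_sqrt (by norm_num : (0:ℝ) ≤ 2), Real.sqrt_nonneg 2]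
  have hα0 : 0 < α := by linarith
  rcases le_or_gt u 1 with h1 | h1
  · -- u ≤ 1
    have habs : |u-1| = 1-u := by rw [abs_of_nonpos (by linarith)]; ring
    rw [habs]
    rcases eq_or_lt_of_le hu with h0 | h0
    · -- u = 0
      rw [← h0]
      simp only [Real.zero_rpow hα0.ne', mul_zero, sub_zero, add_zero]
      rw [Real.one_rpow]
      nlinarith [mul_le_mul_of_nonneg_right hs2 (by linarith : (0:ℝ) ≤ 1-α)]
    · -- 0 < u ≤ 1
      have hb : u ^ (1-α) ≤ 1 - (1-α)*(1-u) := by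
        have := bern6 (by linarith : (0:ℝ) ≤ 1-α) (by linarith) hu
        calc u ^ (1-α) ≤ 1 - (1-α) + (1-α)*u := this
          _ = 1 - (1-α)*(1-u) := by ring
      have hmul : u ^ α * u ^ (1-α) = u := by
        rw [← Real.rpow_add h0]; norm_num
      have hua : 0 ≤ u ^ α := Real.rpow_nonneg hu α
      have h2 : u ≤ u ^ α * (1 - (1-α)*(1-u)) := by
        calc u = u ^ α * u ^ (1-α) := hmul.symm
          _ ≤ u ^ α * (1 - (1-α)*(1-u)) := mul_le_mul_of_nonneg_left hb hua
      have hc0 : 0 ≤ (1-α)*(1-u) := mul_nonneg (by linarith) (by linarith)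
      have h3 : u * (1 + (1-α)*(1-u)) ≤ u ^ α := by
        nlinarith [mul_le_mul_of_nonneg_right h2
          (by linarith : (0:ℝ) ≤ 1 + (1-α)*(1-u)),
          mul_nonneg hua (sq_nonneg ((1-α)*(1-u)))]
      have h4 : 1 - α + α*u - u^α ≤ (1-α)*(1-u)^2 := by nlinarith [h3]
      have h5 : ((1-u):ℝ)^(2:ℕ) ≤ (1-u) ^ (2*α) := by
        rcases eq_or_lt_of_le h1 with he | hlt
        · rw [he]
          simp only [sub_self]
          rw [Real.zero_rpow (by positivity : 2*α ≠ 0)]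
          norm_num
        · have hv0 : (0:ℝ) < 1 - u := by linarith
          have hv1 : (1:ℝ) - u ≤ 1 := by linarith
          have h := Real.rpow_le_rpow_of_exponent_ge hv0 hv1 (by linarith : 2*α ≤ (2:ℝ))
          calc ((1-u):ℝ)^(2:ℕ) = ((1-u):ℝ)^((2:ℕ):ℝ) := (Real.rpow_natCast _ 2).symm
            _ = ((1-u):ℝ)^(2:ℝ) := by norm_num
            _ ≤ (1-u) ^ (2*α) := h
      have hr : 0 ≤ (1-u)^(2*α) := Real.rpow_nonneg (by linarith) _
      calc 1 - α + α*u - u^α ≤ (1-α)*(1-u)^2 := h4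
        _ ≤ (1-α)*(1-u)^(2*α) := by
            have := mul_le_mul_of_nonneg_left h5 (by linarith : (0:ℝ) ≤ 1-α)
            calc (1-α)*(1-u)^2 = (1-α)*((1-u):ℝ)^(2:ℕ) := by norm_num
              _ ≤ (1-α)*(1-u)^(2*α) := this
        _ ≤ Real.sqrt 2 * (1-α) * (1-u)^(2*α) := by
            have h6 := mul_le_mul_of_nonneg_right hs2
              (mul_nonneg (by linarith : (0:ℝ) ≤ 1-α) hr)
            calc (1-α)*(1-u)^(2*α) = 1 * ((1-α)*(1-u)^(2*α)) := by ring
              _ ≤ Real.sqrt 2 * ((1-α)*(1-u)^(2*α)) := h6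
              _ = Real.sqrt 2 * (1-α) * (1-u)^(2*α) := by ring
  · -- u > 1
    have hw0 : (0:ℝ) < u - 1 := by linarith
    have habs : |u-1| = u-1 := abs_of_pos hw0
    rw [habs]
    have hu0 : (0:ℝ) < u := by linarith
    have hB : (0:ℝ) < 1 + (1-α)*(u-1) := by nlinarith
    have hbern : u ^ (1-α) ≤ 1 + (1-α)*(u-1) := by
      have := bern6 (by linarith : (0:ℝ) ≤ 1-α) (by linarith) hu
      calc u ^ (1-α) ≤ 1 - (1-α) + (1-α)*u := this
        _ = 1 + (1-α)*(u-1) := by ring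
    have hua : 0 ≤ u ^ α := Real.rpow_nonneg hu α
    have hmul : u ^ α * u ^ (1-α) = u := by
      rw [← Real.rpow_add hu0]; norm_num
    have h2 : u ≤ u ^ α * (1 + (1-α)*(u-1)) := by
      calc u = u ^ α * u ^ (1-α) := hmul.symm
        _ ≤ u ^ α * (1 + (1-α)*(u-1)) := mul_le_mul_of_nonneg_left hbern hua
    have hpow : (u-1)^(2*α) * (u-1)^(2-2*α) = (u-1)^2 := by
      rw [← Real.rpow_add hw0]
      have he : 2*α + (2-2*α) = (2:ℝ) := by ring
      rw [he, Real.rpow_two]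
    have hSC : α*(1-α)*(u-1)^2 ≤
        Real.sqrt 2 * (1-α) * (u-1)^(2*α) * (1 + (1-α)*(u-1)) := by
      have hsc := SC6 hα hα1 hw0.le
      have hr : 0 ≤ (1-α) * (u-1)^(2*α) :=
        mul_nonneg (by linarith) (Real.rpow_nonneg hw0.le _)
      have hmm := mul_le_mul_of_nonneg_left hsc hr
      calc α*(1-α)*(u-1)^2
          = (1-α)*(u-1)^(2*α) * (α*(u-1)^(2-2*α)) := by rw [← hpow]; ring
        _ ≤ (1-α)*(u-1)^(2*α) * (Real.sqrt 2 * (1 + (1-α)*(u-1))) := hmm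
        _ = Real.sqrt 2 * (1-α) * (u-1)^(2*α) * (1 + (1-α)*(u-1)) := by ring
    have h3 : 1 + α*(u-1) - Real.sqrt 2 * (1-α) * (u-1)^(2*α) ≤ u ^ α := by
      have hexp : (1 + α*(u-1) - Real.sqrt 2 * (1-α) * (u-1)^(2*α)) * (1 + (1-α)*(u-1))
          ≤ u ^ α * (1 + (1-α)*(u-1)) := by nlinarith [h2, hSC]
      exact le_of_mul_le_mul_right hexp hB
    linarith [h3]

lemma PW6 {α t x : ℝ} (hα : 1/2 ≤ α) (hα1 : α ≤ 1) (ht : 0 < t) (hx : 0 ≤ x) :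
    (1-α)*t^α + α*t^(α-1)*x - Real.sqrt 2 * (1-α) * (t^α)⁻¹ * |x-t|^(2*α)
      ≤ x^α := by
  obtain ⟨u, hudef⟩ : ∃ u : ℝ, u = x / t := ⟨_, rfl⟩
  have hu : 0 ≤ u := hudef ▸ div_nonneg hx ht.le
  have h := PW1 hα hα1 hu
  have hT : 0 < t ^ α := Real.rpow_pos_of_pos ht α
  have e1 : x ^ α = t ^ α * u ^ α := by
    rw [← Real.mul_rpow ht.le hu]
    congr 1
    rw [hudef]
    field_simp
  have e3 : t ^ (α-1) * x = t ^ α * u := by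
    rw [Real.rpow_sub ht, Real.rpow_one, hudef]
    field_simp
  have e2 : |u - 1| ^ (2*α) = |x - t| ^ (2*α) / (t^α * t^α) := by
    have habs : |u - 1| = |x - t| / t := by
      rw [show u - 1 = (x-t)/t by rw [hudef]; field_simp, abs_div, abs_of_pos ht]
    rw [habs, Real.div_rpow (abs_nonneg _) ht.le]
    congr 1
    rw [← Real.rpow_add ht]
    congr 1
    ring
  have h' := mul_le_mul_of_nonneg_left h hT.le
  have key : (1-α)*t^α + α*(t^α*u) - t^α*(u^α)
      ≤ Real.sqrt 2*(1-α)*(t^α)⁻¹*|x-t|^(2*α) := by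
    calc (1-α)*t^α + α*(t^α*u) - t^α*(u^α)
        = t^α * (1 - α + α*u - u^α) := by ring
      _ ≤ t^α * (Real.sqrt 2 * (1-α) * |u-1|^(2*α)) := h'
      _ = Real.sqrt 2*(1-α)*(t^α)⁻¹*|x-t|^(2*α) := by
          rw [e2]
          field_simp
  rw [e1, mul_assoc, e3]
  linarith [key]

/-- Lower bound on the expected empirical `L^p` moment for a bounded variable:
`E[((1/n) ∑ᵢ Zᵢᵖ)^{1/p}] ≥ ‖Z‖_p - C ((p-1)/p) √(2/n)` for i.i.d. copies
`Z₁, …, Z_n` of a nonzero random variable `0 ≤ Z ≤ C`, with `1 ≤ p ≤ 2`. -/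
theorem stmt6 {Ω : Type*} [MeasurableSpace Ω] (μ : Measure Ω) [IsProbabilityMeasure μ]
    (n : ℕ) (hn : 1 ≤ n) (p : ℝ) (hp1 : 1 ≤ p) (hp2 : p ≤ 2)
    (Z : Ω → ℝ) (hZm : Measurable Z) (hZ0 : ∀ ω, 0 ≤ Z ω)
    (C : ℝ) (hZC : ∀ ω, Z ω ≤ C)
    (hZne : ¬ Z =ᵐ[μ] (fun _ => (0 : ℝ)))
    (Zi : Fin n → Ω → ℝ) (hZim : ∀ i, Measurable (Zi i))
    (hid : ∀ i, IdentDistrib (Zi i) Z μ μ)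
    (hindep : iIndepFun Zi μ) :
    (∫ ω, Z ω ^ p ∂μ) ^ (1 / p) - C * ((p - 1) / p) * Real.sqrt (2 / n) ≤
      ∫ ω, ((1 / (n : ℝ)) * ∑ i, Zi i ω ^ p) ^ (1 / p) ∂μ := by
  classical
  have hp0 : (0:ℝ) < p := by linarith
  have hn0 : (0:ℝ) < (n:ℝ) := by exact_mod_cast Nat.pos_of_ne_zero (by omega)
  have hn1 : (1:ℝ) ≤ (n:ℝ) := by exact_mod_cast hn
  obtain ⟨α, hαdef⟩ : ∃ a : ℝ, a = 1/p := ⟨_, rfl⟩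
  have hα : 1/2 ≤ α := by
    rw [hαdef, div_le_div_iff₀ (by norm_num) hp0]; linarith
  have hα1 : α ≤ 1 := by rw [hαdef, div_le_one hp0]; exact hp1
  have hα0 : 0 < α := by linarith
  have hpα : p * α = 1 := by rw [hαdef]; field_simp
  have hC0 : 0 < C := by
    by_contra hc
    push_neg at hc
    exact hZne (Filter.Eventually.of_forall fun ω =>
      le_antisymm ((hZC ω).trans hc) (hZ0 ω))
  have hCp0 : 0 < C ^ p := Real.rpow_pos_of_pos hC0 p
  have hmonoq : ∀ q : ℝ, Measurable fun x : ℝ => x ^ q := by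
    intro q; measurability
  have hmono : Measurable fun x : ℝ => x ^ p := hmonoq p
  have hZp_meas : Measurable fun ω => Z ω ^ p := hmono.comp hZm
  have hZp_Icc : ∀ᵐ ω ∂μ, (fun ω => Z ω ^ p) ω ∈ Set.Icc 0 (C ^ p) :=
    Filter.Eventually.of_forall fun ω =>
      ⟨Real.rpow_nonneg (hZ0 ω) p, Real.rpow_le_rpow (hZ0 ω) (hZC ω) hp0.le⟩
  have hZp_int : Integrable (fun ω => Z ω ^ p) μ :=
    memLp_one_iff_integrable.mp
      (memLp_of_bounded hZp_Icc hZp_meas.aestronglyMeasurable 1)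
  obtain ⟨m, hmdef⟩ : ∃ mm : ℝ, mm = ∫ ω, Z ω ^ p ∂μ := ⟨_, rfl⟩
  rw [← hmdef, ← hαdef]
  have hm_nonneg : 0 ≤ m := hmdef ▸ integral_nonneg fun ω => Real.rpow_nonneg (hZ0 ω) p
  have hm0 : 0 < m := by
    rcases hm_nonneg.lt_or_eq with h | h
    · exact h
    · exfalso
      have h0 := (integral_eq_zero_iff_of_nonneg
        (fun ω => Real.rpow_nonneg (hZ0 ω) p) hZp_int).mp (hmdef ▸ h.symm)
      apply hZne
      filter_upwards [h0] with ω hω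
      have : Z ω ^ p = 0 := hω
      have h00 : Z ω = 0 := by
        by_contra hz
        have : (0:ℝ) < Z ω := lt_of_le_of_ne (hZ0 ω) (Ne.symm hz)
        exact absurd ‹Z ω ^ p = 0› (Real.rpow_pos_of_pos this p).ne'
      exact h00
  -- empirical variables
  obtain ⟨f, hfdef⟩ : ∃ f : Fin n → Ω → ℝ, f = fun i ω => Zi i ω ^ p := ⟨_, rfl⟩
  have hf_meas : ∀ i, Measurable (f i) := fun i => hfdef ▸ hmono.comp (hZim i)
  have hf_id : ∀ i, IdentDistrib (f i) (fun ω => Z ω ^ p) μ μ := fun i => by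
    rw [hfdef]; exact (hid i).comp hmono
  have hZIcc : ∀ i, ∀ᵐ ω ∂μ, Zi i ω ∈ Set.Icc 0 C := by
    intro i
    have hms : MeasurableSet (Set.Icc (0:ℝ) C) := measurableSet_Icc
    have hmm := (hid i).measure_mem_eq hms.compl
    have hz : Z ⁻¹' (Set.Icc (0:ℝ) C)ᶜ = ∅ := by
      ext ω; simp [Set.mem_Icc, hZ0 ω, hZC ω]
    rw [ae_iff]
    have heq : {a | ¬ Zi i a ∈ Set.Icc (0:ℝ) C} = Zi i ⁻¹' (Set.Icc (0:ℝ) C)ᶜ := rfl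
    rw [heq, hmm, hz]
    simp
  have hf_Icc : ∀ i, ∀ᵐ ω ∂μ, f i ω ∈ Set.Icc 0 (C ^ p) := by
    intro i
    filter_upwards [hZIcc i] with ω hω
    rw [hfdef]
    exact ⟨Real.rpow_nonneg hω.1 p, Real.rpow_le_rpow hω.1 hω.2 hp0.le⟩
  have hf_mem : ∀ i, ∀ q : ENNReal, MemLp (f i) q μ := fun i q =>
    memLp_of_bounded (hf_Icc i) (hf_meas i).aestronglyMeasurable q
  have hf_int : ∀ i, Integrable (f i) μ := fun i =>
    memLp_one_iff_integrable.mp (hf_mem i 1)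
  have hf_integral : ∀ i, ∫ ω, f i ω ∂μ = m := fun i => by
    rw [hmdef]; exact (hf_id i).integral_eq
  obtain ⟨S, hSdef⟩ : ∃ S : Ω → ℝ, S = fun ω => (1/(n:ℝ)) * ∑ i, f i ω := ⟨_, rfl⟩
  have hS_meas : Measurable S := by
    rw [hSdef]
    exact (Finset.measurable_sum _ (fun i _ => hf_meas i)).const_mul _
  have hsum_int : Integrable (fun ω => ∑ i, f i ω) μ :=
    integrable_finset_sum _ (fun i _ => hf_int i)
  have hS_int : Integrable S μ := by
    rw [hSdef]; exact hsum_int.const_mul _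
  have hES : ∫ ω, S ω ∂μ = m := by
    rw [hSdef]
    simp only []
    rw [integral_const_mul, integral_finset_sum _ (fun i _ => hf_int i)]
    simp only [hf_integral, Finset.sum_const, card_univ, Fintype.card_fin, nsmul_eq_mul]
    field_simp
  have hS_Icc : ∀ᵐ ω ∂μ, S ω ∈ Set.Icc 0 (C ^ p) := by
    have hall := (ae_all_iff).mpr hf_Icc
    filter_upwards [hall] with ω hω
    rw [hSdef]
    constructor
    · exact mul_nonneg (by positivity) (Finset.sum_nonneg fun i _ => (hω i).1)
    · have hsum : ∑ i, f i ω ≤ ∑ _i : Fin n, C ^ p :=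
        Finset.sum_le_sum fun i _ => (hω i).2
      rw [Finset.sum_const, card_univ, Fintype.card_fin, nsmul_eq_mul] at hsum
      calc (1/(n:ℝ)) * ∑ i, f i ω ≤ (1/(n:ℝ)) * ((n:ℝ) * C ^ p) :=
            mul_le_mul_of_nonneg_left hsum (by positivity)
        _ = C ^ p := by field_simp
  have hS_mem2 : MemLp S 2 μ := memLp_of_bounded hS_Icc hS_meas.aestronglyMeasurable 2
  -- variance
  obtain ⟨V, hVdef⟩ : ∃ v : ℝ, v = ∫ ω, (S ω - m)^2 ∂μ := ⟨_, rfl⟩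
  have hV_var : variance S μ = V := by
    rw [variance_eq_integral hS_meas.aemeasurable, hVdef]
    simp only [Pi.pow_apply, Pi.sub_apply, hES]
  have hf_indep : iIndepFun f μ := by
    rw [hfdef]
    exact hindep.comp (fun _ => fun x : ℝ => x ^ p) (fun _ => hmono)
  have hvar_f : ∀ i, variance (f i) μ = variance (fun ω => Z ω ^ p) μ := fun i =>
    (hf_id i).variance_eq
  have hvar_Zp : variance (fun ω => Z ω ^ p) μ ≤ C^p * m := by
    have h1 := variance_le_expectation_sq (μ := μ) hZp_meas.aestronglyMeasurable
    have h2 : ∫ ω, ((fun ω => Z ω ^ p)^2) ω ∂μ ≤ C^p * m := by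
      have hle : ∀ ω, ((fun ω => Z ω ^ p)^2) ω ≤ C^p * (Z ω ^ p) := by
        intro ω
        simp only [Pi.pow_apply]
        have h0 : 0 ≤ Z ω ^ p := Real.rpow_nonneg (hZ0 ω) p
        have hle' : Z ω ^ p ≤ C ^ p := Real.rpow_le_rpow (hZ0 ω) (hZC ω) hp0.le
        rw [pow_two]
        exact mul_le_mul_of_nonneg_right hle' h0
      have hint2 : Integrable (fun ω => ((fun ω => Z ω ^ p)^2) ω) μ := by
        simp only [Pi.pow_apply]
        refine memLp_one_iff_integrable.mp
          (memLp_of_bounded (a := 0) (b := (C^p)^2)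
            (Filter.Eventually.of_forall fun ω => ⟨sq_nonneg _, ?_⟩)
            ((hZp_meas.pow_const 2).aestronglyMeasurable) 1)
        exact pow_le_pow_left₀ (Real.rpow_nonneg (hZ0 ω) p)
          (Real.rpow_le_rpow (hZ0 ω) (hZC ω) hp0.le) 2
      calc ∫ ω, ((fun ω => Z ω ^ p)^2) ω ∂μ
          ≤ ∫ ω, C^p * (Z ω ^ p) ∂μ :=
            integral_mono hint2 (hZp_int.const_mul _) hle
        _ = C^p * m := by rw [integral_const_mul, hmdef]
    exact h1.trans h2
  have hvar_S : variance S μ ≤ C^p * m / n := by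
    have hSeq : S = ((1:ℝ)/(n:ℝ)) • (∑ i, f i) := by
      funext ω
      rw [hSdef]
      simp [Finset.sum_apply]
    rw [hSeq, variance_smul]
    have hsum : variance (∑ i, f i) μ = ∑ i, variance (f i) μ :=
      IndepFun.variance_sum (fun i _ => hf_mem i 2)
        (fun i _ j _ hij => hf_indep.indepFun hij)
    rw [hsum]
    calc ((1:ℝ)/(n:ℝ))^2 * ∑ i, variance (f i) μ
        ≤ ((1:ℝ)/(n:ℝ))^2 * ∑ _i : Fin n, C^p * m := by
          apply mul_le_mul_of_nonneg_left _ (by positivity)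
          exact Finset.sum_le_sum fun i _ => (hvar_f i).le.trans hvar_Zp
      _ = C^p * m / n := by
          rw [Finset.sum_const, card_univ, Fintype.card_fin, nsmul_eq_mul]
          field_simp
  have hV_le : V ≤ C^p * m / n := hV_var ▸ hvar_S
  obtain ⟨t0, ht0def⟩ : ∃ t : ℝ, t = C^p * m / n := ⟨_, rfl⟩
  have ht0 : 0 < t0 := ht0def ▸ div_pos (mul_pos hCp0 hm0) hn0
  -- Step A : ∫ |S - m|^(2α) ≤ t0^α
  have habs_meas : Measurable fun ω => |S ω - m| ^ (2*α) :=
    (hmonoq (2*α)).comp ((hS_meas.sub measurable_const).abs)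
  have habs_bd : ∀ᵐ ω ∂μ, |S ω - m| ≤ C^p + m := by
    filter_upwards [hS_Icc] with ω hω
    rw [abs_le]
    constructor <;> [linarith [hω.1]; linarith [hω.2]]
  have habs_Icc : ∀ᵐ ω ∂μ, |S ω - m| ^ (2*α) ∈ Set.Icc 0 ((C^p + m)^(2*α)) := by
    filter_upwards [habs_bd] with ω hω
    exact ⟨Real.rpow_nonneg (abs_nonneg _) _,
      Real.rpow_le_rpow (abs_nonneg _) hω (by positivity)⟩
  have habs_int : Integrable (fun ω => |S ω - m| ^ (2*α)) μ :=
    memLp_one_iff_integrable.mp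
      (memLp_of_bounded habs_Icc habs_meas.aestronglyMeasurable 1)
  have hsq_int : Integrable (fun ω => (S ω - m)^2) μ := by
    have h2 : ∀ᵐ ω ∂μ, (S ω - m)^2 ∈ Set.Icc 0 ((C^p + m)^2) := by
      filter_upwards [habs_bd] with ω hω
      refine ⟨sq_nonneg _, ?_⟩
      calc (S ω - m)^2 = |S ω - m|^2 := (sq_abs _).symm
        _ ≤ (C^p + m)^2 := by nlinarith [abs_nonneg (S ω - m)]
    exact memLp_one_iff_integrable.mp
      (memLp_of_bounded h2
        (((hS_meas.sub measurable_const).pow_const 2).aestronglyMeasurable) 1)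
  have hA : ∫ ω, |S ω - m| ^ (2*α) ∂μ ≤ t0 ^ α := by
    have hpt : ∀ ω, |S ω - m| ^ (2*α) ≤ t0^α + α * t0^(α-1) * ((S ω - m)^2 - t0) := by
      intro ω
      have h1 : |S ω - m| ^ (2*α) = ((S ω - m)^2) ^ α := by
        rw [← sq_abs (S ω - m), ← Real.rpow_two |S ω - m|,
          ← Real.rpow_mul (abs_nonneg _)]
      rw [h1]
      exact tangent6 hα0 hα1 ht0 (sq_nonneg _)
    have i1 : Integrable (fun ω => (S ω - m)^2 - t0) μ :=
      hsq_int.sub (integrable_const _)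
    have i2 : Integrable (fun ω => α * t0^(α-1) * ((S ω - m)^2 - t0)) μ :=
      i1.const_mul _
    have hint_rhs : Integrable
        (fun ω => t0^α + α * t0^(α-1) * ((S ω - m)^2 - t0)) μ :=
      (integrable_const _).add i2
    have hint : ∫ ω, (t0^α + α * t0^(α-1) * ((S ω - m)^2 - t0)) ∂μ
        = t0^α + α * t0^(α-1) * (V - t0) := by
      rw [integral_add (integrable_const _) i2,
        integral_const_mul, integral_sub hsq_int (integrable_const _),
        integral_const]
      simp only [measure_univ, ENNReal.toReal_one, smul_eq_mul, one_mul]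
      rw [← hVdef]
      simp
    calc ∫ ω, |S ω - m| ^ (2*α) ∂μ
        ≤ ∫ ω, (t0^α + α * t0^(α-1) * ((S ω - m)^2 - t0)) ∂μ :=
          integral_mono habs_int hint_rhs hpt
      _ = t0^α + α * t0^(α-1) * (V - t0) := hint
      _ ≤ t0^α := by
          have hc : 0 ≤ α * t0^(α-1) := by positivity
          have hv : V - t0 ≤ 0 := by rw [ht0def]; linarith [hV_le]
          nlinarith [mul_nonpos_of_nonneg_of_nonpos hc hv]
  -- Step B : main bound
  have hmα : 0 < m ^ α := Real.rpow_pos_of_pos hm0 α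
  have hSα_meas : Measurable fun ω => (S ω) ^ α := (hmonoq α).comp hS_meas
  have hSα_Icc : ∀ᵐ ω ∂μ, (S ω)^α ∈ Set.Icc 0 C := by
    filter_upwards [hS_Icc] with ω hω
    refine ⟨Real.rpow_nonneg hω.1 _, ?_⟩
    calc (S ω)^α ≤ (C^p)^α := Real.rpow_le_rpow hω.1 hω.2 hα0.le
      _ = C := by rw [← Real.rpow_mul hC0.le, hpα, Real.rpow_one]
  have hSα_int : Integrable (fun ω => (S ω)^α) μ :=
    memLp_one_iff_integrable.mp
      (memLp_of_bounded hSα_Icc hSα_meas.aestronglyMeasurable 1)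
  have hmain_pt : ∀ᵐ ω ∂μ,
      (1-α)*m^α + α*m^(α-1)*(S ω) - Real.sqrt 2*(1-α)*(m^α)⁻¹*|S ω - m|^(2*α)
        ≤ (S ω)^α := by
    filter_upwards [hS_Icc] with ω hω
    exact PW6 hα hα1 hm0 hω.1
  have j1 : Integrable (fun ω => α*m^(α-1)*(S ω)) μ := hS_int.const_mul _
  have j2 : Integrable (fun ω => (1-α)*m^α + α*m^(α-1)*(S ω)) μ :=
    (integrable_const _).add j1
  have j3 : Integrable
      (fun ω => Real.sqrt 2*(1-α)*(m^α)⁻¹*|S ω - m|^(2*α)) μ :=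
    habs_int.const_mul _
  have hlhs_int : Integrable (fun ω =>
      (1-α)*m^α + α*m^(α-1)*(S ω) - Real.sqrt 2*(1-α)*(m^α)⁻¹*|S ω - m|^(2*α)) μ :=
    j2.sub j3
  have hmain : (1-α)*m^α + α*m^(α-1)*m
        - Real.sqrt 2*(1-α)*(m^α)⁻¹*(∫ ω, |S ω - m|^(2*α) ∂μ)
      ≤ ∫ ω, (S ω)^α ∂μ := by
    have h := integral_mono_ae hlhs_int hSα_int hmain_pt
    rw [integral_sub j2 j3,
      integral_add (integrable_const _) j1,
      integral_const, integral_const_mul, integral_const_mul, hES] at h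
    simpa only [probReal_univ, measure_univ, ENNReal.toReal_one, smul_eq_mul, one_mul] using h
  -- assemble
  have hm_pow : α*m^(α-1)*m = α*m^α := by
    rw [Real.rpow_sub hm0, Real.rpow_one]
    field_simp
  have hcoef : 0 ≤ Real.sqrt 2*(1-α)*(m^α)⁻¹ :=
    mul_nonneg (mul_nonneg (Real.sqrt_nonneg 2) (by linarith)) (inv_nonneg.2 hmα.le)
  have hstep : m^α - Real.sqrt 2*(1-α)*(m^α)⁻¹*t0^α ≤ ∫ ω, (S ω)^α ∂μ := by
    have h2 := mul_le_mul_of_nonneg_left hA hcoef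
    linarith [hmain, hm_pow, h2]
  have hid1 : (m^α)⁻¹*t0^α = C * ((n:ℝ)^α)⁻¹ := by
    rw [ht0def]
    rw [div_eq_mul_inv (C^p*m) (n:ℝ)]
    rw [Real.mul_rpow (by positivity) (by positivity),
      Real.mul_rpow (by positivity) hm_nonneg,
      ← Real.rpow_mul hC0.le, hpα, Real.rpow_one,
      Real.inv_rpow hn0.le]
    field_simp
  have hnα : Real.sqrt 2 * ((n:ℝ)^α)⁻¹ ≤ Real.sqrt (2/(n:ℝ)) := by
    have h1 : (n:ℝ)^((1:ℝ)/2) ≤ (n:ℝ)^α :=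
      Real.rpow_le_rpow_of_exponent_le hn1 (by linarith)
    have h2 : Real.sqrt (n:ℝ) = (n:ℝ)^((1:ℝ)/2) := Real.sqrt_eq_rpow _
    have hsn : 0 < Real.sqrt (n:ℝ) := Real.sqrt_pos.mpr hn0
    have h3 : ((n:ℝ)^α)⁻¹ ≤ (Real.sqrt (n:ℝ))⁻¹ := by
      apply inv_anti₀ hsn
      rw [h2]; exact h1
    have h4 : Real.sqrt (2/(n:ℝ)) = Real.sqrt 2 / Real.sqrt (n:ℝ) :=
      Real.sqrt_div (by norm_num : (0:ℝ) ≤ 2) _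
    calc Real.sqrt 2 * ((n:ℝ)^α)⁻¹ ≤ Real.sqrt 2 * (Real.sqrt (n:ℝ))⁻¹ :=
          mul_le_mul_of_nonneg_left h3 (Real.sqrt_nonneg 2)
      _ = Real.sqrt 2 / Real.sqrt (n:ℝ) := by rw [div_eq_mul_inv]
      _ = Real.sqrt (2/(n:ℝ)) := h4.symm
  have hαp : (p-1)/p = 1 - α := by rw [hαdef]; field_simp
  have hfinal : m^α - C * ((p-1)/p) * Real.sqrt (2/(n:ℝ))
      ≤ m^α - Real.sqrt 2*(1-α)*(m^α)⁻¹*t0^α := by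
    rw [hαp]
    have e1 : Real.sqrt 2*(1-α)*(m^α)⁻¹*t0^α
        = (1-α)*(Real.sqrt 2 * ((m^α)⁻¹*t0^α)) := by ring
    rw [e1, hid1]
    have e2 : Real.sqrt 2 * (C * ((n:ℝ)^α)⁻¹) = C * (Real.sqrt 2 * ((n:ℝ)^α)⁻¹) := by ring
    rw [e2]
    have h5 : C * (Real.sqrt 2 * ((n:ℝ)^α)⁻¹) ≤ C * Real.sqrt (2/(n:ℝ)) :=
      mul_le_mul_of_nonneg_left hnα hC0.le
    have h6 : (1-α) * (C * (Real.sqrt 2 * ((n:ℝ)^α)⁻¹)) ≤ (1-α) * (C * Real.sqrt (2/(n:ℝ))) :=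
      mul_le_mul_of_nonneg_left h5 (by linarith)
    linarith [h6]
  have hgoal : m^α - C * ((p-1)/p) * Real.sqrt (2/(n:ℝ)) ≤ ∫ ω, (S ω)^α ∂μ :=
    hfinal.trans hstep
  have heq : ∫ ω, (S ω)^α ∂μ = ∫ ω, ((1/(n:ℝ)) * ∑ i, Zi i ω ^ p)^α ∂μ := by
    apply integral_congr_ae
    apply Filter.Eventually.of_forall
    intro ω
    simp only [hSdef, hfdef]
  rw [heq] at hgoal
  exact hgoal
end

section
/- Let ψ(x) = ∑_{j=1}^d x_j log x_j and let B_ψ(y, x) = ∑_{i=1}^d y_i log(y_i/x_i) denote the associated Bregman divergence (KL divergence) on the simplex. Let x ∈ Δ_d have strictly positive entries, let g ∈ ℝ_{≥0}^d be a nonnegative vector, let η > 0, and define y ∈ Δ_d by y_i = x_i exp(−η g_i) / ∑_{j=1}^d x_j exp(−η g_j). Then −(1/η) B_ψ(y, x) + gᵀ(x − y) ≤ (η/2) ∑_{i=1}^d g_i² x_i. -/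
open Finset

lemma exp_neg_le_quadratic {t : ℝ} (ht : 0 ≤ t) :
    Real.exp (-t) ≤ 1 - t + t ^ 2 / 2 := by
  set f : ℝ → ℝ := fun u => 1 - u + u ^ 2 / 2 - Real.exp (-u) with hf
  have hderiv : ∀ u : ℝ, HasDerivAt f (-1 + u + Real.exp (-u)) u := by
    intro u
    have h1 : HasDerivAt (fun u : ℝ => Real.exp (-u)) (-Real.exp (-u)) u := by
      simpa [Function.comp_def] using (Real.hasDerivAt_exp (-u)).comp u (hasDerivAt_neg u)
    have h2 : HasDerivAt (fun u : ℝ => 1 - u + u ^ 2 / 2) (-1 + u) u := by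
      have : HasDerivAt (fun u : ℝ => u ^ 2 / 2) u u := by
        simpa using (hasDerivAt_pow 2 u).div_const 2
      simpa [Pi.add_def, Pi.sub_def] using ((hasDerivAt_const u (1:ℝ)).sub (hasDerivAt_id u)).add this
    simpa [sub_neg_eq_add, Pi.sub_def] using h2.sub h1
  have hmono : MonotoneOn f (Set.Ici (0:ℝ)) := by
    apply monotoneOn_of_deriv_nonneg (convex_Ici 0)
    · exact (Continuous.continuousOn (by continuity))
    · intro u hu
      exact (hderiv u).differentiableAt.differentiableWithinAt
    · intro u hu
      rw [(hderiv u).deriv]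
      have := Real.add_one_le_exp (-u)
      linarith
  have h0 : f 0 ≤ f t := hmono (by simp) (by exact ht) ht
  simp [hf] at h0
  linarith
/-- Bound on the Bregman (KL) divergence term for the exponential-weights update. -/
theorem stmt9 (d : ℕ) (x : Fin d → ℝ) (hx0 : ∀ i, 0 < x i) (hx1 : ∑ i, x i = 1)
    (g : Fin d → ℝ) (hg : ∀ i, 0 ≤ g i) (η : ℝ) (hη : 0 < η)
    (y : Fin d → ℝ)
    (hy : ∀ i, y i = x i * Real.exp (-η * g i) / ∑ j, x j * Real.exp (-η * g j)) :
    -(1 / η) * (∑ i, y i * Real.log (y i / x i)) + ∑ i, g i * (x i - y i) ≤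
      (η / 2) * ∑ i, g i ^ 2 * x i := by
  set Z : ℝ := ∑ j, x j * Real.exp (-η * g j) with hZ
  have hZpos : 0 < Z := by
    rcases Nat.eq_zero_or_pos d with hd | hd
    · exfalso; subst hd; simp at hx1
    · apply Finset.sum_pos
      · intro i _; exact mul_pos (hx0 i) (Real.exp_pos _)
      · simpa [Finset.univ_nonempty_iff] using Fin.pos_iff_nonempty.mp hd
  -- y sums to 1
  have hysum : ∑ i, y i = 1 := by
    simp only [hy]
    rw [← Finset.sum_div, ← hZ, div_self hZpos.ne']
  -- log (y i / x i) = -η * g i - log Z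
  have hlog : ∀ i, Real.log (y i / x i) = -η * g i - Real.log Z := by
    intro i
    have hxne := (hx0 i).ne'
    have h : y i / x i = Real.exp (-η * g i) / Z := by
      rw [hy i]; field_simp
    rw [h, Real.log_div (Real.exp_ne_zero _) hZpos.ne', Real.log_exp]
  have hKL : ∑ i, y i * Real.log (y i / x i)
      = -η * (∑ i, y i * g i) - Real.log Z := by
    calc ∑ i, y i * Real.log (y i / x i)
        = ∑ i, (-η * (y i * g i) - y i * Real.log Z) := by
          apply Finset.sum_congr rfl; intro i _; rw [hlog i]; ring
      _ = -η * (∑ i, y i * g i) - (∑ i, y i) * Real.log Z := by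
          rw [Finset.sum_sub_distrib, Finset.mul_sum, Finset.sum_mul]
      _ = -η * (∑ i, y i * g i) - Real.log Z := by rw [hysum]; ring
  -- Z bound
  have hZle : Z ≤ 1 - η * (∑ i, g i * x i) + η ^ 2 / 2 * ∑ i, g i ^ 2 * x i := by
    have : Z ≤ ∑ i, x i * (1 - η * g i + (η * g i) ^ 2 / 2) := by
      apply Finset.sum_le_sum
      intro i _
      have h := exp_neg_le_quadratic (t := η * g i) (mul_nonneg hη.le (hg i))
      rw [neg_mul]
      exact mul_le_mul_of_nonneg_left h (hx0 i).le
    calc Z ≤ ∑ i, x i * (1 - η * g i + (η * g i) ^ 2 / 2) := this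
      _ = (∑ i, x i) - η * (∑ i, g i * x i) + η ^ 2 / 2 * ∑ i, g i ^ 2 * x i := by
          rw [Finset.mul_sum, Finset.mul_sum, ← Finset.sum_sub_distrib,
            ← Finset.sum_add_distrib]
          apply Finset.sum_congr rfl; intro i _; ring
      _ = 1 - η * (∑ i, g i * x i) + η ^ 2 / 2 * ∑ i, g i ^ 2 * x i := by rw [hx1]
  have hlogZ : Real.log Z ≤ -η * (∑ i, g i * x i) + η ^ 2 / 2 * ∑ i, g i ^ 2 * x i := by
    have h1 : Real.log Z ≤ Z - 1 := Real.log_le_sub_one_of_pos hZpos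
    linarith
  -- put together
  have hexp : ∑ i, g i * (x i - y i) = (∑ i, g i * x i) - (∑ i, y i * g i) := by
    rw [← Finset.sum_sub_distrib]
    apply Finset.sum_congr rfl; intro i _; ring
  rw [hKL, hexp]
  have hη' : (0:ℝ) < 1 / η := by positivity
  have : -(1 / η) * (-η * (∑ i, y i * g i) - Real.log Z)
      = (∑ i, y i * g i) + (1 / η) * Real.log Z := by
    field_simp; ring
  rw [this]
  have h2 : (1 / η) * Real.log Z ≤ -(∑ i, g i * x i) + η / 2 * ∑ i, g i ^ 2 * x i := by
    have := mul_le_mul_of_nonneg_left hlogZ hη'.le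
    calc (1/η) * Real.log Z ≤ (1/η) * (-η * (∑ i, g i * x i) + η ^ 2 / 2 * ∑ i, g i ^ 2 * x i) := this
      _ = -(∑ i, g i * x i) + η / 2 * ∑ i, g i ^ 2 * x i := by field_simp
  linarith
end
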